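/- arXiv:2110.10143 — 6 statements merged into one kernel-verified Lean document; each statement's English description precedes it below -/
import Mathlib

section
/- Let G be a connected threshold graph on n vertices with creation sequence (b_1,...,b_n). Then q(G) = 2 if and only if there exists a matrix A ∈ S(G) such that the submatrix of A whose rows are indexed by the dominating vertices of G (those indices j with b_j = 1) and whose columns are indexed by the isolated vertices of G (those indices j with b_j = 0) has pairwise orthogonal columns. -/
open Matrix BigOperators

/-- The threshold graph on `Fin n` given by a creation sequence `b`:
for `i < j`, vertices `i` and `j` are adjacent iff `b j = true`. -/
def ThresholdGraph {n : ℕ} (b : Fin n → Bool) : SimpleGraph (Fin n) where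
  Adj i j := i ≠ j ∧ ((i < j ∧ b j = true) ∨ (j < i ∧ b i = true))
  symm := ⟨fun _ _ h => ⟨h.1.symm, h.2.symm⟩⟩
  loopless := ⟨fun _ h => h.1 rfl⟩

/-- The threshold graph whose creation sequence is given by a list of booleans. -/
def thresholdOfList (L : List Bool) : SimpleGraph (Fin L.length) where
  Adj i j := i ≠ j ∧ ((i < j ∧ L.get j = true) ∨ (j < i ∧ L.get i = true))
  symm := ⟨fun _ _ h => ⟨h.1.symm, h.2.symm⟩⟩
  loopless := ⟨fun _ h => h.1 rfl⟩

/-- `S(G)`: real symmetric matrices whose off-diagonal nonzero pattern is given by `G`. -/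
def SMat {n : ℕ} (G : SimpleGraph (Fin n)) : Set (Matrix (Fin n) (Fin n) ℝ) :=
  {A | A.IsSymm ∧ ∀ i j : Fin n, i ≠ j → (A i j ≠ 0 ↔ G.Adj i j)}

/-- The number of distinct (real) eigenvalues of a matrix. -/
noncomputable def numEig {n : ℕ} (A : Matrix (Fin n) (Fin n) ℝ) : ℕ :=
  (spectrum ℝ A).ncard

/-- `q(G)`: the minimum number of distinct eigenvalues over matrices in `S(G)`. -/
noncomputable def qGraph {n : ℕ} (G : SimpleGraph (Fin n)) : ℕ :=
  sInf (numEig '' SMat G)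

namespace Stmt0Helpers

variable {n : ℕ}

lemma vmv_mul_vmv (p q r s : Fin n → ℝ) :
    vecMulVec p q * vecMulVec r s = (q ⬝ᵥ r) • vecMulVec p s := by
  ext i j
  simp only [mul_apply, vecMulVec_apply, Matrix.smul_apply, dotProduct, smul_eq_mul,
    Finset.sum_mul]
  exact Finset.sum_congr rfl (fun k _ => by ring)

lemma vmv_transpose (p q : Fin n → ℝ) : (vecMulVec p q)ᵀ = vecMulVec q p := by
  ext i j; simp [vecMulVec_apply, mul_comm]

lemma diag_mul_vmv (d p q : Fin n → ℝ) :
    diagonal d * vecMulVec p q = vecMulVec (fun i => d i * p i) q := by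
  ext i j; simp [diagonal_mul, vecMulVec_apply, mul_assoc]

lemma vmv_mul_diag (d p q : Fin n → ℝ) :
    vecMulVec p q * diagonal d = vecMulVec p (fun j => q j * d j) := by
  ext i j; simp [mul_diagonal, vecMulVec_apply, mul_assoc]

lemma vmv_zero_left (q : Fin n → ℝ) : vecMulVec (fun _ : Fin n => (0:ℝ)) q = 0 := by
  ext i j; simp [vecMulVec_apply]

lemma diag_sub_smul_one (f : Fin n → ℝ) (r : ℝ) :
    diagonal f - r • (1 : Matrix (Fin n) (Fin n) ℝ) = diagonal (fun i => f i - r) := by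
  ext i j
  by_cases h : i = j
  · subst h; simp
  · simp [h, Matrix.one_apply_ne h, Matrix.diagonal_apply_ne _ h]

lemma not_adj_ff {b : Fin n → Bool} {u v : Fin n} (hu : b u = false) (hv : b v = false) :
    ¬ (ThresholdGraph b).Adj u v := by
  rintro ⟨hne, (⟨-, h⟩ | ⟨-, h⟩)⟩ <;> simp_all

lemma herm_quad {A : Matrix (Fin n) (Fin n) ℝ} (hH : A.IsHermitian) {lam mu : ℝ}
    (h : ∀ i, hH.eigenvalues i = lam ∨ hH.eigenvalues i = mu) :
    (A - lam • 1) * (A - mu • 1) = 0 := by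
  set U : Matrix (Fin n) (Fin n) ℝ := (hH.eigenvectorUnitary : Matrix (Fin n) (Fin n) ℝ) with hUdef
  have hU1 : U * star U = 1 := (Matrix.mem_unitaryGroup_iff).mp hH.eigenvectorUnitary.2
  have hU2 : star U * U = 1 := mul_eq_one_comm.mp hU1
  set D : Matrix (Fin n) (Fin n) ℝ := diagonal hH.eigenvalues with hDdef
  have hst : A = U * D * star U := by
    have h2 := hH.spectral_theorem
    rwa [show (RCLike.ofReal ∘ hH.eigenvalues : Fin n → ℝ) = hH.eigenvalues by
      funext i; simp [RCLike.ofReal_real_eq_id], Unitary.conjStarAlgAut_apply] at h2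
  have key : ∀ r : ℝ, A - r • 1 = U * (D - r • 1) * star U := by
    intro r
    rw [Matrix.mul_sub, Matrix.sub_mul, Matrix.mul_smul, Matrix.mul_one, Matrix.smul_mul, hU1,
      ← hst]
  rw [key lam, key mu]
  have hassoc : (U * (D - lam • 1) * star U) * (U * (D - mu • 1) * star U)
      = U * ((D - lam • 1) * (D - mu • 1)) * star U := by
    simp only [Matrix.mul_assoc]
    rw [← Matrix.mul_assoc (star U) U, hU2, Matrix.one_mul]
  rw [hassoc]
  have hD : (D - lam • 1) * (D - mu • 1) = 0 := by
    rw [hDdef, diag_sub_smul_one, diag_sub_smul_one, Matrix.diagonal_mul_diagonal]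
    rw [show (fun i => (hH.eigenvalues i - lam) * (hH.eigenvalues i - mu)) = fun _ : Fin n => (0:ℝ)
      from funext fun i => by rcases h i with hi | hi <;> simp [hi]]
    simp
  rw [hD, Matrix.mul_zero, Matrix.zero_mul]

lemma two_le_numEig {G : SimpleGraph (Fin n)} {i0 j0 : Fin n}
    (hne : i0 ≠ j0) (hadj : G.Adj i0 j0) {A : Matrix (Fin n) (Fin n) ℝ}
    (hA : A ∈ SMat G) : 2 ≤ numEig A := by
  have hH : A.IsHermitian := by
    rw [Matrix.IsHermitian, Matrix.conjTranspose_eq_transpose_of_trivial]; exact hA.1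
  have hfin : (spectrum ℝ A).Finite := A.finite_real_spectrum
  have hne0 : (spectrum ℝ A).Nonempty := ⟨_, hH.eigenvalues_mem_spectrum_real i0⟩
  by_contra hlt
  push_neg at hlt
  simp only [numEig] at hlt
  have h1 : (spectrum ℝ A).ncard = 1 := by
    have := (Set.ncard_pos hfin).mpr hne0
    omega
  obtain ⟨c, hc⟩ := Set.ncard_eq_one.mp h1
  have hev : ∀ i, hH.eigenvalues i = c := fun i => by
    have := hH.eigenvalues_mem_spectrum_real i
    rw [hc] at this
    exact this
  have hAc : A = c • (1 : Matrix (Fin n) (Fin n) ℝ) := by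
    have hst := hH.spectral_theorem
    rw [show (RCLike.ofReal ∘ hH.eigenvalues : Fin n → ℝ) = fun _ => c from
      funext fun i => by simp [RCLike.ofReal_real_eq_id, hev i]] at hst
    rw [← Matrix.smul_one_eq_diagonal] at hst
    rw [hst, Unitary.conjStarAlgAut_apply, Matrix.mul_smul, Matrix.smul_mul, Matrix.mul_one,
      (Matrix.mem_unitaryGroup_iff).mp hH.eigenvectorUnitary.2]
  have hz : A i0 j0 = 0 := by
    rw [hAc]
    simp [Matrix.smul_apply, Matrix.one_apply_ne hne]
  exact ((hA.2 i0 j0 hne).mpr hadj) hz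


lemma adj_tf {b : Fin n → Bool} {w u : Fin n} (hw : b w = true) (hu : b u = false) :
    (ThresholdGraph b).Adj w u ↔ u < w := by
  constructor
  · rintro ⟨hne, (⟨h1, h2⟩ | ⟨h1, h2⟩)⟩
    · rw [hu] at h2; cases h2
    · exact h1
  · intro h
    exact ⟨h.ne', Or.inr ⟨h, hw⟩⟩

lemma exists_two_eig (hn : 1 ≤ n) (b : Fin n → Bool)
    (hb1 : b ⟨0, Nat.lt_of_lt_of_le Nat.one_pos hn⟩ = false) (hbn : b ⟨n - 1, Nat.sub_lt hn Nat.one_pos⟩ = true)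
    (y : Fin n → Fin n → ℝ)
    (ho1 : ∀ u v, b u = false → b v = false → y u ⬝ᵥ y v = if u = v then 1 else 0)
    (ho2 : ∀ u w, b u = false → (y u w ≠ 0 ↔ (ThresholdGraph b).Adj w u)) :
    ∃ M ∈ SMat (ThresholdGraph b), numEig M = 2 := by
  classical
  set z : Fin n := ⟨0, by omega⟩ with hzdef
  set ln : Fin n := ⟨n - 1, by omega⟩ with hlndef
  have hbz : b z = false := hb1
  have hbln : b ln = true := hbn
  have hzln : z ≠ ln := fun h => by rw [h, hbln] at hbz; cases hbz
  have hzlt : ∀ i : Fin n, i ≠ z → z < i := by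
    intro i hi
    have h0 : i.val ≠ 0 := fun h => hi (Fin.ext h)
    exact Fin.lt_def.mpr (Nat.pos_of_ne_zero h0)
  set F : Finset (Fin n) := Finset.univ.filter (fun u => b u = false) with hFdef
  have hmemF : ∀ u, u ∈ F ↔ b u = false := fun u => by simp [hFdef]
  have hzF : z ∈ F := (hmemF z).mpr hbz
  have hysupp : ∀ u w, b u = false → b w = false → y u w = 0 := by
    intro u w hu hw
    by_contra hne
    exact not_adj_ff hw hu ((ho2 u w hu).mp hne)
  set ee : Fin n → Fin n → ℝ := fun u w => if w = u then 1 else 0 with heedef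
  have hye : ∀ u v, b u = false → b v = false → y u ⬝ᵥ ee v = 0 := by
    intro u v hu hv
    have h1 : y u ⬝ᵥ ee v = y u v := by
      simp only [dotProduct, heedef, mul_ite, mul_one, mul_zero]
      exact Finset.sum_ite_eq' Finset.univ v (y u) |>.trans (if_pos (Finset.mem_univ v))
    rw [h1, hysupp u v hu hv]
  have hey : ∀ u v, b u = false → b v = false → ee u ⬝ᵥ y v = 0 := by
    intro u v hu hv
    have h1 : ee u ⬝ᵥ y v = y v u := by
      simp only [dotProduct, heedef, ite_mul, one_mul, zero_mul]
      exact Finset.sum_ite_eq' Finset.univ u (y v) |>.trans (if_pos (Finset.mem_univ u))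
    rw [h1, hysupp v u hv hu]
  have hee : ∀ u v : Fin n, ee u ⬝ᵥ ee v = if u = v then 1 else 0 := by
    intro u v
    by_cases h : u = v
    · subst h
      rw [if_pos rfl]
      simp only [dotProduct, heedef]
      have hterm : ∀ w, ((if w = u then (1:ℝ) else 0) * (if w = u then 1 else 0))
          = if w = u then 1 else 0 := fun w => by by_cases h : w = u <;> simp [h]
      rw [Finset.sum_congr rfl (fun w _ => hterm w),
        Finset.sum_ite_eq' Finset.univ u (fun _ => (1:ℝ)), if_pos (Finset.mem_univ u)]
    · rw [if_neg h]
      apply Finset.sum_eq_zero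
      intro w _
      simp only [heedef]
      by_cases h1 : w = u
      · subst h1
        rw [if_neg (fun hh : w = v => h (hh ▸ rfl)), mul_zero]
      · rw [if_neg h1, zero_mul]
  -- choose the parameter t
  obtain ⟨t, htIoo, htbad⟩ := (Set.Ioo_infinite (show (-1:ℝ) < 1 by norm_num)).exists_notMem_finset
      (Finset.image (fun p : Fin n × Fin n =>
        1 + (∑ u ∈ F.erase z, y u p.1 * y u p.2) / (y z p.1 * y z p.2)) Finset.univ)
  have ht2 : t ^ 2 < 1 := by
    obtain ⟨ha, hb'⟩ := htIoo
    nlinarith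
  set tv : Fin n → ℝ := fun u => if u = z then t else 0 with htvdef
  have htv2 : ∀ u, (tv u) ^ 2 < 1 := by
    intro u
    by_cases h : u = z
    · simpa [htvdef, h] using ht2
    · simp only [htvdef, if_neg h]
      norm_num
  set bet : Fin n → ℝ := fun u => Real.sqrt (1 - tv u ^ 2) with hbetdef
  have hbetpos : ∀ u, 0 < bet u := fun u => Real.sqrt_pos.mpr (by linarith [htv2 u])
  have hbetsq : ∀ u, bet u ^ 2 = 1 - tv u ^ 2 := fun u =>
    Real.sq_sqrt (by linarith [htv2 u])
  set Gm : Fin n → Matrix (Fin n) (Fin n) ℝ := fun u =>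
    (tv u - 1) • vecMulVec (y u) (y u)
      + bet u • (vecMulVec (y u) (ee u) + vecMulVec (ee u) (y u))
      + (-(tv u)) • vecMulVec (ee u) (ee u) with hGmdef
  set J : Matrix (Fin n) (Fin n) ℝ :=
    Matrix.diagonal (fun w => if b w = true then (1:ℝ) else 0) with hJdef
  set M : Matrix (Fin n) (Fin n) ℝ := J + ∑ u ∈ F, Gm u with hMdef
  -- J multiplication facts
  have hJy : ∀ u, b u = false → (fun i => (if b i = true then (1:ℝ) else 0) * y u i) = y u := by
    intro u hu; funext i
    by_cases hbi : b i = true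
    · simp [hbi]
    · have hbi' : b i = false := by
        cases h : b i with
        | false => rfl
        | true => exact absurd h hbi
      simp [hbi', hysupp u i hu hbi']
  have hJe : ∀ u, b u = false →
      (fun i => (if b i = true then (1:ℝ) else 0) * ee u i) = (fun _ : Fin n => (0:ℝ)) := by
    intro u hu; funext i
    by_cases hi : i = u
    · subst hi; simp [heedef, hu]
    · simp [heedef, hi]
  have hJy' : ∀ u, b u = false → (fun j => y u j * (if b j = true then (1:ℝ) else 0)) = y u := by
    intro u hu; funext j
    by_cases hbj : b j = true
    · simp [hbj]
    · have hbj' : b j = false := by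
        cases h : b j with
        | false => rfl
        | true => exact absurd h hbj
      simp [hbj', hysupp u j hu hbj']
  have hJe' : ∀ u, b u = false →
      (fun j => ee u j * (if b j = true then (1:ℝ) else 0)) = (fun _ : Fin n => (0:ℝ)) := by
    intro u hu; funext j
    by_cases hj : j = u
    · subst hj; simp [heedef, hu]
    · simp [heedef, hj]
  have vmv_zero_right : ∀ p : Fin n → ℝ, vecMulVec p (fun _ : Fin n => (0:ℝ)) = 0 := by
    intro p; ext i j; simp [vecMulVec_apply]
  have hJG : ∀ u ∈ F, J * Gm u
      = (tv u - 1) • vecMulVec (y u) (y u) + bet u • vecMulVec (y u) (ee u) := by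
    intro u hu
    have hu' := (hmemF u).mp hu
    simp only [hGmdef, hJdef, Matrix.mul_add, Matrix.mul_smul, diag_mul_vmv,
      hJy u hu', hJe u hu', vmv_zero_left, smul_zero, add_zero]
  have hGJ : ∀ u ∈ F, Gm u * J
      = (tv u - 1) • vecMulVec (y u) (y u) + bet u • vecMulVec (ee u) (y u) := by
    intro u hu
    have hu' := (hmemF u).mp hu
    simp only [hGmdef, hJdef, Matrix.add_mul, Matrix.smul_mul, vmv_mul_diag,
      hJy' u hu', hJe' u hu', vmv_zero_right, smul_zero, add_zero, zero_add]
  have hGG0 : ∀ u ∈ F, ∀ v ∈ F, u ≠ v → Gm u * Gm v = 0 := by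
    intro u hu v hv huv
    have hu' := (hmemF u).mp hu
    have hv' := (hmemF v).mp hv
    simp only [hGmdef, Matrix.add_mul, Matrix.mul_add, Matrix.smul_mul, Matrix.mul_smul,
      vmv_mul_vmv, ho1 u v hu' hv', hye u v hu' hv', hey u v hu' hv', hee,
      if_neg huv, zero_smul, smul_zero, add_zero, zero_add]
  have hGG : ∀ u ∈ F, J * Gm u + Gm u * J + Gm u * Gm u = vecMulVec (ee u) (ee u) := by
    intro u hu
    have hu' := (hmemF u).mp hu
    rw [hJG u hu, hGJ u hu]
    simp only [hGmdef, Matrix.add_mul, Matrix.mul_add, Matrix.smul_mul, Matrix.mul_smul,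
      vmv_mul_vmv, ho1 u u hu' hu', hye u u hu' hu', hey u u hu' hu', hee,
      eq_self_iff_true, if_true, one_smul, zero_smul, smul_zero, add_zero, zero_add, smul_smul]
    match_scalars
    all_goals first
      | ring1
      | linear_combination hbetsq u
      | linear_combination -hbetsq u
      | linear_combination 2 * hbetsq u
      | linear_combination -2 * hbetsq u
  -- M * M = 1
  have hfinal : J + ∑ u ∈ F, vecMulVec (ee u) (ee u) = 1 := by
    ext i j
    simp only [Matrix.add_apply, Matrix.sum_apply, vecMulVec_apply, heedef, hJdef]
    by_cases hij : i = j
    · subst hij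
      rw [Matrix.diagonal_apply_eq, Matrix.one_apply_eq]
      have hterm : ∀ u, ((if i = u then (1:ℝ) else 0) * (if i = u then 1 else 0))
          = if i = u then 1 else 0 := fun u => by by_cases h : i = u <;> simp [h]
      rw [Finset.sum_congr rfl (fun u _ => hterm u), Finset.sum_ite_eq F i (fun _ => (1:ℝ))]
      by_cases h : b i = true
      · have : i ∉ F := fun hc => by rw [(hmemF i).mp hc] at h; cases h
        rw [if_pos h, if_neg this, add_zero]
      · have hbi' : b i = false := by
          cases hh : b i with
          | false => rfl
          | true => exact absurd hh h
        rw [if_neg h, if_pos ((hmemF i).mpr hbi'), zero_add]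
    · rw [Matrix.diagonal_apply_ne _ hij, Matrix.one_apply_ne hij]
      rw [Finset.sum_eq_zero, add_zero]
      intro u _
      by_cases h1 : i = u
      · subst h1
        rw [if_neg (fun hh : j = i => hij hh.symm), mul_zero]
      · rw [if_neg h1, zero_mul]
  have hMM : M * M = 1 := by
    have hS2 : (∑ u ∈ F, Gm u) * (∑ u ∈ F, Gm u) = ∑ u ∈ F, Gm u * Gm u := by
      rw [Finset.sum_mul]
      refine Finset.sum_congr rfl (fun u hu => ?_)
      rw [Finset.mul_sum]
      exact Finset.sum_eq_single_of_mem u hu (fun v hv hvu => hGG0 u hu v hv (fun h => hvu h.symm))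
    have hJJ : J * J = J := by
      rw [hJdef, Matrix.diagonal_mul_diagonal]
      ext i j
      by_cases hij : i = j
      · subst hij
        by_cases h : b i = true <;> simp [Matrix.diagonal_apply_eq, h]
      · simp [Matrix.diagonal_apply_ne _ hij]
    calc M * M = J * J + J * (∑ u ∈ F, Gm u)
        + ((∑ u ∈ F, Gm u) * J + (∑ u ∈ F, Gm u) * (∑ u ∈ F, Gm u)) := by
          rw [hMdef, Matrix.add_mul, Matrix.mul_add, Matrix.mul_add]
      _ = J + ∑ u ∈ F, (J * Gm u + Gm u * J + Gm u * Gm u) := by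
          rw [hJJ, Finset.mul_sum, Finset.sum_mul, hS2, ← Finset.sum_add_distrib, add_assoc,
            ← Finset.sum_add_distrib]
          congr 1
          exact Finset.sum_congr rfl fun u _ => (add_assoc _ _ _).symm
      _ = J + ∑ u ∈ F, vecMulVec (ee u) (ee u) := by
          rw [Finset.sum_congr rfl (fun u hu => hGG u hu)]
      _ = 1 := hfinal
  -- entries of M
  have hMapply : ∀ i j, M i j = (if i = j then (if b i = true then (1:ℝ) else 0) else 0)
      + ∑ u ∈ F, ((tv u - 1) * (y u i * y u j)
        + bet u * (y u i * ee u j + ee u i * y u j)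
        + (-(tv u)) * (ee u i * ee u j)) := by
    intro i j
    rw [hMdef, Matrix.add_apply, Matrix.sum_apply]
    have h1 : J i j = (if i = j then (if b i = true then (1:ℝ) else 0) else 0) := by
      rw [hJdef, Matrix.diagonal_apply]
    rw [h1]
    exact congrArg _ (Finset.sum_congr rfl fun u _ => rfl)
  have hTT : ∀ i j, b i = true → b j = true → i ≠ j →
      M i j = (t - 1) * (y z i * y z j) - ∑ u ∈ F.erase z, y u i * y u j := by
    intro i j hi hj hij
    rw [hMapply i j, if_neg hij]
    have hstep : ∀ u ∈ F, ((tv u - 1) * (y u i * y u j)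
        + bet u * (y u i * ee u j + ee u i * y u j)
        + (-(tv u)) * (ee u i * ee u j)) = (tv u - 1) * (y u i * y u j) := by
      intro u hu
      have hu' := (hmemF u).mp hu
      have h2 : i ≠ u := fun h => by rw [h, hu'] at hi; cases hi
      have h3 : j ≠ u := fun h => by rw [h, hu'] at hj; cases hj
      simp [heedef, h2, h3]
    rw [Finset.sum_congr rfl hstep, ← Finset.add_sum_erase F _ hzF]
    have htvz : tv z = t := if_pos rfl
    rw [htvz]
    have hrest : ∑ u ∈ F.erase z, (tv u - 1) * (y u i * y u j)
        = - ∑ u ∈ F.erase z, y u i * y u j := by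
      rw [← Finset.sum_neg_distrib]
      refine Finset.sum_congr rfl fun u hu => ?_
      rw [show tv u = 0 from if_neg (Finset.ne_of_mem_erase hu)]
      ring
    rw [hrest]
    ring
  have hTF : ∀ i j, b i = true → b j = false → M i j = bet j * y j i := by
    intro i j hi hj
    have hij : i ≠ j := fun h => by rw [h, hj] at hi; cases hi
    rw [hMapply i j, if_neg hij]
    have hjF : j ∈ F := (hmemF j).mpr hj
    rw [Finset.sum_eq_single_of_mem j hjF ?side]
    case side =>
      intro u hu huj
      have hu' := (hmemF u).mp hu
      have h1 : y u j = 0 := hysupp u j hu' hj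
      have h2 : i ≠ u := fun h => by rw [h, hu'] at hi; cases hi
      have h3 : j ≠ u := fun h => huj h.symm
      simp [heedef, h1, h2, h3]
    have h1 : y j j = 0 := hysupp j j hj hj
    simp [heedef, hij, h1]
  have hFF : ∀ i j, b i = false → b j = false → i ≠ j → M i j = 0 := by
    intro i j hi hj hij
    rw [hMapply i j, if_neg hij]
    rw [Finset.sum_eq_zero, add_zero]
    intro u hu
    have hu' := (hmemF u).mp hu
    have h1 : y u i = 0 := hysupp u i hu' hi
    have h2 : y u j = 0 := hysupp u j hu' hj
    by_cases h3 : i = u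
    · subst h3
      have h4 : j ≠ i := fun h => hij h.symm
      simp [heedef, h1, h2, h4]
    · simp [heedef, h1, h2, h3]
  -- symmetry
  have hGsym : ∀ u, (Gm u)ᵀ = Gm u := by
    intro u
    simp only [hGmdef, Matrix.transpose_add, Matrix.transpose_smul, vmv_transpose]
    rw [add_comm (vecMulVec (ee u) (y u)) (vecMulVec (y u) (ee u))]
  have hMsym : M.IsSymm := by
    show Mᵀ = M
    rw [hMdef, Matrix.transpose_add, Matrix.transpose_sum]
    rw [hJdef, Matrix.diagonal_transpose]
    rw [Finset.sum_congr rfl (fun u _ => hGsym u)]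
  -- the pattern
  have hMpat : ∀ i j, i ≠ j → (M i j ≠ 0 ↔ (ThresholdGraph b).Adj i j) := by
    have hTFiff : ∀ i j, b i = true → b j = false →
        (M i j ≠ 0 ↔ (ThresholdGraph b).Adj i j) := by
      intro i j hi hj
      rw [hTF i j hi hj, mul_ne_zero_iff, and_iff_right (ne_of_gt (hbetpos j))]
      exact ho2 j i hj
    intro i j hij
    by_cases hi : b i = true <;> by_cases hj : b j = true
    · have hadj : (ThresholdGraph b).Adj i j := by
        rcases lt_or_gt_of_ne hij with h | h
        · exact ⟨hij, Or.inl ⟨h, hj⟩⟩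
        · exact ⟨hij, Or.inr ⟨h, hi⟩⟩
      refine iff_of_true ?_ hadj
      rw [hTT i j hi hj hij]
      intro h0
      have hine : i ≠ z := fun h => by rw [h, hbz] at hi; cases hi
      have hjne : j ≠ z := fun h => by rw [h, hbz] at hj; cases hj
      have hyzi : y z i ≠ 0 := (ho2 z i hbz).mpr ⟨hine, Or.inr ⟨hzlt i hine, hi⟩⟩
      have hyzj : y z j ≠ 0 := (ho2 z j hbz).mpr ⟨hjne, Or.inr ⟨hzlt j hjne, hj⟩⟩
      have hc : y z i * y z j ≠ 0 := mul_ne_zero hyzi hyzj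
      have hr : (t - (1 + (∑ u ∈ F.erase z, y u i * y u j) / (y z i * y z j)))
          * (y z i * y z j)
          = (t - 1) * (y z i * y z j) - ∑ u ∈ F.erase z, y u i * y u j := by
        field_simp
        ring
      have h1 : (t - (1 + (∑ u ∈ F.erase z, y u i * y u j) / (y z i * y z j)))
          * (y z i * y z j) = 0 := hr.trans h0
      rcases mul_eq_zero.mp h1 with h | h
      · have ht' : t = 1 + (∑ u ∈ F.erase z, y u i * y u j) / (y z i * y z j) :=
          sub_eq_zero.mp h
        exact htbad (Finset.mem_image.mpr ⟨(i, j), Finset.mem_univ _, ht'.symm⟩)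
      · exact hc h
    · have hj' : b j = false := by
        cases h : b j with
        | false => rfl
        | true => exact absurd h hj
      exact hTFiff i j hi hj'
    · have hi' : b i = false := by
        cases h : b i with
        | false => rfl
        | true => exact absurd h hi
      have hsymM : M i j = M j i := by
        have h := congrFun (congrFun hMsym j) i
        simpa [Matrix.transpose_apply] using h
      rw [hsymM, (ThresholdGraph b).adj_comm]
      exact hTFiff j i hj hi'
    · have hi' : b i = false := by
        cases h : b i with
        | false => rfl
        | true => exact absurd h hi
      have hj' : b j = false := by
        cases h : b j with
        | false => rfl
        | true => exact absurd h hj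
      rw [hFF i j hi' hj' hij]
      exact iff_of_false (by simp) (not_adj_ff hi' hj')
  have hMmem : M ∈ SMat (ThresholdGraph b) := ⟨hMsym, hMpat⟩
  have hMzln : M ln z ≠ 0 :=
    (hMpat ln z (Ne.symm hzln)).mpr ⟨Ne.symm hzln, Or.inr ⟨hzlt ln (Ne.symm hzln), hbln⟩⟩
  -- spectrum of M
  have hspec : spectrum ℝ M = {(1:ℝ), -1} := by
    ext x
    constructor
    · intro hx
      rw [spectrum.mem_iff] at hx
      by_contra hne'
      rw [Set.mem_insert_iff, Set.mem_singleton_iff] at hne'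
      push_neg at hne'
      obtain ⟨hx1, hx2⟩ := hne'
      apply hx
      have hxx : x * x - 1 ≠ 0 := by
        intro h
        rcases mul_self_eq_one_iff.mp (by linear_combination h) with h | h
        · exact hx1 h
        · exact hx2 h
      have hprod : (algebraMap ℝ (Matrix (Fin n) (Fin n) ℝ) x - M)
          * (algebraMap ℝ (Matrix (Fin n) (Fin n) ℝ) x + M)
          = algebraMap ℝ (Matrix (Fin n) (Fin n) ℝ) (x * x - 1) := by
        simp only [Matrix.sub_mul, Matrix.mul_add]
        rw [hMM, ← _root_.map_mul, Algebra.commutes x M, _root_.map_sub, _root_.map_one]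
        abel
      apply IsUnit.of_mul_eq_one
        ((algebraMap ℝ (Matrix (Fin n) (Fin n) ℝ) x + M) * ((x * x - 1)⁻¹ • 1))
      rw [← Matrix.mul_assoc, hprod, Algebra.algebraMap_eq_smul_one, Matrix.smul_mul,
        Matrix.one_mul, smul_smul, mul_inv_cancel₀ hxx, one_smul]
    · intro hx
      rcases hx with rfl | hx
      · rw [spectrum.mem_iff]
        intro hunit
        rw [_root_.map_one] at hunit
        have h0 : ((1 : Matrix (Fin n) (Fin n) ℝ) - M) * (1 + M) = 0 := by
          simp only [Matrix.sub_mul, Matrix.mul_add, Matrix.one_mul, Matrix.mul_one]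
          rw [hMM]
          abel
        obtain ⟨v, hv⟩ := hunit.exists_left_inv
        have h1 : (1 : Matrix (Fin n) (Fin n) ℝ) + M = 0 := by
          calc (1 : Matrix (Fin n) (Fin n) ℝ) + M
              = (v * (1 - M)) * (1 + M) := by rw [hv, Matrix.one_mul]
            _ = v * ((1 - M) * (1 + M)) := by rw [Matrix.mul_assoc]
            _ = 0 := by rw [h0, Matrix.mul_zero]
        have hMneg : M = -1 := by
          have := eq_neg_of_add_eq_zero_right h1
          exact this
        apply hMzln
        rw [hMneg]
        simp [Matrix.one_apply_ne (Ne.symm hzln)]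
      · rw [Set.mem_singleton_iff] at hx
        subst hx
        rw [spectrum.mem_iff]
        intro hunit
        rw [map_neg, _root_.map_one] at hunit
        rw [show (-1 - M : Matrix (Fin n) (Fin n) ℝ) = -(1 + M) by abel] at hunit
        rw [IsUnit.neg_iff] at hunit
        have h0 : ((1 : Matrix (Fin n) (Fin n) ℝ) + M) * (1 - M) = 0 := by
          simp only [Matrix.add_mul, Matrix.mul_sub, Matrix.one_mul, Matrix.mul_one]
          rw [hMM]
          abel
        obtain ⟨v, hv⟩ := hunit.exists_left_inv
        have h1 : (1 : Matrix (Fin n) (Fin n) ℝ) - M = 0 := by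
          calc (1 : Matrix (Fin n) (Fin n) ℝ) - M
              = (v * (1 + M)) * (1 - M) := by rw [hv, Matrix.one_mul]
            _ = v * ((1 + M) * (1 - M)) := by rw [Matrix.mul_assoc]
            _ = 0 := by rw [h0, Matrix.mul_zero]
        have hMone : M = 1 := by
          have := sub_eq_zero.mp h1
          exact this.symm
        apply hMzln
        rw [hMone]
        exact Matrix.one_apply_ne (Ne.symm hzln)
  refine ⟨M, hMmem, ?_⟩
  simp only [numEig]
  rw [hspec]
  exact Set.ncard_pair (by norm_num)

end Stmt0Helpers

open Stmt0Helpers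

/-- For a connected threshold graph `G` with creation sequence `b`,
`q(G) = 2` iff some `A ∈ S(G)` has the submatrix with rows indexed by dominating
vertices and columns indexed by isolated vertices having pairwise orthogonal columns. -/
theorem stmt0 {n : ℕ} (hn : 1 ≤ n) (b : Fin n → Bool)
    (hb1 : b ⟨0, by omega⟩ = false) (hbn : b ⟨n - 1, by omega⟩ = true) :
    qGraph (ThresholdGraph b) = 2 ↔
      ∃ A ∈ SMat (ThresholdGraph b),
        ∀ u v : Fin n, b u = false → b v = false → u ≠ v →
          ∑ w ∈ Finset.univ.filter (fun w : Fin n => b w = true), A w u * A w v = 0 := by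
  classical
  set z : Fin n := ⟨0, by omega⟩ with hzdef
  set ln : Fin n := ⟨n - 1, by omega⟩ with hlndef
  have hbz : b z = false := hb1
  have hbln : b ln = true := hbn
  have hzln : z ≠ ln := fun h => by rw [h, hbln] at hbz; cases hbz
  have hzlt : ∀ i : Fin n, i ≠ z → z < i := fun i hi =>
    Fin.lt_def.mpr (Nat.pos_of_ne_zero (fun h => hi (Fin.ext h)))
  have hlnlt : ∀ u : Fin n, u ≠ ln → u < ln := by
    intro u hu
    have h1 : u.val < n := u.isLt
    have h2 : u.val ≠ n - 1 := fun h => hu (Fin.ext h)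
    have h3 : u.val < n - 1 := by omega
    exact Fin.lt_def.mpr h3
  constructor
  · -- forward direction
    intro h
    have h2 : sInf (numEig '' SMat (ThresholdGraph b)) = 2 := h
    have hS : (numEig '' SMat (ThresholdGraph b)).Nonempty := by
      by_contra hc
      rw [Set.not_nonempty_iff_eq_empty] at hc
      rw [hc, Nat.sInf_empty] at h2
      exact absurd h2 (by norm_num)
    have hmem := Nat.sInf_mem hS
    rw [h2] at hmem
    obtain ⟨A, hASM, hA2⟩ := hmem
    refine ⟨A, hASM, ?_⟩
    intro u v hu hv huv
    have hsym := hASM.1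
    have hpat := hASM.2
    have hH : A.IsHermitian := by
      rw [Matrix.IsHermitian, Matrix.conjTranspose_eq_transpose_of_trivial]
      exact hsym
    obtain ⟨lam, mu, hlm, hspec⟩ := Set.ncard_eq_two.mp hA2
    have hev : ∀ i, hH.eigenvalues i = lam ∨ hH.eigenvalues i = mu := by
      intro i
      have hmem2 := hH.eigenvalues_mem_spectrum_real i
      rw [hspec] at hmem2
      simpa [Set.mem_insert_iff, Set.mem_singleton_iff] using hmem2
    have hann := herm_quad hH hev
    have hAuv : A u v = 0 := by
      by_contra hc
      exact not_adj_ff hu hv ((hpat u v huv).mp hc)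
    have hsymapp : ∀ i j, A i j = A j i := fun i j =>
      (congrFun (congrFun hsym.symm i) j : A i j = Aᵀ i j)
    have key : ∑ w, A u w * A w v = 0 := by
      have h3 := congrFun (congrFun hann u) v
      have h3' : ((A - lam • 1) * (A - mu • 1)) u v = 0 := h3
      rw [Matrix.mul_apply] at h3'
      have h4 : ∀ w, ((A - lam • 1) u w) * ((A - mu • 1) w v)
          = A u w * A w v - (if w = v then mu * A u w else 0)
            - (if u = w then lam * A w v else 0)
            + (if u = w ∧ w = v then lam * mu else 0) := by
        intro w
        simp only [Matrix.sub_apply, Matrix.smul_apply, Matrix.one_apply, smul_eq_mul]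
        by_cases h5 : u = w
        · by_cases h6 : w = v
          · simp [h5, h6]; ring
          · simp [h5, h6]; ring
        · by_cases h6 : w = v
          · have h7 : u ≠ v := fun hh => h5 (hh.trans h6.symm)
            simp [h5, h6, h7]
            ring
          · simp [h5, h6]
      rw [Finset.sum_congr rfl (fun w _ => h4 w)] at h3'
      rw [Finset.sum_add_distrib, Finset.sum_sub_distrib, Finset.sum_sub_distrib] at h3'
      rw [Finset.sum_ite_eq' Finset.univ v (fun w => mu * A u w), if_pos (Finset.mem_univ v)]
        at h3'
      rw [Finset.sum_ite_eq Finset.univ u (fun w => lam * A w v), if_pos (Finset.mem_univ u)]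
        at h3'
      rw [Finset.sum_eq_zero (fun w _ => if_neg
        (fun hc : u = w ∧ w = v => huv (hc.1.trans hc.2)))] at h3'
      rw [hAuv] at h3'
      simpa using h3'
    have hALL : ∑ w, A w u * A w v = 0 := by
      rw [Finset.sum_congr rfl (fun w _ => by rw [hsymapp w u])]
      exact key
    have hsplit := Finset.sum_filter_add_sum_filter_not Finset.univ
      (fun w : Fin n => b w = true) (fun w => A w u * A w v)
    have hF0 : ∑ w ∈ Finset.univ.filter (fun w : Fin n => ¬ (b w = true)),
        A w u * A w v = 0 := by
      apply Finset.sum_eq_zero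
      intro w hw
      rw [Finset.mem_filter] at hw
      have hbw : b w = false := by
        cases hh : b w with
        | false => rfl
        | true => exact absurd hh hw.2
      by_cases h7 : w = u
      · subst h7; rw [hAuv, mul_zero]
      · have hz0 : A w u = 0 := by
          by_contra hc
          exact not_adj_ff hbw hu ((hpat w u h7).mp hc)
        rw [hz0, zero_mul]
    rw [hF0, add_zero] at hsplit
    rw [hsplit]
    exact hALL
  · -- backward direction
    rintro ⟨A, hASM, horth⟩
    have hpat := hASM.2
    set T : Finset (Fin n) := Finset.univ.filter (fun w : Fin n => b w = true) with hTdef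
    have hlnT : ln ∈ T := Finset.mem_filter.mpr ⟨Finset.mem_univ _, hbln⟩
    have hpos : ∀ u, b u = false → 0 < ∑ w ∈ T, (A w u)^2 := by
      intro u hu
      have hune : u ≠ ln := fun h => by rw [h, hbln] at hu; cases hu
      have hAln : A ln u ≠ 0 := by
        refine (hpat ln u (Ne.symm hune)).mpr ?_
        exact ⟨Ne.symm hune, Or.inr ⟨hlnlt u hune, hbln⟩⟩
      refine Finset.sum_pos' (fun w _ => sq_nonneg _) ⟨ln, hlnT, ?_⟩
      positivity
    set nrm : Fin n → ℝ := fun u => Real.sqrt (∑ w ∈ T, (A w u)^2) with hnrmdef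
    have hnrmpos : ∀ u, b u = false → 0 < nrm u := fun u hu => Real.sqrt_pos.mpr (hpos u hu)
    set y : Fin n → Fin n → ℝ := fun u w => if b w = true then A w u / nrm u else 0 with hydef
    have ho2 : ∀ u w, b u = false → (y u w ≠ 0 ↔ (ThresholdGraph b).Adj w u) := by
      intro u w hu
      by_cases hw : b w = true
      · have hwu : w ≠ u := fun h => by rw [h, hu] at hw; cases hw
        simp only [hydef, if_pos hw]
        rw [div_ne_zero_iff, and_iff_left (ne_of_gt (hnrmpos u hu))]
        exact hpat w u hwu
      · have hbw : b w = false := by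
          cases hh : b w with
          | false => rfl
          | true => exact absurd hh hw
        simp only [hydef, if_neg hw]
        exact iff_of_false (by simp) (not_adj_ff hbw hu)
    have ho1 : ∀ u v, b u = false → b v = false → y u ⬝ᵥ y v = if u = v then 1 else 0 := by
      intro u v hu hv
      have hdot : y u ⬝ᵥ y v = (∑ w ∈ T, A w u * A w v) / (nrm u * nrm v) := by
        rw [dotProduct]
        rw [Finset.sum_congr rfl (fun w _ => show (y u w) * (y v w)
            = if b w = true then (A w u * A w v) / (nrm u * nrm v) else 0 from by
          by_cases hh : b w = true
          · simp only [hydef, if_pos hh]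
            rw [div_mul_div_comm]
          · simp [hydef, hh])]
        rw [← Finset.sum_filter, ← Finset.sum_div]
      by_cases huv : u = v
      · subst huv
        rw [if_pos rfl, hdot]
        rw [Finset.sum_congr rfl (fun w _ => (pow_two (A w u)).symm)]
        have hss : nrm u * nrm u = ∑ w ∈ T, (A w u)^2 := by
          rw [hnrmdef]
          exact Real.mul_self_sqrt (le_of_lt (hpos u hu))
        rw [hss]
        exact div_self (ne_of_gt (hpos u hu))
      · rw [if_neg huv, hdot, horth u v hu hv huv, zero_div]
    obtain ⟨M, hM1, hM2⟩ := exists_two_eig hn b hb1 hbn y ho1 ho2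
    have hEdge : (ThresholdGraph b).Adj ln z :=
      ⟨Ne.symm hzln, Or.inr ⟨hzlt ln (Ne.symm hzln), hbln⟩⟩
    apply le_antisymm
    · exact Nat.sInf_le ⟨M, hM1, hM2⟩
    · refine le_csInf ⟨numEig M, M, hM1, rfl⟩ ?_
      rintro k ⟨B, hB, rfl⟩
      exact two_le_numEig (Ne.symm hzln) hEdge hB
end

section
/- Let G be the connected threshold graph on n vertices with creation sequence consisting of blocks (0^{k_1}, 1^{t_1}, 0^{k_2}, 1^{t_2}, ..., 0^{k_s}, 1^{t_s}), where s ≥ 1 and k_i ≥ 1, t_i ≥ 1 for all i. If there exists an index i with 2 ≤ i ≤ s such that k_i ≥ t_i + t_{i+1} + ... + t_s, then q(G) ≥ 3. -/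
open Matrix BigOperators

lemma countFin (l : List Bool) :
    l.count true = ∑ q ∈ Finset.range l.length, (if l.getD q false = true then 1 else 0) := by
  induction l with
  | nil => simp
  | cons a tl ih =>
    rw [List.count_cons, List.length_cons, Finset.sum_range_succ']
    simp only [List.getD_cons_succ, List.getD_cons_zero]
    rw [← ih]
    by_cases h : a = true <;> simp [h] <;> omega

lemma cardFilter (l : List Bool) (d : ℕ) (hd : d ≤ l.length) :
    (Finset.univ.filter (fun p : Fin l.length => d ≤ (p : ℕ) ∧ l.get p = true)).card
      = (l.drop d).count true := by
  rw [Finset.card_filter]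
  have h1 : ∀ p : Fin l.length,
      (if d ≤ (p : ℕ) ∧ l.get p = true then 1 else 0)
        = (fun q : ℕ => if d ≤ q ∧ l.getD q false = true then 1 else 0) (p : ℕ) := by
    intro p
    have : l.getD (p : ℕ) false = l.get p := by
      rw [List.getD_eq_getElem l false p.isLt, List.get_eq_getElem]
    simp [this]
  calc (∑ p : Fin l.length, if d ≤ (p : ℕ) ∧ l.get p = true then 1 else 0)
      = ∑ q ∈ Finset.range l.length, (if d ≤ q ∧ l.getD q false = true then 1 else 0) := by
        rw [← Fin.sum_univ_eq_sum_range]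
        exact Finset.sum_congr rfl fun p _ => h1 p
    _ = ∑ q ∈ Finset.Ico d l.length, (if d ≤ q ∧ l.getD q false = true then 1 else 0) := by
        rw [Finset.range_eq_Ico, ← Finset.sum_Ico_consecutive _ (Nat.zero_le d) hd]
        have : ∑ q ∈ Finset.Ico 0 d, (if d ≤ q ∧ l.getD q false = true then 1 else 0) = 0 := by
          apply Finset.sum_eq_zero
          intro q hq
          simp only [Finset.mem_Ico] at hq
          have : ¬ (d ≤ q) := by omega
          simp [this]
        omega
    _ = ∑ q ∈ Finset.range (l.length - d), (if l.getD (d + q) false = true then 1 else 0) := by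
        rw [Finset.sum_Ico_eq_sum_range]
        exact Finset.sum_congr rfl fun q _ => by simp
    _ = (l.drop d).count true := by
        rw [countFin, List.length_drop]
        refine Finset.sum_congr rfl fun q hq => ?_
        simp only [Finset.mem_range] at hq
        have h2 : q < (l.drop d).length := by rw [List.length_drop]; exact hq
        rw [List.getD_eq_getElem _ false h2, List.getD_eq_getElem _ false (by omega : d + q < l.length)]
        rw [List.getElem_drop]

lemma countDropFlatten (s : ℕ) (g : Fin s → List Bool) (cnt : Fin s → ℕ)
    (hcnt : ∀ j, (g j).count true = cnt j) :
    ∀ fuel m, s - m ≤ fuel →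
      ((List.ofFn g).drop m).flatten.count true
        = ∑ j ∈ Finset.univ.filter (fun j : Fin s => m ≤ (j : ℕ)), cnt j := by
  intro fuel
  induction fuel with
  | zero =>
    intro m hm
    have hms : s ≤ m := by omega
    have : (List.ofFn g).drop m = [] := by
      apply List.drop_eq_nil_of_le
      rw [List.length_ofFn]; exact hms
    rw [this]
    have : Finset.univ.filter (fun j : Fin s => m ≤ (j : ℕ)) = ∅ := by
      apply Finset.filter_false_of_mem
      intro j _
      have := j.isLt
      omega
    simp [this]
  | succ fuel ih =>
    intro m hm
    by_cases hms : s ≤ m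
    · have : (List.ofFn g).drop m = [] := by
        apply List.drop_eq_nil_of_le
        rw [List.length_ofFn]; exact hms
      rw [this]
      have : Finset.univ.filter (fun j : Fin s => m ≤ (j : ℕ)) = ∅ := by
        apply Finset.filter_false_of_mem
        intro j _
        have := j.isLt
        omega
      simp [this]
    · push_neg at hms
      have hmlt : m < (List.ofFn g).length := by rw [List.length_ofFn]; exact hms
      rw [List.drop_eq_getElem_cons hmlt, List.flatten_cons, List.count_append,
        List.getElem_ofFn]
      have hfil : Finset.univ.filter (fun j : Fin s => m ≤ (j : ℕ))
          = insert ⟨m, hms⟩ (Finset.univ.filter (fun j : Fin s => m + 1 ≤ (j : ℕ))) := by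
        ext j
        simp only [Finset.mem_filter, Finset.mem_univ, true_and, Finset.mem_insert,
          Fin.ext_iff]
        omega
      rw [hfil, Finset.sum_insert (by simp)]
      rw [hcnt, ih (m + 1) (by omega)]


-- EIG: symmetric matrix with ≤ 2 distinct eigenvalues satisfies a quadratic
lemma eig_quad {n : ℕ} (A : Matrix (Fin n) (Fin n) ℝ) (hSym : A.IsSymm)
    (h2 : (spectrum ℝ A).ncard ≤ 2) :
    ∃ a b : ℝ, A * A = a • A + b • (1 : Matrix (Fin n) (Fin n) ℝ) := by
  have hA : A.IsHermitian := by
    rwa [Matrix.IsHermitian, Matrix.conjTranspose_eq_transpose_of_trivial]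
  have hfin : (spectrum ℝ A).Finite := A.finite_spectrum
  -- find l m with spectrum ⊆ {l, m}
  obtain ⟨l, m, hlm⟩ : ∃ l m : ℝ, spectrum ℝ A ⊆ {l, m} := by
    rcases Set.eq_empty_or_nonempty (spectrum ℝ A) with h | ⟨x, hx⟩
    · exact ⟨0, 0, by simp [h]⟩
    · interval_cases h : (spectrum ℝ A).ncard
      · exact ⟨x, x, by
          have := (Set.ncard_eq_zero hfin).mp h
          simp [this]⟩
      · obtain ⟨a, ha⟩ := (Set.ncard_eq_one).mp h
        exact ⟨a, a, by simp [ha]⟩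
      · obtain ⟨a, b, _, hab⟩ := (Set.ncard_eq_two).mp h
        exact ⟨a, b, by simp [hab]⟩
  refine ⟨l + m, -(l * m), ?_⟩
  have key : ∀ j, (hA.eigenvalues j - l) * (hA.eigenvalues j - m) = 0 := by
    intro j
    have hmem := hA.eigenvalues_mem_spectrum_real j
    rcases hlm hmem with h | h <;> simp_all <;> ring_nf <;> simp [sub_eq_zero, h]
  set U : Matrix (Fin n) (Fin n) ℝ := (hA.eigenvectorUnitary : Matrix (Fin n) (Fin n) ℝ)
  have hU1 : U * star U = 1 := (Matrix.mem_unitaryGroup_iff).mp hA.eigenvectorUnitary.2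
  have hU2 : star U * U = 1 := (Matrix.mem_unitaryGroup_iff').mp hA.eigenvectorUnitary.2
  have hspec : A = U * Matrix.diagonal (RCLike.ofReal ∘ hA.eigenvalues) * star U :=
    hA.spectral_theorem
  set D : Matrix (Fin n) (Fin n) ℝ := Matrix.diagonal (RCLike.ofReal ∘ hA.eigenvalues)
  have hDD : D * D = (l + m) • D + (-(l * m)) • (1 : Matrix (Fin n) (Fin n) ℝ) := by
    rw [Matrix.diagonal_mul_diagonal]
    ext j j'
    by_cases h : j = j'
    · subst h
      simp only [D, Matrix.diagonal_apply_eq, Matrix.add_apply, Matrix.smul_apply,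
        Matrix.one_apply_eq, Function.comp_apply, RCLike.ofReal_real_eq_id, id_eq, smul_eq_mul]
      nlinarith [key j]
    · simp [D, Matrix.diagonal_apply_ne _ h, Matrix.one_apply_ne h]
  calc A * A = U * (D * ((star U * U) * (D * star U))) := by
        rw [hspec]; simp only [Matrix.mul_assoc]
    _ = U * ((D * D) * star U) := by rw [hU2, Matrix.one_mul]; simp only [Matrix.mul_assoc]
    _ = (l + m) • (U * (D * star U)) + (-(l * m)) • (U * star U) := by
        rw [hDD, Matrix.add_mul, Matrix.mul_add, Matrix.smul_mul, Matrix.smul_mul,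
          Matrix.mul_smul, Matrix.mul_smul, Matrix.one_mul]
    _ = (l + m) • A + (-(l * m)) • 1 := by rw [hU1, hspec]; simp only [Matrix.mul_assoc]

lemma gen_card {n : ℕ} (G : SimpleGraph (Fin n)) (A : Matrix (Fin n) (Fin n) ℝ)
    (hSym : A.IsSymm) (hpat : ∀ i j, i ≠ j → (A i j ≠ 0 ↔ G.Adj i j))
    (a b : ℝ) (hquad : A * A = a • A + b • (1 : Matrix (Fin n) (Fin n) ℝ))
    (S N : Finset (Fin n))
    (h1 : ∀ u ∈ S, ∀ v ∈ S, u ≠ v → ¬ G.Adj u v)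
    (h2 : ∀ u ∈ S, ∀ v ∈ S, u ≠ v → ∀ p, G.Adj u p → G.Adj v p → p ∈ N)
    (h3 : ∀ u ∈ S, ∃ p ∈ N, G.Adj u p) :
    S.card ≤ N.card := by
  have hsymm : ∀ p q : Fin n, A p q = A q p := fun p q => by
    conv_lhs => rw [← hSym]
    rfl
  set v : S → EuclideanSpace ℝ N := fun u => WithLp.toLp 2 (fun p => A u p) with hv
  have hinner : ∀ u w : S, (u : Fin n) ≠ (w : Fin n) →
      (inner ℝ (v u) (v w) : ℝ) = 0 := by
    intro u w huw
    have hAuw : A u w = 0 := by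
      by_contra hne
      exact h1 u u.2 w w.2 huw ((hpat u w huw).mp hne)
    have : (inner ℝ (v u) (v w) : ℝ) = ∑ p : N, A u p * A w p := by
      rw [PiLp.inner_apply]
      simp [hv, mul_comm]
    rw [this]
    rw [Finset.sum_coe_sort N (fun p => A (u:Fin n) p * A (w:Fin n) p)]
    have hfull : ∑ p ∈ N, A u p * A w p = ∑ p : Fin n, A u p * A w p := by
      refine Finset.sum_subset (Finset.subset_univ N) ?_
      intro p _ hpN
      by_contra hne
      have hu : A u p ≠ 0 := fun h => hne (by rw [h, zero_mul])
      have hw : A w p ≠ 0 := fun h => hne (by rw [h, mul_zero])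
      rcases eq_or_ne (p : Fin n) u with rfl | hpu
      · exact hw (by rw [hsymm]; exact hAuw)
      · rcases eq_or_ne (p : Fin n) w with rfl | hpw
        · exact hu hAuw
        · have adj_u : G.Adj u p := (hpat u p (Ne.symm hpu)).mp hu
          have adj_w : G.Adj w p := (hpat w p (Ne.symm hpw)).mp hw
          exact hpN (h2 u u.2 w w.2 huw p adj_u adj_w)
    rw [hfull]
    have : ∑ p : Fin n, A u p * A w p = (A * A) (u : Fin n) (w : Fin n) := by
      rw [Matrix.mul_apply]
      exact Finset.sum_congr rfl fun p _ => by rw [hsymm p w]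
    rw [this, hquad]
    simp [Matrix.one_apply_ne huw, hAuw]
  have hnz : ∀ u : S, v u ≠ 0 := by
    intro u h0
    obtain ⟨p, hpN, hadj⟩ := h3 u u.2
    have : A u p ≠ 0 := (hpat u p (G.ne_of_adj hadj)).mpr hadj
    have := congrArg (fun x : EuclideanSpace ℝ N => x ⟨p, hpN⟩) h0
    simp [hv] at this
    exact ‹A u p ≠ 0› this
  have hli : LinearIndependent ℝ v := by
    refine linearIndependent_of_ne_zero_of_inner_eq_zero hnz ?_
    intro u w huw
    refine hinner u w ?_
    exact fun h => huw (Subtype.ext h)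
  have := hli.fintype_card_le_finrank
  simpa [finrank_euclideanSpace] using this


/-- For a connected threshold graph with creation sequence blocks
`(0^{k_1}, 1^{t_1}, …, 0^{k_s}, 1^{t_s})`, if `k_i ≥ t_i + ⋯ + t_s` for some `2 ≤ i ≤ s`
(here `i` is zero-indexed, so `1 ≤ i`), then `q(G) ≥ 3`. -/
theorem stmt1 (s : ℕ) (hs : 1 ≤ s) (k t : Fin s → ℕ)
    (hk : ∀ i, 1 ≤ k i) (ht : ∀ i, 1 ≤ t i)
    (i : Fin s) (hi : 1 ≤ (i : ℕ))
    (hki : (∑ j ∈ Finset.Ici i, t j) ≤ k i) :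
    3 ≤ qGraph (thresholdOfList ((List.ofFn (fun j : Fin s =>
      List.replicate (k j) false ++ List.replicate (t j) true)).flatten)) := by
  classical
  set g : Fin s → List Bool :=
    (fun j : Fin s => List.replicate (k j) false ++ List.replicate (t j) true) with hg
  set L : List Bool := (List.ofFn g).flatten with hL
  have hs0 : (0 : ℕ) < s := hs
  have hilt : (i : ℕ) < (List.ofFn g).length := by
    rw [List.length_ofFn]; exact i.isLt
  have hdropI : (List.ofFn g).drop i = g i :: (List.ofFn g).drop (i + 1) := by
    rw [List.drop_eq_getElem_cons hilt]
    congr 1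
    simp
  set c : ℕ := ((List.ofFn g).take i).flatten.length with hc
  set rest : List Bool := ((List.ofFn g).drop ((i : ℕ) + 1)).flatten with hrest
  have hsplit : L = ((List.ofFn g).take i).flatten ++
      (List.replicate (k i) false ++ (List.replicate (t i) true ++ rest)) := by
    conv_lhs => rw [hL, ← List.take_append_drop (i : ℕ) (List.ofFn g)]
    rw [List.flatten_append, hdropI, List.flatten_cons]
    simp [hg, hrest, List.append_assoc]
  have hlen : L.length = c + (k i + (t i + rest.length)) := by
    rw [hsplit, List.length_append, List.length_append, List.length_append,
      List.length_replicate, List.length_replicate]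
  -- c is positive
  have hcons : List.ofFn g = g ⟨0, hs0⟩ :: (List.ofFn g).drop 1 := by
    conv_lhs => rw [← List.drop_zero (l := List.ofFn g)]
    rw [List.drop_eq_getElem_cons (by rw [List.length_ofFn]; exact hs0)]
    congr 1
    simp
  have hcpos : 1 ≤ c := by
    obtain ⟨i', hi'⟩ : ∃ i', (i : ℕ) = i' + 1 := ⟨(i : ℕ) - 1, by omega⟩
    rw [hc, hcons, hi', List.take_succ_cons, List.flatten_cons, List.length_append]
    have : (g ⟨0, hs0⟩).length = k ⟨0, hs0⟩ + t ⟨0, hs0⟩ := by simp [hg]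
    have hk0 := hk ⟨0, hs0⟩
    omega
  -- entries of L in the zero block i
  have hget : ∀ (p : ℕ) (hp : p < L.length), c ≤ p → p < c + k i →
      L[p] = false := by
    intro p hp h1 h2
    rw [List.getElem_of_eq hsplit hp]
    rw [List.getElem_append_right (by omega)]
    rw [List.getElem_append_left (by rw [List.length_replicate]; omega)]
    exact List.getElem_replicate ..
  -- entry at position 0
  have h0lt : 0 < L.length := by omega
  have hg0 : g ⟨0, hs0⟩ = List.replicate (k ⟨0, hs0⟩) false ++ List.replicate (t ⟨0, hs0⟩) true := by
    rw [hg]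
  have hget0 : L[0]'h0lt = false := by
    have hsplit0 : L = (List.replicate (k ⟨0, hs0⟩) false ++ List.replicate (t ⟨0, hs0⟩) true)
        ++ ((List.ofFn g).drop 1).flatten := by
      conv_lhs => rw [hL, hcons]
      rw [List.flatten_cons, hg0]
    rw [List.getElem_of_eq hsplit0 h0lt]
    rw [List.getElem_append_left (by rw [List.length_append, List.length_replicate]; have := hk ⟨0, hs0⟩; omega)]
    rw [List.getElem_append_left (by rw [List.length_replicate]; exact hk ⟨0, hs0⟩)]
    exact List.getElem_replicate ..
  -- entry at position d = c + k i
  have hdlt : c + k i < L.length := by have := ht i; omega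
  have hgetd : L[c + k i]'hdlt = true := by
    rw [List.getElem_of_eq hsplit hdlt]
    rw [List.getElem_append_right (by omega)]
    rw [List.getElem_append_right (by rw [List.length_replicate]; omega)]
    rw [List.getElem_append_left (by rw [List.length_replicate, List.length_replicate]; have := ht i; omega)]
    exact List.getElem_replicate ..
  -- counting trues after position d
  have hdropd : L.drop (c + k i) = List.replicate (t i) true ++ rest := by
    rw [hsplit, ← List.append_assoc]
    have hll : (((List.ofFn g).take i).flatten ++ List.replicate (k i) false).length
        = c + k i := by rw [List.length_append, List.length_replicate, hc]
    rw [← hll, List.drop_left]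
  have hcount : (L.drop (c + k i)).count true = ∑ j ∈ Finset.Ici i, t j := by
    rw [hdropd, List.count_append, List.count_replicate]
    have hflat := countDropFlatten s g t
      (fun j => by simp [hg, List.count_append, List.count_replicate])
      s ((i : ℕ) + 1) (by omega)
    rw [← hrest] at hflat
    rw [hflat]
    have hIci : Finset.Ici i
        = insert i (Finset.univ.filter (fun j : Fin s => (i : ℕ) + 1 ≤ (j : ℕ))) := by
      ext j
      simp only [Finset.mem_Ici, Finset.mem_insert, Finset.mem_filter, Finset.mem_univ,
        true_and, Fin.le_def, Fin.ext_iff]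
      omega
    rw [hIci, Finset.sum_insert (by simp)]
    simp
  -- the graph and the relevant vertex sets
  set G : SimpleGraph (Fin L.length) := thresholdOfList L with hG
  have hadj : ∀ p q : Fin L.length, G.Adj p q ↔
      (p ≠ q ∧ ((p < q ∧ L.get q = true) ∨ (q < p ∧ L.get p = true))) := fun p q => Iff.rfl
  have hgetc : ∀ u : Fin L.length, L.get u = L[(u : ℕ)]'u.isLt :=
    fun u => List.get_eq_getElem (l := L) (i := u)
  set Z : Finset (Fin L.length) := Finset.univ.image
    (fun r : Fin (k i) => (⟨c + (r : ℕ), by have := r.isLt; omega⟩ : Fin L.length)) with hZ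
  set p0 : Fin L.length := ⟨0, h0lt⟩ with hp0
  set S : Finset (Fin L.length) := insert p0 Z with hS
  set N : Finset (Fin L.length) :=
    Finset.univ.filter (fun p => c + k i ≤ (p : ℕ) ∧ L.get p = true) with hN
  have hZmem : ∀ u : Fin L.length, u ∈ Z ↔ (c ≤ (u : ℕ) ∧ (u : ℕ) < c + k i) := by
    intro u
    rw [hZ, Finset.mem_image]
    constructor
    · rintro ⟨r, _, rfl⟩
      have := r.isLt
      simp
      try omega
    · rintro ⟨h1, h2⟩
      refine ⟨⟨(u : ℕ) - c, by omega⟩, Finset.mem_univ _, Fin.ext ?_⟩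
      simp
      omega
  have hSfalse : ∀ u ∈ S, L.get u = false := by
    intro u hu
    rcases Finset.mem_insert.mp hu with rfl | hz
    · rw [hgetc]; exact hget0
    · obtain ⟨h1, h2⟩ := (hZmem u).mp hz
      rw [hgetc]; exact hget _ u.isLt h1 h2
  have h1S : ∀ u ∈ S, ∀ v ∈ S, u ≠ v → ¬ G.Adj u v := by
    intro u hu v hv huv hadjuv
    rcases ((hadj u v).mp hadjuv).2 with ⟨_, hT⟩ | ⟨_, hT⟩
    · rw [hSfalse v hv] at hT; exact Bool.false_ne_true hT
    · rw [hSfalse u hu] at hT; exact Bool.false_ne_true hT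
  have hkey2 : ∀ u ∈ Z, ∀ p, G.Adj u p → p ∈ N := by
    intro u hz p hadjp
    obtain ⟨hc1, hc2⟩ := (hZmem u).mp hz
    have hfu : L.get u = false := by
      rw [hgetc]; exact hget _ u.isLt hc1 hc2
    rcases ((hadj u p).mp hadjp).2 with ⟨hlt, hT⟩ | ⟨_, hT⟩
    · have hdp : c + k i ≤ (p : ℕ) := by
        by_contra hcon
        push_neg at hcon
        have hlt' : (u : ℕ) < (p : ℕ) := hlt
        have hpf : L[(p : ℕ)]'p.isLt = false := hget _ p.isLt (by omega) hcon
        rw [hgetc, hpf] at hT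
        exact Bool.false_ne_true hT
      exact Finset.mem_filter.mpr ⟨Finset.mem_univ _, hdp, hT⟩
    · rw [hfu] at hT
      exact absurd hT Bool.false_ne_true
  have h2S : ∀ u ∈ S, ∀ v ∈ S, u ≠ v → ∀ p, G.Adj u p → G.Adj v p → p ∈ N := by
    intro u hu v hv huv p hup hvp
    rcases Finset.mem_insert.mp hu with rfl | hz
    · rcases Finset.mem_insert.mp hv with rfl | hz'
      · exact absurd rfl huv
      · exact hkey2 v hz' p hvp
    · exact hkey2 u hz p hup
  have hpdN : (⟨c + k i, hdlt⟩ : Fin L.length) ∈ N := by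
    refine Finset.mem_filter.mpr ⟨Finset.mem_univ _, le_refl _, ?_⟩
    rw [hgetc]
    exact hgetd
  have h3S : ∀ u ∈ S, ∃ p ∈ N, G.Adj u p := by
    intro u hu
    refine ⟨⟨c + k i, hdlt⟩, hpdN, ?_⟩
    have hud : (u : ℕ) < c + k i := by
      rcases Finset.mem_insert.mp hu with rfl | hz
      · simp [hp0]; have := hk i; omega
      · exact ((hZmem u).mp hz).2
    refine (hadj _ _).mpr ⟨?_, Or.inl ⟨?_, ?_⟩⟩
    · intro h
      rw [Fin.ext_iff] at h
      simp at h
      omega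
    · exact hud
    · rw [hgetc]; exact hgetd
  have hZcard : Z.card = k i := by
    rw [hZ, Finset.card_image_of_injective _ ?_, Finset.card_univ, Fintype.card_fin]
    intro a b hab
    have := congrArg Fin.val hab
    simp at this
    exact Fin.ext this
  have hp0Z : p0 ∉ Z := by
    intro h
    have := ((hZmem p0).mp h).1
    rw [hp0] at this
    simp at this
    omega
  have hScard : S.card = k i + 1 := by
    rw [hS, Finset.card_insert_of_notMem hp0Z, hZcard]
  have hNcard : N.card = ∑ j ∈ Finset.Ici i, t j := by
    rw [hN, cardFilter L (c + k i) (by omega), hcount]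
  -- conclusion
  have hM : (Matrix.of (fun p q => if G.Adj p q then (1 : ℝ) else 0)) ∈ SMat G := by
    refine ⟨?_, ?_⟩
    · ext p q
      simp only [Matrix.transpose_apply, Matrix.of_apply]
      rw [SimpleGraph.adj_comm]
    · intro p q hpq
      by_cases h : G.Adj p q <;> simp [h]
  have hne : (numEig '' SMat G).Nonempty := ⟨_, Set.mem_image_of_mem numEig hM⟩
  have hbound : ∀ x ∈ numEig '' SMat G, 3 ≤ x := by
    rintro x ⟨A, ⟨hSym, hpat⟩, rfl⟩
    by_contra hcon
    push_neg at hcon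
    have h2 : (spectrum ℝ A).ncard ≤ 2 := by
      unfold numEig at hcon
      omega
    obtain ⟨a, b, hquad⟩ := eig_quad A hSym h2
    have hcard := gen_card G A hSym hpat a b hquad S N h1S h2S h3S
    rw [hScard, hNcard] at hcard
    omega
  exact hbound _ (Nat.sInf_mem hne)
end

section
/- Let G be the threshold graph with creation sequence (0^{k}, 1, 0, 1), where k ≥ 1. Then q(G) = 3. -/
open Matrix BigOperators

namespace Stmt6Aux

open Matrix Finset

noncomputable section

/-! ### The creation sequence list -/

abbrev LL (k : ℕ) : List Bool := List.replicate k false ++ [true, false, true]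

lemma length_LL (k : ℕ) : (LL k).length = k + 3 := by simp [LL]

lemma getElem_LL (k : ℕ) (m : ℕ) (h : m < (LL k).length) :
    (LL k)[m] = true ↔ (m = k ∨ m = k + 2) := by
  have h3 : m < k + 3 := by rw [length_LL] at h; exact h
  have hlr : (List.replicate k false).length = k := by simp
  rcases (show m < k ∨ m = k ∨ m = k+1 ∨ m = k+2 by omega) with hm | hm | hm | hm
  · rw [show (LL k)[m] = (List.replicate k false)[m]'(by simpa using hm) from
      List.getElem_append_left (by simpa using hm)]
    simp; omega
  · rw [List.getElem_append_right (by omega : (List.replicate k false).length ≤ m)]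
    subst hm
    simp
  · rw [List.getElem_append_right (by omega : (List.replicate k false).length ≤ m)]
    simp only [show m - (List.replicate k false).length = 1 from by omega]
    simp; omega
  · rw [List.getElem_append_right (by omega : (List.replicate k false).length ≤ m)]
    simp only [show m - (List.replicate k false).length = 2 from by omega]
    simp; omega

/-- The combinatorial adjacency condition. -/
def Cond (k a b : ℕ) : Prop :=
  a ≠ b ∧ ((a < b ∧ (b = k ∨ b = k + 2)) ∨ (b < a ∧ (a = k ∨ a = k + 2)))

lemma cond_iff (k a b : ℕ) : Cond k a b ↔
    (a ≠ b ∧ ((a < b ∧ (b = k ∨ b = k + 2)) ∨ (b < a ∧ (a = k ∨ a = k + 2)))) := Iff.rfl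

lemma adj_iff (k : ℕ) (i j : Fin (LL k).length) :
    (thresholdOfList (LL k)).Adj i j ↔ Cond k (↑i) (↑j) := by
  show (i ≠ j ∧ _) ↔ _
  rw [Cond]
  have h1 : (i ≠ j) ↔ ((i : ℕ) ≠ (j : ℕ)) := by simp [Fin.ext_iff]
  have h2 : ((LL k).get j = true) ↔ ((j:ℕ) = k ∨ (j:ℕ) = k + 2) := by
    rw [List.get_eq_getElem]; exact getElem_LL k j j.isLt
  have h3 : ((LL k).get i = true) ↔ ((i:ℕ) = k ∨ (i:ℕ) = k + 2) := by
    rw [List.get_eq_getElem]; exact getElem_LL k i i.isLt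
  rw [h1, h2, h3, Fin.lt_def, Fin.lt_def]

/-! ### General matrix lemmas -/

lemma vmv_mulVec {n : ℕ} (a b x : Fin n → ℝ) : vecMulVec a b *ᵥ x = (b ⬝ᵥ x) • a := by
  ext i
  simp only [Matrix.mulVec, Matrix.vecMulVec_apply, dotProduct, Pi.smul_apply,
    smul_eq_mul, Finset.mul_sum]
  rw [Finset.sum_congr rfl
    (fun j _ => by ring : ∀ j ∈ Finset.univ, a i * b j * x j = b j * x j * a i)]
  rw [← Finset.sum_mul]

lemma vmv_mul_vmv {n : ℕ} (a b c d : Fin n → ℝ) :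
    vecMulVec a b * vecMulVec c d = (b ⬝ᵥ c) • vecMulVec a d := by
  ext i j
  simp only [Matrix.mul_apply, Matrix.vecMulVec_apply, Matrix.smul_apply, smul_eq_mul,
    dotProduct, Finset.sum_mul]
  rw [Finset.sum_congr rfl
    (fun t _ => by ring : ∀ t ∈ Finset.univ, a i * b t * (c t * d j) = b t * c t * (a i * d j))]

lemma not_isUnit_of_null {n : ℕ} (M : Matrix (Fin n) (Fin n) ℝ) (x : Fin n → ℝ) (hx : x ≠ 0)
    (hMx : M *ᵥ x = 0) : ¬ IsUnit M := by
  intro h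
  have hinv : (↑h.unit⁻¹ : Matrix (Fin n) (Fin n) ℝ) * M = 1 := by
    simpa only [h.unit_spec] using h.unit.inv_mul
  have : x = 0 := by
    calc x = (1 : Matrix (Fin n) (Fin n) ℝ) *ᵥ x := (Matrix.one_mulVec x).symm
      _ = (↑h.unit⁻¹ : Matrix (Fin n) (Fin n) ℝ) *ᵥ (M *ᵥ x) := by
          rw [← hinv, ← Matrix.mulVec_mulVec]
      _ = 0 := by rw [hMx, Matrix.mulVec_zero]
  exact hx this

/-! ### Lower bound -/

lemma quad_ann {n : ℕ} (A : Matrix (Fin n) (Fin n) ℝ) (hH : A.IsHermitian) (l m : ℝ)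
    (h : ∀ i : Fin n, (hH.eigenvalues i - l) * (hH.eigenvalues i - m) = 0) :
    A * A - (l + m) • A + (l * m) • 1 = 0 := by
  have hspec := hH.spectral_theorem
  rw [Unitary.conjStarAlgAut_apply] at hspec
  set U : Matrix (Fin n) (Fin n) ℝ := ↑(hH.eigenvectorUnitary) with hU
  set D : Matrix (Fin n) (Fin n) ℝ := diagonal (RCLike.ofReal ∘ hH.eigenvalues) with hD
  have hUU : star U * U = 1 := by simp [hU]
  have hUU' : U * star U = 1 := by simp [hU]
  have hAA : A * A = U * (D * D) * star U := by
    rw [hspec]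
    calc U * D * star U * (U * D * star U) = U * D * (star U * U) * D * star U := by
          noncomm_ring
      _ = U * (D * D) * star U := by rw [hUU]; noncomm_ring
  have h1 : (1 : Matrix (Fin n) (Fin n) ℝ) = U * 1 * star U := by rw [mul_one, hUU']
  have key : A * A - (l + m) • A + (l * m) • 1 =
      U * (D * D - (l + m) • D + (l * m) • 1) * star U := by
    rw [hAA]
    nth_rewrite 1 [hspec]
    nth_rewrite 1 [h1]
    simp only [Matrix.mul_sub, Matrix.sub_mul, Matrix.mul_add, Matrix.add_mul,
      Matrix.mul_smul, Matrix.smul_mul]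
  rw [key]
  have hDzero : D * D - (l + m) • D + (l * m) • 1 = 0 := by
    rw [hD, Matrix.diagonal_mul_diagonal]
    ext i j
    by_cases hij : i = j
    · subst hij
      simp only [Matrix.add_apply, Matrix.sub_apply, Matrix.smul_apply, Matrix.diagonal_apply_eq,
        Matrix.one_apply_eq, Matrix.zero_apply, Function.comp_apply, RCLike.ofReal_real_eq_id,
        id_eq, smul_eq_mul, Pi.mul_apply]
      nlinarith [h i]
    · simp [Matrix.diagonal_apply_ne _ hij, Matrix.one_apply_ne hij]
  rw [hDzero]
  simp

lemma two_cover (S : Set ℝ) (hfin : S.Finite) (hne : S.Nonempty) (hcard : S.ncard ≤ 2) :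
    ∃ l m, ∀ x ∈ S, x = l ∨ x = m := by
  obtain ⟨l, hl⟩ := hne
  by_cases h : ∃ m ∈ S, m ≠ l
  · obtain ⟨m, hm, hml⟩ := h
    refine ⟨l, m, fun x hx => ?_⟩
    by_contra hxx
    push_neg at hxx
    have hsub : ({l, m, x} : Set ℝ) ⊆ S := by
      intro y hy; rcases hy with rfl | rfl | rfl; exacts [hl, hm, hx]
    have h3 : ({l, m, x} : Set ℝ).ncard = 3 := by
      rw [Set.ncard_insert_of_notMem (by simp [hml.symm, Ne.symm hxx.1]),
        Set.ncard_insert_of_notMem (by simp [Ne.symm hxx.2]), Set.ncard_singleton]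
    have := Set.ncard_le_ncard hsub hfin
    omega
  · push_neg at h
    exact ⟨l, l, fun x hx => Or.inl (h x hx)⟩

lemma lower_bound (k n : ℕ) (hk : 1 ≤ k) (hn : n = k + 3)
    (A : Matrix (Fin n) (Fin n) ℝ) (hsym : A.IsSymm)
    (hpat : ∀ i j : Fin n, i ≠ j → (A i j ≠ 0 ↔ Cond k ↑i ↑j)) :
    3 ≤ (spectrum ℝ A).ncard := by
  by_contra hcon
  push_neg at hcon
  have hH : A.IsHermitian := by
    rw [Matrix.IsHermitian]
    ext i j
    rw [Matrix.conjTranspose_apply, star_trivial]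
    have := congrFun (congrFun hsym i) j
    rwa [Matrix.transpose_apply] at this
  let i0 : Fin n := ⟨0, by omega⟩
  let is' : Fin n := ⟨k+1, by omega⟩
  let ih' : Fin n := ⟨k+2, by omega⟩
  have hne : (spectrum ℝ A).Nonempty :=
    ⟨hH.eigenvalues i0, hH.eigenvalues_mem_spectrum_real i0⟩
  obtain ⟨l, m, hcover⟩ := two_cover _ (A.finite_spectrum) hne (by omega)
  have hroots : ∀ i : Fin n, (hH.eigenvalues i - l) * (hH.eigenvalues i - m) = 0 := by
    intro i
    rcases hcover _ (hH.eigenvalues_mem_spectrum_real i) with h | h <;> rw [h] <;> ring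
  have hM := quad_ann A hH l m hroots
  have h0s : A i0 is' = 0 := by
    by_contra hne0
    have hc := (hpat i0 is' (by simp [i0, is', Fin.ext_iff])).mp hne0
    rcases hc with ⟨h1, h2 | h2⟩ <;> simp only [i0, is'] at h2 <;> omega
  have h0h : A i0 ih' ≠ 0 := by
    apply (hpat i0 ih' (by simp [i0, ih', Fin.ext_iff])).mpr
    refine ⟨by simp [i0, ih'], Or.inl ⟨by simp [i0, ih'], by simp [i0, ih']⟩⟩
  have hhs : A ih' is' ≠ 0 := by
    apply (hpat ih' is' (by simp [is', ih', Fin.ext_iff])).mpr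
    refine ⟨by simp [is', ih'], Or.inr ⟨by simp [is', ih'], Or.inr (by simp [ih'])⟩⟩
  have hAA : (A * A) i0 is' = A i0 ih' * A ih' is' := by
    rw [Matrix.mul_apply]
    apply Finset.sum_eq_single_of_mem ih' (Finset.mem_univ _)
    intro t _ htih
    by_cases hts : t = is'
    · subst hts; rw [h0s]; ring
    · have hzero : A t is' = 0 := by
        by_contra hne0
        have hc := (hpat t is' hts).mp hne0
        have htv : (t : ℕ) ≠ k + 2 := fun hv => htih (Fin.ext (by simpa [ih'] using hv))
        have htv2 : (t : ℕ) ≠ k + 1 := fun hv => hts (Fin.ext (by simpa [is'] using hv))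
        have htn : (t : ℕ) < k + 3 := by rw [← hn]; exact t.isLt
        rcases hc with ⟨h1, h2 | h2⟩ <;> simp only [is'] at h1 h2 <;> omega
      rw [hzero]; ring
  have hEntry := congrFun (congrFun hM i0) is'
  have hone : (1 : Matrix (Fin n) (Fin n) ℝ) i0 is' = 0 :=
    Matrix.one_apply_ne (by simp [i0, is', Fin.ext_iff])
  simp only [Matrix.add_apply, Matrix.sub_apply, Matrix.smul_apply, Matrix.zero_apply,
    smul_eq_mul, hone, h0s, hAA, mul_zero, add_zero, sub_zero] at hEntry
  exact (mul_ne_zero h0h hhs) hEntry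

/-! ### The construction -/

def sk (k : ℕ) : ℝ := Real.sqrt k
lemma sk_mul_sk (k : ℕ) : sk k * sk k = (k : ℝ) := Real.mul_self_sqrt (Nat.cast_nonneg k)
lemma sk_pos {k : ℕ} (hk : 1 ≤ k) : 0 < sk k := Real.sqrt_pos.mpr (by exact_mod_cast hk)

def vf (k : ℕ) (m : ℕ) : ℝ := if m < k then 3 else if m = k then sk k else 2 * sk k
def wf (k : ℕ) (m : ℕ) : ℝ := if m < k then 0 else if m = k then 4 * sk k else -sk k
def uf (k : ℕ) (m : ℕ) : ℝ :=
  if m < k then 3 else if m = k then -sk k else if m = k + 1 then 2 * sk k else -6 * sk k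
def qf (k : ℕ) (m : ℕ) : ℝ :=
  if m = 0 then 12 * k else if m < k then 0 else if m = k then -4 * sk k
  else if m = k + 1 then -17 * sk k else sk k

lemma vf_tw {k m : ℕ} (h : m < k) : vf k m = 3 := by simp [vf, h]
lemma vf_p (k : ℕ) : vf k k = sk k := by simp [vf]
lemma vf_s (k : ℕ) : vf k (k+1) = 2 * sk k := by simp [vf]
lemma vf_h (k : ℕ) : vf k (k+2) = 2 * sk k := by simp [vf]
lemma wf_tw {k m : ℕ} (h : m < k) : wf k m = 0 := by simp [wf, h]
lemma wf_p (k : ℕ) : wf k k = 4 * sk k := by simp [wf]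
lemma wf_s (k : ℕ) : wf k (k+1) = -sk k := by simp [wf]
lemma wf_h (k : ℕ) : wf k (k+2) = -sk k := by simp [wf]
lemma uf_tw {k m : ℕ} (h : m < k) : uf k m = 3 := by simp [uf, h]
lemma uf_p (k : ℕ) : uf k k = -sk k := by simp [uf]
lemma uf_s (k : ℕ) : uf k (k+1) = 2 * sk k := by simp [uf]
lemma uf_h (k : ℕ) : uf k (k+2) = -6 * sk k := by simp [uf]
lemma qf_z (k : ℕ) : qf k 0 = 12 * k := by simp [qf]
lemma qf_tw {k m : ℕ} (h0 : 0 < m) (h : m < k) : qf k m = 0 := by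
  have : m ≠ 0 := by omega
  simp [qf, this, h]
lemma qf_p {k : ℕ} (hk : 1 ≤ k) : qf k k = -4 * sk k := by
  have h1 : k ≠ 0 := by omega
  simp [qf, h1]
lemma qf_s {k : ℕ} (hk : 1 ≤ k) : qf k (k+1) = -17 * sk k := by
  have h1 : ¬(k + 1 = 0) := by omega
  have h2 : ¬(k + 1 < k) := by omega
  have h3 : ¬(k + 1 = k) := by omega
  simp [qf, h1, h2, h3]
lemma qf_h {k : ℕ} (hk : 1 ≤ k) : qf k (k+2) = sk k := by
  have h1 : ¬(k + 2 = 0) := by omega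
  have h2 : ¬(k + 2 < k) := by omega
  have h3 : ¬(k + 2 = k) := by omega
  have h4 : ¬(k + 2 = k + 1) := by omega
  simp [qf, h1, h2, h3, h4]

lemma sum_split (k : ℕ) (f : ℕ → ℝ) :
    ∑ m ∈ Finset.range (k+3), f m = (∑ m ∈ Finset.range k, f m) + f k + f (k+1) + f (k+2) := by
  rw [Finset.sum_range_succ, Finset.sum_range_succ, Finset.sum_range_succ]

lemma sum_tw_const (k : ℕ) {f : ℕ → ℝ} {c : ℝ} (h : ∀ m, m < k → f m = c) :
    ∑ m ∈ Finset.range k, f m = k * c := by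
  rw [Finset.sum_congr rfl (fun m hm => h m (Finset.mem_range.mp hm)), Finset.sum_const,
    Finset.card_range, nsmul_eq_mul]

lemma sum_tw_single {k : ℕ} (hk : 1 ≤ k) {f : ℕ → ℝ} (h : ∀ m, 0 < m → m < k → f m = 0) :
    ∑ m ∈ Finset.range k, f m = f 0 := by
  apply Finset.sum_eq_single_of_mem 0 (Finset.mem_range.mpr (by omega))
  intro b hb hb0
  exact h b (by omega) (Finset.mem_range.mp hb)

def vv (k n : ℕ) : Fin n → ℝ := fun i => vf k ↑i
def ww (k n : ℕ) : Fin n → ℝ := fun i => wf k ↑i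
def uu (k n : ℕ) : Fin n → ℝ := fun i => uf k ↑i
def qq (k n : ℕ) : Fin n → ℝ := fun i => qf k ↑i

lemma dot_eval {k n : ℕ} (hn : n = k + 3) (f g : ℕ → ℝ) :
    ((fun i : Fin n => f ↑i) ⬝ᵥ (fun i : Fin n => g ↑i)) =
      (∑ m ∈ Finset.range k, f m * g m) + f k * g k + f (k+1) * g (k+1) + f (k+2) * g (k+2) := by
  show (∑ i : Fin n, f ↑i * g ↑i) = _
  rw [Fin.sum_univ_eq_sum_range (fun m => f m * g m) n, hn, sum_split]

variable {k n : ℕ}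

lemma dot_vv (hn : n = k + 3) : vv k n ⬝ᵥ vv k n = 18 * k := by
  rw [show vv k n ⬝ᵥ vv k n = _ from dot_eval hn (vf k) (vf k),
    sum_tw_const k (c := 9) (fun m hm => by rw [vf_tw hm]; norm_num), vf_p, vf_s, vf_h]
  linear_combination (9 : ℝ) * sk_mul_sk k

lemma dot_ww (hn : n = k + 3) : ww k n ⬝ᵥ ww k n = 18 * k := by
  rw [show ww k n ⬝ᵥ ww k n = _ from dot_eval hn (wf k) (wf k),
    sum_tw_const k (c := 0) (fun m hm => by rw [wf_tw hm]; norm_num), wf_p, wf_s, wf_h]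
  linear_combination (18 : ℝ) * sk_mul_sk k

lemma dot_uu (hn : n = k + 3) : uu k n ⬝ᵥ uu k n = 50 * k := by
  rw [show uu k n ⬝ᵥ uu k n = _ from dot_eval hn (uf k) (uf k),
    sum_tw_const k (c := 9) (fun m hm => by rw [uf_tw hm]; norm_num), uf_p, uf_s, uf_h]
  linear_combination (41 : ℝ) * sk_mul_sk k

lemma dot_vw (hn : n = k + 3) : vv k n ⬝ᵥ ww k n = 0 := by
  rw [show vv k n ⬝ᵥ ww k n = _ from dot_eval hn (vf k) (wf k),
    sum_tw_const k (c := 0) (fun m hm => by rw [vf_tw hm, wf_tw hm]; norm_num),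
    vf_p, vf_s, vf_h, wf_p, wf_s, wf_h]
  linear_combination (0 : ℝ) * sk_mul_sk k

lemma dot_vu (hn : n = k + 3) : vv k n ⬝ᵥ uu k n = 0 := by
  rw [show vv k n ⬝ᵥ uu k n = _ from dot_eval hn (vf k) (uf k),
    sum_tw_const k (c := 9) (fun m hm => by rw [vf_tw hm, uf_tw hm]; norm_num),
    vf_p, vf_s, vf_h, uf_p, uf_s, uf_h]
  linear_combination (-9 : ℝ) * sk_mul_sk k

lemma dot_wu (hn : n = k + 3) : ww k n ⬝ᵥ uu k n = 0 := by
  rw [show ww k n ⬝ᵥ uu k n = _ from dot_eval hn (wf k) (uf k),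
    sum_tw_const k (c := 0) (fun m hm => by rw [wf_tw hm, uf_tw hm]; norm_num),
    wf_p, wf_s, wf_h, uf_p, uf_s, uf_h]
  linear_combination (0 : ℝ) * sk_mul_sk k

lemma dot_qv (hk : 1 ≤ k) (hn : n = k + 3) : qq k n ⬝ᵥ vv k n = 0 := by
  rw [show qq k n ⬝ᵥ vv k n = _ from dot_eval hn (qf k) (vf k),
    sum_tw_single hk (fun m h0 hm => by rw [qf_tw h0 hm]; ring),
    qf_z, vf_tw hk, qf_p hk, qf_s hk, qf_h hk, vf_p, vf_s, vf_h]
  linear_combination (-36 : ℝ) * sk_mul_sk k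

lemma dot_qw (hk : 1 ≤ k) (hn : n = k + 3) : qq k n ⬝ᵥ ww k n = 0 := by
  rw [show qq k n ⬝ᵥ ww k n = _ from dot_eval hn (qf k) (wf k),
    sum_tw_single hk (fun m h0 hm => by rw [qf_tw h0 hm]; ring),
    qf_z, wf_tw hk, qf_p hk, qf_s hk, qf_h hk, wf_p, wf_s, wf_h]
  linear_combination (0 : ℝ) * sk_mul_sk k

lemma dot_qu (hk : 1 ≤ k) (hn : n = k + 3) : qq k n ⬝ᵥ uu k n = 0 := by
  rw [show qq k n ⬝ᵥ uu k n = _ from dot_eval hn (qf k) (uf k),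
    sum_tw_single hk (fun m h0 hm => by rw [qf_tw h0 hm]; ring),
    qf_z, uf_tw hk, qf_p hk, qf_s hk, qf_h hk, uf_p, uf_s, uf_h]
  linear_combination (-36 : ℝ) * sk_mul_sk k

/-- The witness matrix. -/
def AA (k n : ℕ) : Matrix (Fin n) (Fin n) ℝ :=
  vecMulVec (vv k n) (vv k n) + vecMulVec (ww k n) (ww k n) - vecMulVec (uu k n) (uu k n)

lemma AA_apply (i j : Fin n) :
    AA k n i j = vf k ↑i * vf k ↑j + wf k ↑i * wf k ↑j - uf k ↑i * uf k ↑j := by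
  simp [AA, Matrix.add_apply, Matrix.sub_apply, Matrix.vecMulVec_apply, vv, ww, uu]

lemma AA_symm : (AA k n).IsSymm := by
  rw [Matrix.IsSymm]
  ext i j
  rw [Matrix.transpose_apply, AA_apply, AA_apply]
  ring

lemma AA_pattern (hk : 1 ≤ k) (hn : n = k + 3) (i j : Fin n) (hij : i ≠ j) :
    (AA k n i j ≠ 0 ↔ Cond k ↑i ↑j) := by
  have hsp := sk_pos hk
  have hss := sk_mul_sk k
  have hps : 0 < sk k * sk k := mul_pos hsp hsp
  have hijv : (↑i : ℕ) ≠ ↑j := fun h => hij (Fin.ext h)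
  have hiv : (↑i : ℕ) < k + 3 := by rw [← hn]; exact i.isLt
  have hjv : (↑j : ℕ) < k + 3 := by rw [← hn]; exact j.isLt
  rw [AA_apply]
  rcases (show (↑i:ℕ) < k ∨ ↑i = k ∨ ↑i = k+1 ∨ ↑i = k+2 by omega) with hi | hi | hi | hi <;>
    rcases (show (↑j:ℕ) < k ∨ ↑j = k ∨ ↑j = k+1 ∨ ↑j = k+2 by omega) with hj | hj | hj | hj
  · rw [vf_tw hi, vf_tw hj, wf_tw hi, wf_tw hj, uf_tw hi, uf_tw hj]
    exact iff_of_false (by norm_num) (by rw [cond_iff]; omega)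
  · rw [vf_tw hi, wf_tw hi, uf_tw hi, hj, vf_p, wf_p, uf_p]
    exact iff_of_true (by intro h; nlinarith) (by rw [cond_iff]; omega)
  · rw [vf_tw hi, wf_tw hi, uf_tw hi, hj, vf_s, wf_s, uf_s]
    exact iff_of_false (by intro h; apply h; ring) (by rw [cond_iff]; omega)
  · rw [vf_tw hi, wf_tw hi, uf_tw hi, hj, vf_h, wf_h, uf_h]
    exact iff_of_true (by intro h; nlinarith) (by rw [cond_iff]; omega)
  · rw [vf_tw hj, wf_tw hj, uf_tw hj, hi, vf_p, wf_p, uf_p]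
    exact iff_of_true (by intro h; nlinarith) (by rw [cond_iff]; omega)
  · exact absurd (by omega : (↑i:ℕ) = ↑j) hijv
  · rw [hi, hj, vf_p, wf_p, uf_p, vf_s, wf_s, uf_s]
    exact iff_of_false (by intro h; apply h; ring) (by rw [cond_iff]; omega)
  · rw [hi, hj, vf_p, wf_p, uf_p, vf_h, wf_h, uf_h]
    exact iff_of_true (by intro h; nlinarith) (by rw [cond_iff]; omega)
  · rw [vf_tw hj, wf_tw hj, uf_tw hj, hi, vf_s, wf_s, uf_s]
    exact iff_of_false (by intro h; apply h; ring) (by rw [cond_iff]; omega)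
  · rw [hi, hj, vf_s, wf_s, uf_s, vf_p, wf_p, uf_p]
    exact iff_of_false (by intro h; apply h; ring) (by rw [cond_iff]; omega)
  · exact absurd (by omega : (↑i:ℕ) = ↑j) hijv
  · rw [hi, hj, vf_s, wf_s, uf_s, vf_h, wf_h, uf_h]
    exact iff_of_true (by intro h; nlinarith) (by rw [cond_iff]; omega)
  · rw [vf_tw hj, wf_tw hj, uf_tw hj, hi, vf_h, wf_h, uf_h]
    exact iff_of_true (by intro h; nlinarith) (by rw [cond_iff]; omega)
  · rw [hi, hj, vf_h, wf_h, uf_h, vf_p, wf_p, uf_p]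
    exact iff_of_true (by intro h; nlinarith) (by rw [cond_iff]; omega)
  · rw [hi, hj, vf_h, wf_h, uf_h, vf_s, wf_s, uf_s]
    exact iff_of_true (by intro h; nlinarith) (by rw [cond_iff]; omega)
  · exact absurd (by omega : (↑i:ℕ) = ↑j) hijv

lemma AA_cubic (hk : 1 ≤ k) (hn : n = k + 3) :
    AA k n * AA k n * AA k n + (32 * (k:ℝ)) • (AA k n * AA k n)
      - (900 * (k:ℝ)^2) • AA k n = 0 := by
  have hvv := dot_vv hn; have hww := dot_ww hn; have huu := dot_uu hn
  have hvw := dot_vw hn; have hvu := dot_vu hn; have hwu := dot_wu hn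
  have hwv : ww k n ⬝ᵥ vv k n = 0 := by rwa [dotProduct_comm] at hvw
  have huv : uu k n ⬝ᵥ vv k n = 0 := by rwa [dotProduct_comm] at hvu
  have huw : uu k n ⬝ᵥ ww k n = 0 := by rwa [dotProduct_comm] at hwu
  have h2 : AA k n * AA k n = (18*(k:ℝ)) • vecMulVec (vv k n) (vv k n)
      + (18*(k:ℝ)) • vecMulVec (ww k n) (ww k n)
      + (50*(k:ℝ)) • vecMulVec (uu k n) (uu k n) := by
    simp only [AA, Matrix.add_mul, Matrix.sub_mul, Matrix.mul_add, Matrix.mul_sub,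
      vmv_mul_vmv, hvv, hww, huu, hvw, hvu, hwu, hwv, huv, huw, zero_smul]
    module
  have h3 : AA k n * AA k n * AA k n =
      (324*(k:ℝ)^2) • vecMulVec (vv k n) (vv k n)
        + (324*(k:ℝ)^2) • vecMulVec (ww k n) (ww k n)
        - (2500*(k:ℝ)^2) • vecMulVec (uu k n) (uu k n) := by
    rw [h2]
    simp only [AA, Matrix.add_mul, Matrix.sub_mul, Matrix.mul_add, Matrix.mul_sub,
      Matrix.smul_mul, vmv_mul_vmv, hvv, hww, huu, hvw, hvu, hwu, hwv, huv, huw, zero_smul,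
      smul_zero, smul_smul]
    module
  rw [h3, h2]
  simp only [AA]
  module

lemma AA_mulVec_v (hk : 1 ≤ k) (hn : n = k + 3) :
    AA k n *ᵥ vv k n = (18*(k:ℝ)) • vv k n := by
  have hwv : ww k n ⬝ᵥ vv k n = 0 := by rw [dotProduct_comm]; exact dot_vw hn
  have huv : uu k n ⬝ᵥ vv k n = 0 := by rw [dotProduct_comm]; exact dot_vu hn
  simp only [AA, Matrix.add_mulVec, Matrix.sub_mulVec, vmv_mulVec, dot_vv hn, hwv, huv,
    zero_smul]
  module

lemma AA_mulVec_u (hk : 1 ≤ k) (hn : n = k + 3) :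
    AA k n *ᵥ uu k n = (-(50*(k:ℝ))) • uu k n := by
  have hvu := dot_vu hn
  have hwu := dot_wu hn
  simp only [AA, Matrix.add_mulVec, Matrix.sub_mulVec, vmv_mulVec, dot_uu hn, hvu, hwu,
    zero_smul]
  module

lemma AA_mulVec_q (hk : 1 ≤ k) (hn : n = k + 3) : AA k n *ᵥ qq k n = 0 := by
  have h1 : vv k n ⬝ᵥ qq k n = 0 := by rw [dotProduct_comm]; exact dot_qv hk hn
  have h2 : ww k n ⬝ᵥ qq k n = 0 := by rw [dotProduct_comm]; exact dot_qw hk hn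
  have h3 : uu k n ⬝ᵥ qq k n = 0 := by rw [dotProduct_comm]; exact dot_qu hk hn
  simp only [AA, Matrix.add_mulVec, Matrix.sub_mulVec, vmv_mulVec, h1, h2, h3, zero_smul]
  module

lemma spec_subset (hk : 1 ≤ k) (hn : n = k + 3) :
    spectrum ℝ (AA k n) ⊆ {0, 18*(k:ℝ), -(50*(k:ℝ))} := by
  have hcube := AA_cubic hk hn
  intro θ hθ
  by_contra hnot
  simp only [Set.mem_insert_iff, Set.mem_singleton_iff, not_or] at hnot
  obtain ⟨h0, h18, h50⟩ := hnot
  have hp : θ * (θ - 18*(k:ℝ)) * (θ + 50*(k:ℝ)) ≠ 0 :=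
    mul_ne_zero (mul_ne_zero h0 (sub_ne_zero.mpr h18))
      (by intro h; exact h50 (by linarith [h]))
  set p : ℝ := θ * (θ - 18*(k:ℝ)) * (θ + 50*(k:ℝ)) with hpdef
  have h3 : AA k n * AA k n * AA k n
      = (900*(k:ℝ)^2) • AA k n - (32*(k:ℝ)) • (AA k n * AA k n) :=
    eq_sub_of_add_eq (eq_of_sub_eq_zero hcube)
  set B : Matrix (Fin n) (Fin n) ℝ :=
    (1/p) • (AA k n * AA k n) + ((θ + 32*(k:ℝ))/p) • AA k n + (1/θ) • 1 with hBdef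
  have hunit : (θ • (1 : Matrix (Fin n) (Fin n) ℝ) - AA k n) * B = 1 := by
    rw [hBdef]
    simp only [Matrix.mul_add, Matrix.sub_mul, Matrix.smul_mul, Matrix.mul_smul,
      mul_smul_comm, smul_mul_assoc, one_mul, mul_one, smul_smul, ← mul_assoc]
    rw [h3]
    match_scalars <;> field_simp <;> ring
  have hU : IsUnit (θ • (1 : Matrix (Fin n) (Fin n) ℝ) - AA k n) := by
    letI := invertibleOfRightInverse _ _ hunit
    exact isUnit_of_invertible _
  rw [spectrum.mem_iff, Algebra.algebraMap_eq_smul_one] at hθ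
  exact hθ hU

lemma spec_mem (hk : 1 ≤ k) (hn : n = k + 3) (θ : ℝ) (x : Fin n → ℝ) (hx : x ≠ 0)
    (hAx : AA k n *ᵥ x = θ • x) : θ ∈ spectrum ℝ (AA k n) := by
  rw [spectrum.mem_iff, Algebra.algebraMap_eq_smul_one]
  apply not_isUnit_of_null _ x hx
  rw [Matrix.sub_mulVec, Matrix.smul_mulVec, Matrix.one_mulVec, hAx, sub_self]

lemma spec_eq (hk : 1 ≤ k) (hn : n = k + 3) :
    spectrum ℝ (AA k n) = {0, 18*(k:ℝ), -(50*(k:ℝ))} := by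
  apply Set.Subset.antisymm (spec_subset hk hn)
  have hkpos : (0:ℝ) < k := by exact_mod_cast hk
  intro θ hθ
  rcases hθ with rfl | rfl | rfl
  · apply spec_mem hk hn 0 (qq k n)
    · intro h
      have h0 := congrFun h (⟨0, by omega⟩ : Fin n)
      rw [show qq k n (⟨0, by omega⟩ : Fin n) = 12 * k from qf_z k] at h0
      simp only [Pi.zero_apply] at h0
      nlinarith
    · rw [AA_mulVec_q hk hn, zero_smul]
  · apply spec_mem hk hn _ (vv k n)
    · intro h
      have h0 := congrFun h (⟨0, by omega⟩ : Fin n)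
      rw [show vv k n (⟨0, by omega⟩ : Fin n) = 3 from vf_tw hk] at h0
      simp only [Pi.zero_apply] at h0
      nlinarith
    · exact AA_mulVec_v hk hn
  · apply spec_mem hk hn _ (uu k n)
    · intro h
      have h0 := congrFun h (⟨0, by omega⟩ : Fin n)
      rw [show uu k n (⟨0, by omega⟩ : Fin n) = 3 from uf_tw hk] at h0
      simp only [Pi.zero_apply] at h0
      nlinarith
    · exact AA_mulVec_u hk hn

lemma spec_ncard (hk : 1 ≤ k) (hn : n = k + 3) : (spectrum ℝ (AA k n)).ncard = 3 := by
  have hkpos : (1:ℝ) ≤ k := by exact_mod_cast hk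
  rw [spec_eq hk hn]
  rw [Set.ncard_insert_of_notMem (by
      simp only [Set.mem_insert_iff, Set.mem_singleton_iff, not_or]
      constructor <;> intro h <;> nlinarith),
    Set.ncard_pair (by intro h; nlinarith)]

end

end Stmt6Aux

open Stmt6Aux in
/-- For `G ≅ (0^{k}, 1, 0, 1)` with `k ≥ 1`, `q(G) = 3`. -/
theorem stmt6 (k : ℕ) (hk : 1 ≤ k) :
    qGraph (thresholdOfList (List.replicate k false ++ [true, false, true])) = 3 := by
  have hn : (LL k).length = k + 3 := length_LL k
  set n : ℕ := (LL k).length with hndef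
  have hmemA : AA k n ∈ SMat (thresholdOfList (LL k)) := by
    refine ⟨AA_symm, fun i j hij => ?_⟩
    rw [adj_iff k i j]
    exact AA_pattern hk hn i j hij
  have himg : (3 : ℕ) ∈ numEig '' SMat (thresholdOfList (LL k)) := by
    refine ⟨AA k n, hmemA, ?_⟩
    show (spectrum ℝ (AA k n)).ncard = 3
    exact spec_ncard hk hn
  apply le_antisymm
  · exact Nat.sInf_le himg
  · apply le_csInf ⟨3, himg⟩
    rintro b ⟨A', ⟨hs, hp⟩, rfl⟩
    apply lower_bound k n hk hn A' hs
    intro i j hij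
    rw [← adj_iff k i j]
    exact hp i j hij
end

section
/- Let G be the threshold graph with creation sequence (0, 1, 0^{k}, 1), where k ≥ 1. Then q(G) = 3. -/
open Matrix BigOperators

namespace Stmt7Aux

/-! ### Generic matrix lemmas -/

lemma vecMulVec_mul_vecMulVec {N : ℕ} (a b c d : Fin N → ℝ) :
    vecMulVec a b * vecMulVec c d = (∑ i, b i * c i) • vecMulVec a d := by
  ext i j
  simp only [Matrix.mul_apply, Matrix.vecMulVec_apply, Matrix.smul_apply, smul_eq_mul]
  rw [Finset.sum_mul]
  exact Finset.sum_congr rfl fun m _ => by ring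

lemma vecMulVec_mulVec {N : ℕ} (a b x : Fin N → ℝ) :
    vecMulVec a b *ᵥ x = (∑ i, b i * x i) • a := by
  ext i
  simp only [Matrix.mulVec, dotProduct, Matrix.vecMulVec_apply, Pi.smul_apply,
    smul_eq_mul]
  rw [Finset.sum_mul]
  exact Finset.sum_congr rfl fun m _ => by ring

lemma mem_spectrum_of_mulVec {N : ℕ} (A : Matrix (Fin N) (Fin N) ℝ) (lam : ℝ)
    (v : Fin N → ℝ) (hv : v ≠ 0) (h : A *ᵥ v = lam • v) : lam ∈ spectrum ℝ A := by
  rw [spectrum.mem_iff]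
  intro hu
  rw [Matrix.isUnit_iff_isUnit_det, isUnit_iff_ne_zero] at hu
  apply hu
  rw [← Matrix.exists_mulVec_eq_zero_iff]
  refine ⟨v, hv, ?_⟩
  rw [Matrix.sub_mulVec, h, Algebra.algebraMap_eq_smul_one, Matrix.smul_mulVec,
    Matrix.one_mulVec, sub_self]

lemma not_mem_spectrum_of_cube {N : ℕ} (A : Matrix (Fin N) (Fin N) ℝ)
    (h3 : A * A * A = (4 : ℝ) • A) (lam : ℝ) (hlam : lam ^ 3 - 4 * lam ≠ 0) :
    lam ∉ spectrum ℝ A := by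
  rw [spectrum.mem_iff, not_not]
  have key : (algebraMap ℝ (Matrix (Fin N) (Fin N) ℝ) lam - A) *
      (A * A + lam • A + (lam ^ 2 - 4) • 1) = (lam ^ 3 - 4 * lam) • 1 := by
    rw [Algebra.algebraMap_eq_smul_one]
    have h3' : A * (A * A) = (4 : ℝ) • A := by rw [← mul_assoc]; exact h3
    simp only [sub_mul, Matrix.smul_mul, one_mul, mul_add, Matrix.mul_smul, mul_one, h3']
    module
  have hmul : (algebraMap ℝ (Matrix (Fin N) (Fin N) ℝ) lam - A) *
      ((lam ^ 3 - 4 * lam)⁻¹ • (A * A + lam • A + (lam ^ 2 - 4) • 1)) = 1 := by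
    rw [Matrix.mul_smul, key, smul_smul, inv_mul_cancel₀ hlam, one_smul]
  exact ⟨⟨_, _, hmul, mul_eq_one_comm.mp hmul⟩, rfl⟩

lemma quad_eq_zero {N : ℕ} (A : Matrix (Fin N) (Fin N) ℝ) (hA : A.IsHermitian)
    (a b : ℝ) (hspec : spectrum ℝ A ⊆ {a, b}) :
    (A - a • 1) * (A - b • 1) = 0 := by
  have heig : ∀ i, hA.eigenvalues i = a ∨ hA.eigenvalues i = b := by
    intro i
    have := hspec (hA.eigenvalues_mem_spectrum_real i)
    simpa using this
  set U : Matrix (Fin N) (Fin N) ℝ := (hA.eigenvectorUnitary : Matrix (Fin N) (Fin N) ℝ) with hUdef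
  have hU1 : U * star U = 1 := Matrix.mem_unitaryGroup_iff.mp hA.eigenvectorUnitary.2
  have hU2 : star U * U = 1 := Matrix.mem_unitaryGroup_iff'.mp hA.eigenvectorUnitary.2
  have hsp : A = U * Matrix.diagonal hA.eigenvalues * star U := by
    have := hA.spectral_theorem
    rwa [RCLike.ofReal_real_eq_id, Function.id_comp] at this
  have key : ∀ c : ℝ, A - c • 1 = U * Matrix.diagonal (fun i => hA.eigenvalues i - c) * star U := by
    intro c
    have hc : U * (c • (1 : Matrix (Fin N) (Fin N) ℝ)) * star U = c • 1 := by
      rw [Matrix.mul_smul, mul_one, Matrix.smul_mul, hU1]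
    calc A - c • 1 = U * Matrix.diagonal hA.eigenvalues * star U
          - U * (c • (1 : Matrix (Fin N) (Fin N) ℝ)) * star U := by rw [← hsp, hc]
      _ = U * (Matrix.diagonal hA.eigenvalues - c • 1) * star U := by
          rw [Matrix.mul_sub, Matrix.sub_mul]
      _ = U * Matrix.diagonal (fun i => hA.eigenvalues i - c) * star U := by
          rw [Matrix.smul_one_eq_diagonal, Matrix.diagonal_sub]
  rw [key a, key b]
  have hmid : Matrix.diagonal (fun i => hA.eigenvalues i - a) *
      Matrix.diagonal (fun i => hA.eigenvalues i - b) = 0 := by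
    rw [Matrix.diagonal_mul_diagonal]
    have : (fun i => (hA.eigenvalues i - a) * (hA.eigenvalues i - b)) = fun _ => (0 : ℝ) := by
      funext i
      rcases heig i with h | h <;> rw [h] <;> ring
    rw [this, Matrix.diagonal_zero]
  set D1 := Matrix.diagonal (fun i => hA.eigenvalues i - a) with hD1
  set D2 := Matrix.diagonal (fun i => hA.eigenvalues i - b) with hD2
  calc U * D1 * star U * (U * D2 * star U)
      = U * (D1 * ((star U * U) * (D2 * star U))) := by simp only [mul_assoc]
    _ = U * (D1 * (D2 * star U)) := by rw [hU2, one_mul]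
    _ = U * (D1 * D2 * star U) := by rw [mul_assoc]
    _ = 0 := by rw [hmid, zero_mul, mul_zero]

/-! ### The explicit vectors -/

noncomputable def rr (k : ℕ) : ℝ := Real.sqrt (2 / k)

lemma rr_pos {k : ℕ} (hk : 1 ≤ k) : 0 < rr k := by
  have hk' : (0 : ℝ) < k := by exact_mod_cast hk
  exact Real.sqrt_pos.mpr (by positivity)

lemma rr_sq {k : ℕ} (hk : 1 ≤ k) : rr k * rr k = 2 / k := by
  have hk' : (0 : ℝ) < k := by exact_mod_cast hk
  exact Real.mul_self_sqrt (by positivity)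

def gv : ℕ → ℝ := fun j => if j = 0 then 1 else if j = 1 then -1 else 0

def ge (k : ℕ) : ℕ → ℝ := fun j => if j = k + 2 then 1 else 0

noncomputable def gw (k : ℕ) : ℕ → ℝ :=
  fun j => if j ≤ 1 then 1 else if j = k + 2 then 0 else rr k

noncomputable def gx (k : ℕ) : ℕ → ℝ :=
  fun j => if j ≤ 1 then -1 else if j = k + 2 then 0 else rr k

lemma gv_zero : gv 0 = 1 := rfl
lemma gv_one : gv 1 = -1 := rfl
lemma gv_mid {j : ℕ} (h : 2 ≤ j) : gv j = 0 := by
  rw [gv, if_neg (by omega), if_neg (by omega)]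
lemma ge_low {k j : ℕ} (h : j < k + 2) : ge k j = 0 := by
  rw [ge, if_neg (by omega)]
lemma ge_last {k : ℕ} : ge k (k + 2) = 1 := by rw [ge, if_pos rfl]
lemma gw_low {k j : ℕ} (h : j ≤ 1) : gw k j = 1 := by rw [gw, if_pos h]
lemma gw_mid {k j : ℕ} (h2 : 2 ≤ j) (h : j < k + 2) : gw k j = rr k := by
  rw [gw, if_neg (by omega), if_neg (by omega)]
lemma gw_last {k : ℕ} : gw k (k + 2) = 0 := by
  rw [gw, if_neg (by omega), if_pos rfl]
lemma gx_low {k j : ℕ} (h : j ≤ 1) : gx k j = -1 := by rw [gx, if_pos h]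
lemma gx_mid {k j : ℕ} (h2 : 2 ≤ j) (h : j < k + 2) : gx k j = rr k := by
  rw [gx, if_neg (by omega), if_neg (by omega)]
lemma gx_last {k : ℕ} : gx k (k + 2) = 0 := by
  rw [gx, if_neg (by omega), if_pos rfl]

/-! ### Sums -/

lemma sum_fin_eq (k : ℕ) (f : ℕ → ℝ) (m : ℝ) (hm : ∀ j, 2 ≤ j → j < k + 2 → f j = m) :
    ∑ i : Fin (k + 3), f i.val = f 0 + f 1 + k * m + f (k + 2) := by
  rw [Fin.sum_univ_eq_sum_range f (k + 3), Finset.sum_range_succ]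
  congr 1
  rw [Finset.range_eq_Ico, ← Finset.sum_Ico_consecutive f (Nat.zero_le 2) (by omega : 2 ≤ k + 2)]
  have h1 : ∑ j ∈ Finset.Ico 0 2, f j = f 0 + f 1 := by
    rw [← Finset.range_eq_Ico]
    rw [Finset.sum_range_succ, Finset.sum_range_one]
  have h2 : ∑ j ∈ Finset.Ico 2 (k + 2), f j = k * m := by
    rw [Finset.sum_congr rfl fun j hj => hm j (Finset.mem_Ico.mp hj).1 (Finset.mem_Ico.mp hj).2,
      Finset.sum_const, Nat.card_Ico]
    simp [nsmul_eq_mul]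
  rw [h1, h2]

section Dots
variable {k : ℕ} (hk : 1 ≤ k)

lemma dvv : ∑ i : Fin (k + 3), gv i.val * gv i.val = 2 := by
  rw [sum_fin_eq k (fun j => gv j * gv j) 0 (fun j h2 hl => by simp only [gv_mid h2, mul_zero])]
  rw [gv_zero, gv_one, gv_mid (by omega : 2 ≤ k + 2)]
  ring

lemma dvw : ∑ i : Fin (k + 3), gv i.val * gw k i.val = 0 := by
  rw [sum_fin_eq k (fun j => gv j * gw k j) 0 (fun j h2 hl => by simp only [gv_mid h2, zero_mul])]
  rw [gv_zero, gv_one, gv_mid (by omega : 2 ≤ k + 2), gw_low (by norm_num), gw_low le_rfl]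
  ring

lemma dwv : ∑ i : Fin (k + 3), gw k i.val * gv i.val = 0 := by
  rw [show (fun i : Fin (k+3) => gw k i.val * gv i.val) = fun i : Fin (k+3) => gv i.val * gw k i.val from funext fun i => mul_comm _ _] at *
  exact dvw

lemma dve : ∑ i : Fin (k + 3), gv i.val * ge k i.val = 0 := by
  rw [sum_fin_eq k (fun j => gv j * ge k j) 0 (fun j h2 hl => by simp only [gv_mid h2, zero_mul])]
  rw [gv_zero, gv_one, gv_mid (by omega : 2 ≤ k + 2), ge_low (by omega), ge_low (by omega)]
  ring

lemma dev : ∑ i : Fin (k + 3), ge k i.val * gv i.val = 0 := by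
  rw [show (fun i : Fin (k+3) => ge k i.val * gv i.val) = fun i : Fin (k+3) => gv i.val * ge k i.val from funext fun i => mul_comm _ _]
  exact dve

lemma dvx : ∑ i : Fin (k + 3), gv i.val * gx k i.val = 0 := by
  rw [sum_fin_eq k (fun j => gv j * gx k j) 0 (fun j h2 hl => by simp only [gv_mid h2, zero_mul])]
  rw [gv_zero, gv_one, gv_mid (by omega : 2 ≤ k + 2), gx_low (by norm_num), gx_low le_rfl]
  ring

lemma dee : ∑ i : Fin (k + 3), ge k i.val * ge k i.val = 1 := by
  rw [sum_fin_eq k (fun j => ge k j * ge k j) 0 (fun j h2 hl => by simp only [ge_low hl, zero_mul])]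
  rw [ge_last, ge_low (by omega : (0:ℕ) < k + 2), ge_low (by omega : (1:ℕ) < k + 2)]
  ring

lemma dew : ∑ i : Fin (k + 3), ge k i.val * gw k i.val = 0 := by
  rw [sum_fin_eq k (fun j => ge k j * gw k j) 0 (fun j h2 hl => by simp only [ge_low hl, zero_mul])]
  rw [ge_last, gw_last, ge_low (by omega : (0:ℕ) < k + 2), ge_low (by omega : (1:ℕ) < k + 2)]
  ring

lemma dwe : ∑ i : Fin (k + 3), gw k i.val * ge k i.val = 0 := by
  rw [show (fun i : Fin (k+3) => gw k i.val * ge k i.val) = fun i : Fin (k+3) => ge k i.val * gw k i.val from funext fun i => mul_comm _ _]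
  exact dew

lemma dex : ∑ i : Fin (k + 3), ge k i.val * gx k i.val = 0 := by
  rw [sum_fin_eq k (fun j => ge k j * gx k j) 0 (fun j h2 hl => by simp only [ge_low hl, zero_mul])]
  rw [ge_last, gx_last, ge_low (by omega : (0:ℕ) < k + 2), ge_low (by omega : (1:ℕ) < k + 2)]
  ring

include hk

lemma dww : ∑ i : Fin (k + 3), gw k i.val * gw k i.val = 4 := by
  rw [sum_fin_eq k (fun j => gw k j * gw k j) (2 / k) (fun j h2 hl => by simp only [gw_mid h2 hl, rr_sq hk])]
  rw [gw_last, gw_low (by norm_num), gw_low le_rfl]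
  have hk' : (k : ℝ) ≠ 0 := by positivity
  field_simp
  ring

lemma dwx : ∑ i : Fin (k + 3), gw k i.val * gx k i.val = 0 := by
  rw [sum_fin_eq k (fun j => gw k j * gx k j) (2 / k) (fun j h2 hl => by simp only [gw_mid h2 hl, gx_mid h2 hl, rr_sq hk])]
  rw [gw_last, gx_last, gw_low (by norm_num), gw_low le_rfl, gx_low (by norm_num), gx_low le_rfl]
  have hk' : (k : ℝ) ≠ 0 := by positivity
  field_simp
  norm_num

end Dots



/-! ### The matrix -/

noncomputable def vV (k : ℕ) : Fin (k + 3) → ℝ := fun i => gv i.val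
noncomputable def eV (k : ℕ) : Fin (k + 3) → ℝ := fun i => ge k i.val
noncomputable def wV (k : ℕ) : Fin (k + 3) → ℝ := fun i => gw k i.val
noncomputable def xV (k : ℕ) : Fin (k + 3) → ℝ := fun i => gx k i.val

noncomputable def Amat (k : ℕ) : Matrix (Fin (k + 3)) (Fin (k + 3)) ℝ :=
  -vecMulVec (vV k) (vV k) + vecMulVec (eV k) (wV k) + vecMulVec (wV k) (eV k)

variable {k : ℕ}

lemma Amat_sq (hk : 1 ≤ k) :
    Amat k * Amat k = (2 : ℝ) • vecMulVec (vV k) (vV k)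
      + (4 : ℝ) • vecMulVec (eV k) (eV k) + vecMulVec (wV k) (wV k) := by
  simp only [Amat, add_mul, mul_add, neg_mul, mul_neg, neg_neg, vecMulVec_mul_vecMulVec,
    vV, eV, wV, dvv, dvw, dwv, dve, dev, dee, dew, dwe, dww hk, zero_smul, one_smul,
    neg_zero, add_zero, zero_add]
  module

lemma Amat_cube (hk : 1 ≤ k) : Amat k * Amat k * Amat k = (4 : ℝ) • Amat k := by
  rw [Amat_sq hk]
  simp only [Amat, add_mul, mul_add, mul_neg, Matrix.smul_mul, vecMulVec_mul_vecMulVec,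
    vV, eV, wV, dvv, dvw, dwv, dve, dev, dee, dew, dwe, dww hk, zero_smul, one_smul,
    smul_zero, neg_zero, add_zero, zero_add, smul_neg, smul_smul, smul_add]
  module

lemma mulVec_vV : Amat k *ᵥ vV k = (-2 : ℝ) • vV k := by
  simp only [Amat, Matrix.add_mulVec, Matrix.neg_mulVec, vecMulVec_mulVec,
    vV, eV, wV, dvv, dwv, dev, zero_smul, add_zero]
  module

lemma mulVec_yV (hk : 1 ≤ k) :
    Amat k *ᵥ (wV k + (2 : ℝ) • eV k) = (2 : ℝ) • (wV k + (2 : ℝ) • eV k) := by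
  rw [Matrix.mulVec_add, Matrix.mulVec_smul]
  have hw : Amat k *ᵥ wV k = (4 : ℝ) • eV k := by
    simp only [Amat, Matrix.add_mulVec, Matrix.neg_mulVec, vecMulVec_mulVec,
      vV, eV, wV, dvw, dww hk, dew, zero_smul, neg_zero, add_zero, zero_add]
  have he : Amat k *ᵥ eV k = wV k := by
    simp only [Amat, Matrix.add_mulVec, Matrix.neg_mulVec, vecMulVec_mulVec,
      vV, eV, wV, dve, dwe, dee, zero_smul, one_smul, neg_zero, add_zero, zero_add]
  rw [hw, he]
  module

lemma mulVec_xV (hk : 1 ≤ k) : Amat k *ᵥ xV k = 0 := by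
  simp only [Amat, Matrix.add_mulVec, Matrix.neg_mulVec, vecMulVec_mulVec,
    vV, eV, wV, xV, dvx, dwx hk, dex, zero_smul, neg_zero, add_zero, zero_add]

lemma vV_ne_zero : vV k ≠ 0 := by
  intro h
  have := congrFun h ⟨0, by omega⟩
  simp [vV, gv] at this

lemma yV_ne_zero : wV k + (2 : ℝ) • eV k ≠ 0 := by
  intro h
  have := congrFun h ⟨0, by omega⟩
  simp [wV, eV, gw, ge] at this

lemma xV_ne_zero : xV k ≠ 0 := by
  intro h
  have := congrFun h ⟨0, by omega⟩
  simp [xV, gx] at this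

lemma spec_Amat (hk : 1 ≤ k) : spectrum ℝ (Amat k) = {(-2 : ℝ), 0, 2} := by
  ext lam
  simp only [Set.mem_insert_iff, Set.mem_singleton_iff]
  constructor
  · intro h
    by_contra hno
    push_neg at hno
    obtain ⟨h1, h2, h3⟩ := hno
    refine not_mem_spectrum_of_cube _ (Amat_cube hk) lam ?_ h
    have hfac : lam ^ 3 - 4 * lam = lam * (lam - 2) * (lam + 2) := by ring
    rw [hfac]
    refine mul_ne_zero (mul_ne_zero h2 (sub_ne_zero.mpr h3)) ?_
    intro hcon
    exact h1 (by linarith)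
  · rintro (rfl | rfl | rfl)
    · exact mem_spectrum_of_mulVec _ _ _ vV_ne_zero mulVec_vV
    · exact mem_spectrum_of_mulVec _ _ _ xV_ne_zero (by rw [mulVec_xV hk, zero_smul])
    · exact mem_spectrum_of_mulVec _ _ _ yV_ne_zero (mulVec_yV hk)


/-! ### Entry pattern of `Amat` -/

lemma Amat_apply (k : ℕ) (i j : Fin (k + 3)) :
    Amat k i j = -(gv i.val * gv j.val) + ge k i.val * gw k j.val + gw k i.val * ge k j.val := by
  simp [Amat, vV, eV, wV, Matrix.add_apply, Matrix.neg_apply, Matrix.vecMulVec_apply]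

lemma gv_ne_zero_of_le {t : ℕ} (h : t ≤ 1) : gv t ≠ 0 := by
  interval_cases t <;> norm_num [gv]

lemma gw_ne_zero {k j : ℕ} (hk : 1 ≤ k) (h1 : j ≠ k + 2) (h2 : j < k + 3) : gw k j ≠ 0 := by
  by_cases hj : j ≤ 1
  · rw [gw_low hj]; norm_num
  · rw [gw_mid (by omega) (by omega)]
    exact ne_of_gt (rr_pos hk)

lemma Amat_ne_zero_iff {k : ℕ} (hk : 1 ≤ k) (i j : Fin (k + 3)) (hij : i.val ≠ j.val) :
    Amat k i j ≠ 0 ↔ (i.val = k + 2 ∨ j.val = k + 2 ∨ (i.val ≤ 1 ∧ j.val ≤ 1)) := by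
  have hi : i.val < k + 3 := i.isLt
  have hj : j.val < k + 3 := j.isLt
  rw [Amat_apply]
  by_cases hi2 : i.val = k + 2 <;> by_cases hj2 : j.val = k + 2
  · omega
  · have e : -(gv i.val * gv j.val) + ge k i.val * gw k j.val + gw k i.val * ge k j.val
        = gw k j.val := by
      rw [hi2, ge_last, gw_last, gv_mid (by omega)]; ring
    rw [e]
    exact iff_of_true (gw_ne_zero hk hj2 hj) (Or.inl hi2)
  · have e : -(gv i.val * gv j.val) + ge k i.val * gw k j.val + gw k i.val * ge k j.val
        = gw k i.val := by
      rw [hj2, ge_last, gw_last, gv_mid (show 2 ≤ k + 2 by omega)]; ring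
    rw [e]
    exact iff_of_true (gw_ne_zero hk hi2 hi) (Or.inr (Or.inl hj2))
  · have e : -(gv i.val * gv j.val) + ge k i.val * gw k j.val + gw k i.val * ge k j.val
        = -(gv i.val * gv j.val) := by
      rw [ge_low (by omega), ge_low (by omega)]; ring
    rw [e]
    constructor
    · intro hne
      refine Or.inr (Or.inr ⟨?_, ?_⟩) <;> by_contra hc
      · exact hne (by rw [gv_mid (by omega)]; ring)
      · exact hne (by rw [gv_mid (show 2 ≤ j.val by omega)]; ring)
    · rintro (h | h | ⟨h1, h2⟩)
      · omega
      · omega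
      · exact neg_ne_zero.mpr (mul_ne_zero (gv_ne_zero_of_le h1) (gv_ne_zero_of_le h2))

lemma Amat_isSymm {k : ℕ} : (Amat k).IsSymm := by
  unfold Matrix.IsSymm
  ext i j
  rw [Matrix.transpose_apply, Amat_apply, Amat_apply]
  ring

lemma numEig_Amat {k : ℕ} (hk : 1 ≤ k) : numEig (Amat k) = 3 := by
  rw [numEig, spec_Amat hk]
  rw [Set.ncard_insert_of_notMem (by norm_num) (Set.toFinite _),
    Set.ncard_insert_of_notMem (by norm_num) (Set.toFinite _), Set.ncard_singleton]

/-! ### Lower bound -/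

lemma lower_bound {k : ℕ} (hk : 1 ≤ k) (G : SimpleGraph (Fin (k + 3)))
    (hAdj : ∀ i j : Fin (k + 3), G.Adj i j ↔
      i ≠ j ∧ (i.val = k + 2 ∨ j.val = k + 2 ∨ (i.val ≤ 1 ∧ j.val ≤ 1)))
    (B : Matrix (Fin (k + 3)) (Fin (k + 3)) ℝ) (hB : B ∈ SMat G) : 3 ≤ numEig B := by
  obtain ⟨hsymm, hpat⟩ := hB
  have hherm : B.IsHermitian := by
    ext i j
    rw [Matrix.conjTranspose_apply, star_trivial]
    exact hsymm.apply i j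
  by_contra hlt
  push_neg at hlt
  have hfin : (spectrum ℝ B).Finite := Matrix.finite_spectrum B
  have hcard : (spectrum ℝ B).ncard ≤ 2 := by
    have : numEig B ≤ 2 := by omega
    exact this
  obtain ⟨aa, bb, hsub⟩ : ∃ a b : ℝ, spectrum ℝ B ⊆ {a, b} := by
    obtain ⟨a, ha⟩ : (spectrum ℝ B).Nonempty :=
      ⟨_, hherm.eigenvalues_mem_spectrum_real ⟨0, by omega⟩⟩
    by_cases hbex : ∃ c ∈ spectrum ℝ B, c ≠ a
    · obtain ⟨b, hbS, hba⟩ := hbex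
      refine ⟨a, b, fun c hc => ?_⟩
      by_contra hcn
      simp only [Set.mem_insert_iff, Set.mem_singleton_iff, not_or] at hcn
      have hsub3 : ({a, b, c} : Set ℝ) ⊆ spectrum ℝ B := by
        intro t ht
        simp only [Set.mem_insert_iff, Set.mem_singleton_iff] at ht
        rcases ht with rfl | rfl | rfl <;> assumption
      have h3 : ({a, b, c} : Set ℝ).ncard = 3 := by
        rw [Set.ncard_insert_of_notMem (by simp [Ne.symm hba, Ne.symm hcn.1])
            (Set.toFinite _),
          Set.ncard_insert_of_notMem (by simp [Ne.symm hcn.2]) (Set.toFinite _),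
          Set.ncard_singleton]
      have := Set.ncard_le_ncard hsub3 hfin
      omega
    · push_neg at hbex
      exact ⟨a, a, fun c hc => by simp [hbex c hc]⟩
  have expand : (B - aa • (1 : Matrix (Fin (k + 3)) (Fin (k + 3)) ℝ)) * (B - bb • 1)
      = B * B - ((aa + bb) • B - (aa * bb) • 1) := by
    simp only [Matrix.sub_mul, Matrix.mul_sub, Matrix.smul_mul, Matrix.mul_smul, one_mul,
      mul_one, smul_smul]
    module
  have hBB : B * B = (aa + bb) • B - (aa * bb) • 1 := by
    have h0 := quad_eq_zero B hherm aa bb hsub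
    rw [expand, sub_eq_zero] at h0
    exact h0
  set i0 : Fin (k + 3) := ⟨0, by omega⟩ with hi0
  set j0 : Fin (k + 3) := ⟨2, by omega⟩ with hj0
  set l0 : Fin (k + 3) := ⟨k + 2, by omega⟩ with hl0
  have hi0v : i0.val = 0 := rfl
  have hj0v : j0.val = 2 := rfl
  have hl0v : l0.val = k + 2 := rfl
  have hzero : ∀ p q : Fin (k + 3), p.val ≠ q.val →
      ¬(p.val = k + 2 ∨ q.val = k + 2 ∨ (p.val ≤ 1 ∧ q.val ≤ 1)) → B p q = 0 := by
    intro p q hpq hnp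
    by_contra h0
    have hadj := (hpat p q (fun h => hpq (congrArg Fin.val h))).mp h0
    exact hnp ((hAdj p q).mp hadj).2
  have hnz : ∀ p q : Fin (k + 3), p.val ≠ q.val →
      (p.val = k + 2 ∨ q.val = k + 2 ∨ (p.val ≤ 1 ∧ q.val ≤ 1)) → B p q ≠ 0 := by
    intro p q hpq hp
    exact (hpat p q (fun h => hpq (congrArg Fin.val h))).mpr
      ((hAdj p q).mpr ⟨fun h => hpq (congrArg Fin.val h), hp⟩)
  have e1 : B i0 j0 = 0 := by
    refine hzero i0 j0 (by omega) ?_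
    rintro (h | h | ⟨h1, h2⟩) <;> omega
  have hsum : (B * B) i0 j0 = B i0 l0 * B l0 j0 := by
    rw [Matrix.mul_apply]
    apply Finset.sum_eq_single l0
    · intro m _ hml
      have hmlv : m.val ≠ k + 2 := fun h => hml (Fin.ext (h.trans hl0v.symm))
      have hmv : m.val < k + 3 := m.isLt
      by_cases hm1 : m.val ≤ 1
      · have : B m j0 = 0 := by
          refine hzero m j0 (by omega) ?_
          rintro (h | h | ⟨h1, h2⟩) <;> omega
        rw [this, mul_zero]
      · have : B i0 m = 0 := by
          refine hzero i0 m (by omega) ?_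
          rintro (h | h | ⟨h1, h2⟩) <;> omega
        rw [this, zero_mul]
    · intro h
      exact absurd (Finset.mem_univ l0) h
  have e2 : (B * B) i0 j0 = 0 := by
    have hne01 : i0 ≠ j0 := by intro h; exact absurd (congrArg Fin.val h) (by omega)
    rw [hBB, Matrix.sub_apply, Matrix.smul_apply, Matrix.smul_apply, e1,
      Matrix.one_apply_ne hne01]
    simp
  rw [hsum] at e2
  have n1 : B i0 l0 ≠ 0 := hnz i0 l0 (by omega) (Or.inr (Or.inl hl0v))
  have n2 : B l0 j0 ≠ 0 := hnz l0 j0 (by omega) (Or.inl hl0v)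
  exact mul_ne_zero n1 n2 e2

/-! ### Main theorem -/

theorem qGraph_eq_three (k n : ℕ) (hk : 1 ≤ k) (hn : n = k + 3) (G : SimpleGraph (Fin n))
    (hAdj : ∀ i j : Fin n, G.Adj i j ↔
      i ≠ j ∧ (i.val = n - 1 ∨ j.val = n - 1 ∨ (i.val ≤ 1 ∧ j.val ≤ 1))) :
    qGraph G = 3 := by
  subst hn
  have hAdj' : ∀ i j : Fin (k + 3), G.Adj i j ↔
      i ≠ j ∧ (i.val = k + 2 ∨ j.val = k + 2 ∨ (i.val ≤ 1 ∧ j.val ≤ 1)) := by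
    intro i j
    rw [hAdj]
    constructor <;> (rintro ⟨h1, h2⟩; exact ⟨h1, by omega⟩)
  have hmem : Amat k ∈ SMat G := by
    refine ⟨Amat_isSymm, ?_⟩
    intro i j hij
    rw [Amat_ne_zero_iff hk i j (fun h => hij (Fin.ext h)), hAdj' i j]
    exact ⟨fun h => ⟨hij, h⟩, fun h => h.2⟩
  have h3 : (3 : ℕ) ∈ numEig '' SMat G := ⟨Amat k, hmem, numEig_Amat hk⟩
  apply le_antisymm
  · exact Nat.sInf_le h3
  · apply le_csInf ⟨3, h3⟩
    rintro m ⟨B, hB, rfl⟩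
    exact lower_bound hk G hAdj' B hB

end Stmt7Aux

/-- For `G ≅ (0, 1, 0^{k}, 1)` with `k ≥ 1`, `q(G) = 3`. -/
theorem stmt7 (k : ℕ) (hk : 1 ≤ k) :
    qGraph (thresholdOfList ([false, true] ++ List.replicate k false ++ [true])) = 3 := by
  set L : List Bool := [false, true] ++ List.replicate k false ++ [true] with hL
  have hlen : L.length = k + 3 := by simp [hL]
  apply Stmt7Aux.qGraph_eq_three k L.length hk hlen
  have hget : ∀ m : Fin L.length, L.get m = true ↔ (m.val = 1 ∨ m.val = k + 2) := by
    intro m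
    have hm : m.val < k + 3 := by rw [← hlen]; exact m.isLt
    have hL2 : L = false :: true :: (List.replicate k false ++ [true]) := by simp [hL]
    rw [List.get_eq_getElem]
    obtain ⟨mv, hmv⟩ := m
    simp only
    rcases mv with _ | mv
    · simp [hL2]
    rcases mv with _ | mv
    · simp [hL2]
    have e : L[mv + 1 + 1]'hmv = (List.replicate k false ++ [true])[mv]'(by
        simp only [List.length_append, List.length_replicate, List.length_cons,
          List.length_nil]
        have := hmv
        rw [hlen] at this
        omega) := by
      simp [hL2]
    rw [e]
    by_cases hc : mv < k
    · rw [List.getElem_append_left (by simpa using hc)]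
      simp [List.getElem_replicate]
      omega
    · have hmk : mv = k := by omega
      subst hmk
      rw [List.getElem_append_right (by simp)]
      simp
  intro i j
  have hi := i.isLt
  have hj := j.isLt
  show (i ≠ j ∧ ((i < j ∧ L.get j = true) ∨ (j < i ∧ L.get i = true))) ↔ _
  rw [hget i, hget j, ne_eq, Fin.ext_iff, Fin.lt_def, Fin.lt_def]
  omega
end

section
/- Let G be the threshold graph with creation sequence (0, 0, 1, 0^{k}, 1), where k ≥ 1. Then q(G) = 3. -/
open Matrix BigOperators

namespace S8
variable (k : ℕ)

def E0 : Fin (k+4) → ℝ := fun i => if (i : ℕ) = 0 then 1 else 0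
def E1 : Fin (k+4) → ℝ := fun i => if (i : ℕ) = 1 then 1 else 0
def E2 : Fin (k+4) → ℝ := fun i => if (i : ℕ) = 2 then 1 else 0
def EL : Fin (k+4) → ℝ := fun i => if 3 ≤ (i : ℕ) ∧ (i : ℕ) < k+3 then 1 else 0
def EW : Fin (k+4) → ℝ := fun i => if (i : ℕ) = k+3 then 1 else 0

lemma sum_E0 : ∑ i, E0 k i = 1 := by
  rw [Finset.sum_congr rfl (fun i _ => show E0 k i = if i = (⟨0, by omega⟩ : Fin (k+4)) then 1 else 0 by
    simp only [E0, Fin.ext_iff])]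
  rw [Finset.sum_ite_eq']; simp

lemma sum_E1 : ∑ i, E1 k i = 1 := by
  rw [Finset.sum_congr rfl (fun i _ => show E1 k i = if i = (⟨1, by omega⟩ : Fin (k+4)) then 1 else 0 by
    simp [E1, Fin.ext_iff])]
  rw [Finset.sum_ite_eq']; simp

lemma sum_E2 : ∑ i, E2 k i = 1 := by
  rw [Finset.sum_congr rfl (fun i _ => show E2 k i = if i = (⟨2, by omega⟩ : Fin (k+4)) then 1 else 0 by
    simp [E2, Fin.ext_iff])]
  simp

lemma sum_EW : ∑ i, EW k i = 1 := by
  rw [Finset.sum_congr rfl (fun i _ => show EW k i = if i = (⟨k+3, by omega⟩ : Fin (k+4)) then 1 else 0 by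
    simp [EW, Fin.ext_iff])]
  simp

lemma sum_EL : ∑ i, EL k i = k := by
  have h := Fin.sum_univ_eq_sum_range (fun m => if 3 ≤ m ∧ m < k+3 then (1:ℝ) else 0) (k+4)
  rw [show (∑ i, EL k i) = ∑ i : Fin (k+4), (fun m => if 3 ≤ m ∧ m < k+3 then (1:ℝ) else 0) (i:ℕ) from rfl, h]
  rw [Finset.range_eq_Ico, ← Finset.sum_Ico_consecutive _ (by omega : 0 ≤ 3) (by omega : 3 ≤ k+4),
    ← Finset.sum_Ico_consecutive _ (by omega : 3 ≤ k+3) (by omega : k+3 ≤ k+4)]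
  have h1 : ∑ m ∈ Finset.Ico 0 3, (if 3 ≤ m ∧ m < k+3 then (1:ℝ) else 0) = 0 :=
    Finset.sum_eq_zero (fun m hm => by rw [Finset.mem_Ico] at hm; rw [if_neg (by omega)])
  have h2 : ∑ m ∈ Finset.Ico 3 (k+3), (if 3 ≤ m ∧ m < k+3 then (1:ℝ) else 0) = k := by
    have he : ∀ m ∈ Finset.Ico 3 (k+3), (if 3 ≤ m ∧ m < k+3 then (1:ℝ) else 0) = 1 := by
      intro m hm; rw [Finset.mem_Ico] at hm; rw [if_pos (by omega)]
    rw [Finset.sum_congr rfl he, Finset.sum_const, Nat.card_Ico]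
    simp
  have h3 : ∑ m ∈ Finset.Ico (k+3) (k+4), (if 3 ≤ m ∧ m < k+3 then (1:ℝ) else 0) = 0 :=
    Finset.sum_eq_zero (fun m hm => by rw [Finset.mem_Ico] at hm; rw [if_neg (by omega)])
  rw [h1, h2, h3]; ring

-- pointwise products
section dots

lemma dot_self_E0 : E0 k ⬝ᵥ E0 k = 1 := by
  rw [dotProduct, Finset.sum_congr rfl (fun i _ => show E0 k i * E0 k i = E0 k i by
    unfold E0; split_ifs <;> ring), sum_E0]

lemma dot_self_E1 : E1 k ⬝ᵥ E1 k = 1 := by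
  rw [dotProduct, Finset.sum_congr rfl (fun i _ => show E1 k i * E1 k i = E1 k i by
    unfold E1; split_ifs <;> ring), sum_E1]

lemma dot_self_E2 : E2 k ⬝ᵥ E2 k = 1 := by
  rw [dotProduct, Finset.sum_congr rfl (fun i _ => show E2 k i * E2 k i = E2 k i by
    unfold E2; split_ifs <;> ring), sum_E2]

lemma dot_self_EW : EW k ⬝ᵥ EW k = 1 := by
  rw [dotProduct, Finset.sum_congr rfl (fun i _ => show EW k i * EW k i = EW k i by
    unfold EW; split_ifs <;> ring), sum_EW]

lemma dot_self_EL : EL k ⬝ᵥ EL k = k := by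
  rw [dotProduct, Finset.sum_congr rfl (fun i _ => show EL k i * EL k i = EL k i by
    unfold EL; split_ifs <;> ring), sum_EL]

lemma dot_E0_E1 : E0 k ⬝ᵥ E1 k = 0 := by
  rw [dotProduct]; exact Finset.sum_eq_zero fun i _ => by
    unfold E0 E1; split_ifs <;> first | omega | ring

lemma dot_E0_E2 : E0 k ⬝ᵥ E2 k = 0 := by
  rw [dotProduct]; exact Finset.sum_eq_zero fun i _ => by
    unfold E0 E2; split_ifs <;> first | omega | ring

lemma dot_E0_EL : E0 k ⬝ᵥ EL k = 0 := by
  rw [dotProduct]; exact Finset.sum_eq_zero fun i _ => by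
    unfold E0 EL; split_ifs <;> first | omega | ring

lemma dot_E0_EW : E0 k ⬝ᵥ EW k = 0 := by
  rw [dotProduct]; exact Finset.sum_eq_zero fun i _ => by
    unfold E0 EW; split_ifs <;> first | omega | ring

lemma dot_E1_E2 : E1 k ⬝ᵥ E2 k = 0 := by
  rw [dotProduct]; exact Finset.sum_eq_zero fun i _ => by
    unfold E1 E2; split_ifs <;> first | omega | ring

lemma dot_E1_EL : E1 k ⬝ᵥ EL k = 0 := by
  rw [dotProduct]; exact Finset.sum_eq_zero fun i _ => by
    unfold E1 EL; split_ifs <;> first | omega | ring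

lemma dot_E1_EW : E1 k ⬝ᵥ EW k = 0 := by
  rw [dotProduct]; exact Finset.sum_eq_zero fun i _ => by
    unfold E1 EW; split_ifs <;> first | omega | ring

lemma dot_E2_EL : E2 k ⬝ᵥ EL k = 0 := by
  rw [dotProduct]; exact Finset.sum_eq_zero fun i _ => by
    unfold E2 EL; split_ifs <;> first | omega | ring

lemma dot_E2_EW : E2 k ⬝ᵥ EW k = 0 := by
  rw [dotProduct]; exact Finset.sum_eq_zero fun i _ => by
    unfold E2 EW; split_ifs <;> first | omega | ring

lemma dot_EL_EW : EL k ⬝ᵥ EW k = 0 := by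
  rw [dotProduct]; exact Finset.sum_eq_zero fun i _ => by
    unfold EL EW; split_ifs <;> first | omega | ring

end dots

def V1 : Fin (k+4) → ℝ := (-32 : ℝ) • E0 k + (9:ℝ) • E1 k + (24:ℝ) • E2 k
def V2 : Fin (k+4) → ℝ := (9 : ℝ) • E0 k + (-32:ℝ) • E1 k + (24:ℝ) • E2 k
def U : Fin (k+4) → ℝ :=
  (24*(4*(k:ℝ)-1)) • E0 k + (24*(4*(k:ℝ)-1)) • E1 k + (23*(4*(k:ℝ)-1)) • E2 k + (164:ℝ) • EL k
def Z : Fin (k+4) → ℝ :=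
  (96*(k:ℝ)) • E0 k + (96*(k:ℝ)) • E1 k + (92*(k:ℝ)) • E2 k + (-(41*(4*(k:ℝ)-1))) • EL k

lemma comm_dot (a b : Fin (k+4) → ℝ) : a ⬝ᵥ b = b ⬝ᵥ a := by
  rw [dotProduct, dotProduct]; exact Finset.sum_congr rfl fun i _ => mul_comm _ _

lemma dot_E1_E0 : E1 k ⬝ᵥ E0 k = 0 := by rw [comm_dot, dot_E0_E1]
lemma dot_E2_E0 : E2 k ⬝ᵥ E0 k = 0 := by rw [comm_dot, dot_E0_E2]
lemma dot_EL_E0 : EL k ⬝ᵥ E0 k = 0 := by rw [comm_dot, dot_E0_EL]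
lemma dot_EW_E0 : EW k ⬝ᵥ E0 k = 0 := by rw [comm_dot, dot_E0_EW]
lemma dot_E2_E1 : E2 k ⬝ᵥ E1 k = 0 := by rw [comm_dot, dot_E1_E2]
lemma dot_EL_E1 : EL k ⬝ᵥ E1 k = 0 := by rw [comm_dot, dot_E1_EL]
lemma dot_EW_E1 : EW k ⬝ᵥ E1 k = 0 := by rw [comm_dot, dot_E1_EW]
lemma dot_EL_E2 : EL k ⬝ᵥ E2 k = 0 := by rw [comm_dot, dot_E2_EL]
lemma dot_EW_E2 : EW k ⬝ᵥ E2 k = 0 := by rw [comm_dot, dot_E2_EW]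
lemma dot_EW_EL : EW k ⬝ᵥ EL k = 0 := by rw [comm_dot, dot_EL_EW]

lemma dV1V1 : V1 k ⬝ᵥ V1 k = 1681 := by
  simp only [V1, dotProduct_add, add_dotProduct, dotProduct_smul, smul_dotProduct,
    dot_self_E0, dot_self_E1, dot_self_E2, dot_E0_E1, dot_E0_E2, dot_E1_E2,
    dot_E1_E0, dot_E2_E0, dot_E2_E1, smul_eq_mul]
  ring

lemma dV2V2 : V2 k ⬝ᵥ V2 k = 1681 := by
  simp only [V2, dotProduct_add, add_dotProduct, dotProduct_smul, smul_dotProduct,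
    dot_self_E0, dot_self_E1, dot_self_E2, dot_E0_E1, dot_E0_E2, dot_E1_E2,
    dot_E1_E0, dot_E2_E0, dot_E2_E1, smul_eq_mul]
  ring

lemma dV1V2 : V1 k ⬝ᵥ V2 k = 0 := by
  simp only [V1, V2, dotProduct_add, add_dotProduct, dotProduct_smul, smul_dotProduct,
    dot_self_E0, dot_self_E1, dot_self_E2, dot_E0_E1, dot_E0_E2, dot_E1_E2,
    dot_E1_E0, dot_E2_E0, dot_E2_E1, smul_eq_mul]
  ring

lemma dV2V1 : V2 k ⬝ᵥ V1 k = 0 := by rw [comm_dot, dV1V2]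

lemma dV1U : V1 k ⬝ᵥ U k = 0 := by
  simp only [V1, U, dotProduct_add, add_dotProduct, dotProduct_smul, smul_dotProduct,
    dot_self_E0, dot_self_E1, dot_self_E2, dot_E0_E1, dot_E0_E2, dot_E1_E2,
    dot_E1_E0, dot_E2_E0, dot_E2_E1, dot_E0_EL, dot_E1_EL, dot_E2_EL,
    dot_EL_E0, dot_EL_E1, dot_EL_E2, dot_self_EL, smul_eq_mul]
  ring

lemma dUV1 : U k ⬝ᵥ V1 k = 0 := by rw [comm_dot, dV1U]

lemma dV2U : V2 k ⬝ᵥ U k = 0 := by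
  simp only [V2, U, dotProduct_add, add_dotProduct, dotProduct_smul, smul_dotProduct,
    dot_self_E0, dot_self_E1, dot_self_E2, dot_E0_E1, dot_E0_E2, dot_E1_E2,
    dot_E1_E0, dot_E2_E0, dot_E2_E1, dot_E0_EL, dot_E1_EL, dot_E2_EL,
    dot_EL_E0, dot_EL_E1, dot_EL_E2, dot_self_EL, smul_eq_mul]
  ring

lemma dUV2 : U k ⬝ᵥ V2 k = 0 := by rw [comm_dot, dV2U]

lemma dV1W : V1 k ⬝ᵥ EW k = 0 := by
  simp only [V1, dotProduct_add, add_dotProduct, dotProduct_smul, smul_dotProduct,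
    dot_E0_EW, dot_E1_EW, dot_E2_EW, smul_eq_mul]
  ring

lemma dWV1 : EW k ⬝ᵥ V1 k = 0 := by rw [comm_dot, dV1W]

lemma dV2W : V2 k ⬝ᵥ EW k = 0 := by
  simp only [V2, dotProduct_add, add_dotProduct, dotProduct_smul, smul_dotProduct,
    dot_E0_EW, dot_E1_EW, dot_E2_EW, smul_eq_mul]
  ring

lemma dWV2 : EW k ⬝ᵥ V2 k = 0 := by rw [comm_dot, dV2W]

lemma dUU : U k ⬝ᵥ U k = 1681*(4*(k:ℝ)+1)^2 := by
  simp only [U, dotProduct_add, add_dotProduct, dotProduct_smul, smul_dotProduct,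
    dot_self_E0, dot_self_E1, dot_self_E2, dot_E0_E1, dot_E0_E2, dot_E1_E2,
    dot_E1_E0, dot_E2_E0, dot_E2_E1, dot_E0_EL, dot_E1_EL, dot_E2_EL,
    dot_EL_E0, dot_EL_E1, dot_EL_E2, dot_self_EL, smul_eq_mul]
  ring

lemma dUW : U k ⬝ᵥ EW k = 0 := by
  simp only [U, dotProduct_add, add_dotProduct, dotProduct_smul, smul_dotProduct,
    dot_E0_EW, dot_E1_EW, dot_E2_EW, dot_EL_EW, smul_eq_mul]
  ring

lemma dWU : EW k ⬝ᵥ U k = 0 := by rw [comm_dot, dUW]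

lemma dWW : EW k ⬝ᵥ EW k = 1 := dot_self_EW k

lemma dV1Z : V1 k ⬝ᵥ Z k = 0 := by
  simp only [V1, Z, dotProduct_add, add_dotProduct, dotProduct_smul, smul_dotProduct,
    dot_self_E0, dot_self_E1, dot_self_E2, dot_E0_E1, dot_E0_E2, dot_E1_E2,
    dot_E1_E0, dot_E2_E0, dot_E2_E1, dot_E0_EL, dot_E1_EL, dot_E2_EL,
    dot_EL_E0, dot_EL_E1, dot_EL_E2, dot_self_EL, smul_eq_mul]
  ring

lemma dV2Z : V2 k ⬝ᵥ Z k = 0 := by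
  simp only [V2, Z, dotProduct_add, add_dotProduct, dotProduct_smul, smul_dotProduct,
    dot_self_E0, dot_self_E1, dot_self_E2, dot_E0_E1, dot_E0_E2, dot_E1_E2,
    dot_E1_E0, dot_E2_E0, dot_E2_E1, dot_E0_EL, dot_E1_EL, dot_E2_EL,
    dot_EL_E0, dot_EL_E1, dot_EL_E2, dot_self_EL, smul_eq_mul]
  ring

lemma dUZ : U k ⬝ᵥ Z k = 0 := by
  simp only [U, Z, dotProduct_add, add_dotProduct, dotProduct_smul, smul_dotProduct,
    dot_self_E0, dot_self_E1, dot_self_E2, dot_E0_E1, dot_E0_E2, dot_E1_E2,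
    dot_E1_E0, dot_E2_E0, dot_E2_E1, dot_E0_EL, dot_E1_EL, dot_E2_EL,
    dot_EL_E0, dot_EL_E1, dot_EL_E2, dot_self_EL, smul_eq_mul]
  ring

lemma dWZ : EW k ⬝ᵥ Z k = 0 := by
  simp only [Z, dotProduct_add, dotProduct_smul,
    dot_EW_E0, dot_EW_E1, dot_EW_E2, dot_EW_EL, smul_eq_mul]
  ring

lemma vvmul {n : ℕ} (a b c d : Fin n → ℝ) :
    vecMulVec a b * vecMulVec c d = (b ⬝ᵥ c) • vecMulVec a d := by
  ext i j
  simp only [Matrix.mul_apply, vecMulVec_apply, Matrix.smul_apply, smul_eq_mul, dotProduct]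
  rw [Finset.sum_mul]
  exact Finset.sum_congr rfl fun t _ => by ring

lemma vvmulVec {n : ℕ} (a b v : Fin n → ℝ) :
    vecMulVec a b *ᵥ v = (b ⬝ᵥ v) • a := by
  ext i
  simp only [Matrix.mulVec, vecMulVec, Matrix.of_apply, dotProduct, Pi.smul_apply, smul_eq_mul]
  rw [Finset.sum_mul]
  exact Finset.sum_congr rfl fun t _ => by ring

def B : Matrix (Fin (k+4)) (Fin (k+4)) ℝ :=
  (41*(4*(k:ℝ)+1)) • (vecMulVec (V1 k) (V1 k) - vecMulVec (V2 k) (V2 k)) +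
  (1681:ℝ) • (vecMulVec (U k) (EW k) + vecMulVec (EW k) (U k))

lemma Bsymm : (B k).IsSymm := by
  unfold Matrix.IsSymm B
  rw [Matrix.transpose_add, Matrix.transpose_smul, Matrix.transpose_smul,
    Matrix.transpose_sub, Matrix.transpose_add]
  rw [show (vecMulVec (V1 k) (V1 k))ᵀ = vecMulVec (V1 k) (V1 k) from by
        ext i j; simp [Matrix.transpose_apply, vecMulVec_apply, mul_comm],
      show (vecMulVec (V2 k) (V2 k))ᵀ = vecMulVec (V2 k) (V2 k) from by
        ext i j; simp [Matrix.transpose_apply, vecMulVec_apply, mul_comm],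
      show (vecMulVec (U k) (EW k))ᵀ = vecMulVec (EW k) (U k) from by
        ext i j; simp [Matrix.transpose_apply, vecMulVec_apply, mul_comm],
      show (vecMulVec (EW k) (U k))ᵀ = vecMulVec (U k) (EW k) from by
        ext i j; simp [Matrix.transpose_apply, vecMulVec_apply, mul_comm]]
  rw [add_comm (vecMulVec (EW k) (U k))]

lemma simpset_dummy : True := trivial

lemma hBB : B k * B k =
    ((41:ℝ)^4*(4*(k:ℝ)+1)^2) • (vecMulVec (V1 k) (V1 k) + vecMulVec (V2 k) (V2 k))
    + ((1681:ℝ)^2) • vecMulVec (U k) (U k)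
    + ((1681:ℝ)^3*(4*(k:ℝ)+1)^2) • vecMulVec (EW k) (EW k) := by
  unfold B
  simp only [add_mul, mul_add, sub_mul, mul_sub, smul_mul_assoc, mul_smul_comm, vvmul,
    dV1V1, dV2V2, dV1V2, dV2V1, dV1U, dUV1, dV2U, dUV2, dV1W, dWV1, dV2W, dWV2,
    dUU, dUW, dWU, dWW, smul_smul, zero_smul, smul_zero, add_zero, zero_add,
    sub_zero, zero_sub, smul_add, smul_sub]
  ext i j
  simp only [Matrix.add_apply, Matrix.sub_apply, Matrix.smul_apply, Matrix.neg_apply,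
    vecMulVec_apply, smul_eq_mul]
  ring

lemma hB3 : B k * (B k * B k) = ((68921:ℝ)*(4*(k:ℝ)+1))^2 • B k := by
  rw [hBB]
  unfold B
  simp only [add_mul, mul_add, sub_mul, mul_sub, smul_mul_assoc, mul_smul_comm, vvmul,
    dV1V1, dV2V2, dV1V2, dV2V1, dV1U, dUV1, dV2U, dUV2, dV1W, dWV1, dV2W, dWV2,
    dUU, dUW, dWU, dWW, smul_smul, zero_smul, smul_zero, add_zero, zero_add,
    sub_zero, zero_sub, smul_add, smul_sub]
  ext i j
  simp only [Matrix.add_apply, Matrix.sub_apply, Matrix.smul_apply, Matrix.neg_apply,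
    vecMulVec_apply, smul_eq_mul]
  ring

lemma eig_p : B k *ᵥ (U k + (41*(4*(k:ℝ)+1)) • EW k)
    = ((68921:ℝ)*(4*(k:ℝ)+1)) • (U k + (41*(4*(k:ℝ)+1)) • EW k) := by
  unfold B
  simp only [Matrix.add_mulVec, Matrix.sub_mulVec, Matrix.smul_mulVec, vvmulVec,
    dotProduct_add, dotProduct_smul, dV1U, dV1W, dV2U, dV2W, dUU, dUW, dWU, dWW,
    smul_eq_mul, mul_zero, add_zero, zero_add, mul_one, zero_smul, smul_zero, sub_zero,
    smul_add, smul_smul, sub_self]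
  ext i
  simp only [Pi.add_apply, Pi.smul_apply, Pi.zero_apply, smul_eq_mul]
  ring

lemma eig_m : B k *ᵥ (U k - (41*(4*(k:ℝ)+1)) • EW k)
    = (-((68921:ℝ)*(4*(k:ℝ)+1))) • (U k - (41*(4*(k:ℝ)+1)) • EW k) := by
  unfold B
  simp only [Matrix.add_mulVec, Matrix.sub_mulVec, Matrix.smul_mulVec, vvmulVec,
    dotProduct_add, dotProduct_sub, dotProduct_smul, dV1U, dV1W, dV2U, dV2W, dUU, dUW, dWU, dWW,
    smul_eq_mul, mul_zero, add_zero, zero_add, mul_one, zero_smul, smul_zero, sub_zero,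
    smul_add, smul_sub, smul_smul, sub_self]
  ext i
  simp only [Pi.add_apply, Pi.sub_apply, Pi.smul_apply, Pi.zero_apply, smul_eq_mul]
  ring

lemma eig_z : B k *ᵥ Z k = 0 := by
  unfold B
  simp only [Matrix.add_mulVec, Matrix.sub_mulVec, Matrix.smul_mulVec, vvmulVec,
    dV1Z, dV2Z, dUZ, dWZ, zero_smul, smul_zero, sub_zero, add_zero, sub_self]

section values
variable {k : ℕ} (i : Fin (k+4))

lemma V1c0 (h : (i:ℕ) = 0) : V1 k i = -32 := by simp [V1, E0, E1, E2, h]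
lemma V1c1 (h : (i:ℕ) = 1) : V1 k i = 9 := by simp [V1, E0, E1, E2, h]
lemma V1c2 (h : (i:ℕ) = 2) : V1 k i = 24 := by simp [V1, E0, E1, E2, h]
lemma V1cO (h0 : (i:ℕ) ≠ 0) (h1 : (i:ℕ) ≠ 1) (h2 : (i:ℕ) ≠ 2) : V1 k i = 0 := by
  simp [V1, E0, E1, E2, h0, h1, h2]

lemma V2c0 (h : (i:ℕ) = 0) : V2 k i = 9 := by simp [V2, E0, E1, E2, h]
lemma V2c1 (h : (i:ℕ) = 1) : V2 k i = -32 := by simp [V2, E0, E1, E2, h]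
lemma V2c2 (h : (i:ℕ) = 2) : V2 k i = 24 := by simp [V2, E0, E1, E2, h]
lemma V2cO (h0 : (i:ℕ) ≠ 0) (h1 : (i:ℕ) ≠ 1) (h2 : (i:ℕ) ≠ 2) : V2 k i = 0 := by
  simp [V2, E0, E1, E2, h0, h1, h2]

lemma Uc0 (h : (i:ℕ) = 0) : U k i = 24*(4*(k:ℝ)-1) := by
  simp [U, E0, E1, E2, EL, h]
lemma Uc1 (h : (i:ℕ) = 1) : U k i = 24*(4*(k:ℝ)-1) := by
  simp [U, E0, E1, E2, EL, h]
lemma Uc2 (h : (i:ℕ) = 2) : U k i = 23*(4*(k:ℝ)-1) := by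
  simp [U, E0, E1, E2, EL, h]
lemma UcL (h3 : 3 ≤ (i:ℕ)) (hlt : (i:ℕ) < k+3) : U k i = 164 := by
  simp [U, E0, E1, E2, EL, show (i:ℕ) ≠ 0 by omega, show (i:ℕ) ≠ 1 by omega,
    show (i:ℕ) ≠ 2 by omega, h3, hlt]
lemma UcW (h : (i:ℕ) = k+3) : U k i = 0 := by
  simp [U, E0, E1, E2, EL, show (i:ℕ) ≠ 0 by omega, show (i:ℕ) ≠ 1 by omega,
    show (i:ℕ) ≠ 2 by omega, show ¬((i:ℕ) < k+3) by omega]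

lemma EWcW (h : (i:ℕ) = k+3) : EW k i = 1 := by simp [EW, h]
lemma EWcO (h : (i:ℕ) ≠ k+3) : EW k i = 0 := by simp [EW, h]

lemma Zc0 (h : (i:ℕ) = 0) : Z k i = 96*(k:ℝ) := by simp [Z, E0, E1, E2, EL, h]
lemma ZcW (h : (i:ℕ) = k+3) : Z k i = 0 := by
  simp [Z, E0, E1, E2, EL, show (i:ℕ) ≠ 0 by omega, show (i:ℕ) ≠ 1 by omega,
    show (i:ℕ) ≠ 2 by omega, show ¬((i:ℕ) < k+3) by omega]

end values

lemma B_apply (i j : Fin (k+4)) : B k i j =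
    (41*(4*(k:ℝ)+1)) * (V1 k i * V1 k j - V2 k i * V2 k j)
    + 1681 * (U k i * EW k j + EW k i * U k j) := by
  simp [B, Matrix.add_apply, Matrix.sub_apply, Matrix.smul_apply, vecMulVec_apply, smul_eq_mul]
  ring

lemma B_pattern (hk : 1 ≤ k) (i j : Fin (k+4)) (hij : i ≠ j) :
    B k i j ≠ 0 ↔
      (((i:ℕ) < (j:ℕ) ∧ ((j:ℕ) = 2 ∨ (j:ℕ) = k+3)) ∨
       ((j:ℕ) < (i:ℕ) ∧ ((i:ℕ) = 2 ∨ (i:ℕ) = k+3))) := by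
  have hkR : (1:ℝ) ≤ (k:ℝ) := by exact_mod_cast hk
  have hv : (i:ℕ) ≠ (j:ℕ) := fun h => hij (Fin.ext h)
  have hi4 := i.isLt
  have hj4 := j.isLt
  have ci : (i:ℕ) = 0 ∨ (i:ℕ) = 1 ∨ (i:ℕ) = 2 ∨ (3 ≤ (i:ℕ) ∧ (i:ℕ) < k+3) ∨ (i:ℕ) = k+3 := by omega
  have cj : (j:ℕ) = 0 ∨ (j:ℕ) = 1 ∨ (j:ℕ) = 2 ∨ (3 ≤ (j:ℕ) ∧ (j:ℕ) < k+3) ∨ (j:ℕ) = k+3 := by omega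
  rcases ci with hi|hi|hi|hi|hi <;> rcases cj with hj|hj|hj|hj|hj
  · -- i:0 j:0
    exact absurd (hi.trans hj.symm) hv
  · -- i:0 j:1
    rw [B_apply, V1c0 i hi, V1c1 j hj, V2c0 i hi, V2c1 j hj, Uc0 i hi, Uc1 j hj, EWcO i (by omega), EWcO j (by omega)]
    refine iff_of_false (fun h => h (by ring)) (by omega)
  · -- i:0 j:2
    rw [B_apply, V1c0 i hi, V1c2 j hj, V2c0 i hi, V2c2 j hj, Uc0 i hi, Uc2 j hj, EWcO i (by omega), EWcO j (by omega)]
    refine iff_of_true (fun h => by nlinarith [hkR]) (by omega)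
  · -- i:0 j:L
    rw [B_apply, V1c0 i hi, V1cO j (by omega) (by omega) (by omega), V2c0 i hi, V2cO j (by omega) (by omega) (by omega), Uc0 i hi, UcL j hj.1 hj.2, EWcO i (by omega), EWcO j (by omega)]
    refine iff_of_false (fun h => h (by ring)) (by omega)
  · -- i:0 j:W
    rw [B_apply, V1c0 i hi, V1cO j (by omega) (by omega) (by omega), V2c0 i hi, V2cO j (by omega) (by omega) (by omega), Uc0 i hi, UcW j hj, EWcO i (by omega), EWcW j hj]
    refine iff_of_true (fun h => by nlinarith [hkR]) (by omega)
  · -- i:1 j:0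
    rw [B_apply, V1c1 i hi, V1c0 j hj, V2c1 i hi, V2c0 j hj, Uc1 i hi, Uc0 j hj, EWcO i (by omega), EWcO j (by omega)]
    refine iff_of_false (fun h => h (by ring)) (by omega)
  · -- i:1 j:1
    exact absurd (hi.trans hj.symm) hv
  · -- i:1 j:2
    rw [B_apply, V1c1 i hi, V1c2 j hj, V2c1 i hi, V2c2 j hj, Uc1 i hi, Uc2 j hj, EWcO i (by omega), EWcO j (by omega)]
    refine iff_of_true (fun h => by nlinarith [hkR]) (by omega)
  · -- i:1 j:L
    rw [B_apply, V1c1 i hi, V1cO j (by omega) (by omega) (by omega), V2c1 i hi, V2cO j (by omega) (by omega) (by omega), Uc1 i hi, UcL j hj.1 hj.2, EWcO i (by omega), EWcO j (by omega)]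
    refine iff_of_false (fun h => h (by ring)) (by omega)
  · -- i:1 j:W
    rw [B_apply, V1c1 i hi, V1cO j (by omega) (by omega) (by omega), V2c1 i hi, V2cO j (by omega) (by omega) (by omega), Uc1 i hi, UcW j hj, EWcO i (by omega), EWcW j hj]
    refine iff_of_true (fun h => by nlinarith [hkR]) (by omega)
  · -- i:2 j:0
    rw [B_apply, V1c2 i hi, V1c0 j hj, V2c2 i hi, V2c0 j hj, Uc2 i hi, Uc0 j hj, EWcO i (by omega), EWcO j (by omega)]
    refine iff_of_true (fun h => by nlinarith [hkR]) (by omega)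
  · -- i:2 j:1
    rw [B_apply, V1c2 i hi, V1c1 j hj, V2c2 i hi, V2c1 j hj, Uc2 i hi, Uc1 j hj, EWcO i (by omega), EWcO j (by omega)]
    refine iff_of_true (fun h => by nlinarith [hkR]) (by omega)
  · -- i:2 j:2
    exact absurd (hi.trans hj.symm) hv
  · -- i:2 j:L
    rw [B_apply, V1c2 i hi, V1cO j (by omega) (by omega) (by omega), V2c2 i hi, V2cO j (by omega) (by omega) (by omega), Uc2 i hi, UcL j hj.1 hj.2, EWcO i (by omega), EWcO j (by omega)]
    refine iff_of_false (fun h => h (by ring)) (by omega)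
  · -- i:2 j:W
    rw [B_apply, V1c2 i hi, V1cO j (by omega) (by omega) (by omega), V2c2 i hi, V2cO j (by omega) (by omega) (by omega), Uc2 i hi, UcW j hj, EWcO i (by omega), EWcW j hj]
    refine iff_of_true (fun h => by nlinarith [hkR]) (by omega)
  · -- i:L j:0
    rw [B_apply, V1cO i (by omega) (by omega) (by omega), V1c0 j hj, V2cO i (by omega) (by omega) (by omega), V2c0 j hj, UcL i hi.1 hi.2, Uc0 j hj, EWcO i (by omega), EWcO j (by omega)]
    refine iff_of_false (fun h => h (by ring)) (by omega)
  · -- i:L j:1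
    rw [B_apply, V1cO i (by omega) (by omega) (by omega), V1c1 j hj, V2cO i (by omega) (by omega) (by omega), V2c1 j hj, UcL i hi.1 hi.2, Uc1 j hj, EWcO i (by omega), EWcO j (by omega)]
    refine iff_of_false (fun h => h (by ring)) (by omega)
  · -- i:L j:2
    rw [B_apply, V1cO i (by omega) (by omega) (by omega), V1c2 j hj, V2cO i (by omega) (by omega) (by omega), V2c2 j hj, UcL i hi.1 hi.2, Uc2 j hj, EWcO i (by omega), EWcO j (by omega)]
    refine iff_of_false (fun h => h (by ring)) (by omega)
  · -- i:L j:L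
    rw [B_apply, V1cO i (by omega) (by omega) (by omega), V1cO j (by omega) (by omega) (by omega), V2cO i (by omega) (by omega) (by omega), V2cO j (by omega) (by omega) (by omega), UcL i hi.1 hi.2, UcL j hj.1 hj.2, EWcO i (by omega), EWcO j (by omega)]
    refine iff_of_false (fun h => h (by ring)) (by omega)
  · -- i:L j:W
    rw [B_apply, V1cO i (by omega) (by omega) (by omega), V1cO j (by omega) (by omega) (by omega), V2cO i (by omega) (by omega) (by omega), V2cO j (by omega) (by omega) (by omega), UcL i hi.1 hi.2, UcW j hj, EWcO i (by omega), EWcW j hj]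
    refine iff_of_true (fun h => by nlinarith [hkR]) (by omega)
  · -- i:W j:0
    rw [B_apply, V1cO i (by omega) (by omega) (by omega), V1c0 j hj, V2cO i (by omega) (by omega) (by omega), V2c0 j hj, UcW i hi, Uc0 j hj, EWcW i hi, EWcO j (by omega)]
    refine iff_of_true (fun h => by nlinarith [hkR]) (by omega)
  · -- i:W j:1
    rw [B_apply, V1cO i (by omega) (by omega) (by omega), V1c1 j hj, V2cO i (by omega) (by omega) (by omega), V2c1 j hj, UcW i hi, Uc1 j hj, EWcW i hi, EWcO j (by omega)]
    refine iff_of_true (fun h => by nlinarith [hkR]) (by omega)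
  · -- i:W j:2
    rw [B_apply, V1cO i (by omega) (by omega) (by omega), V1c2 j hj, V2cO i (by omega) (by omega) (by omega), V2c2 j hj, UcW i hi, Uc2 j hj, EWcW i hi, EWcO j (by omega)]
    refine iff_of_true (fun h => by nlinarith [hkR]) (by omega)
  · -- i:W j:L
    rw [B_apply, V1cO i (by omega) (by omega) (by omega), V1cO j (by omega) (by omega) (by omega), V2cO i (by omega) (by omega) (by omega), V2cO j (by omega) (by omega) (by omega), UcW i hi, UcL j hj.1 hj.2, EWcW i hi, EWcO j (by omega)]
    refine iff_of_true (fun h => by nlinarith [hkR]) (by omega)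
  · -- i:W j:W
    exact absurd (hi.trans hj.symm) hv

lemma mem_spec {n : ℕ} (A : Matrix (Fin n) (Fin n) ℝ) (μ : ℝ) (v : Fin n → ℝ)
    (hv : v ≠ 0) (h : A *ᵥ v = μ • v) : μ ∈ spectrum ℝ A := by
  rw [spectrum.mem_iff]
  intro hunit
  rw [Matrix.isUnit_iff_isUnit_det, isUnit_iff_ne_zero] at hunit
  apply hunit
  rw [← Matrix.exists_mulVec_eq_zero_iff]
  refine ⟨v, hv, ?_⟩
  rw [Matrix.sub_mulVec, Algebra.algebraMap_eq_smul_one, Matrix.smul_mulVec,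
    Matrix.one_mulVec, h, sub_self]

lemma spec_eigen {n : ℕ} (A : Matrix (Fin n) (Fin n) ℝ) (μ : ℝ) (h : μ ∈ spectrum ℝ A) :
    ∃ v : Fin n → ℝ, v ≠ 0 ∧ A *ᵥ v = μ • v := by
  rw [spectrum.mem_iff] at h
  rw [Matrix.isUnit_iff_isUnit_det, isUnit_iff_ne_zero, not_not,
    ← Matrix.exists_mulVec_eq_zero_iff] at h
  obtain ⟨v, hv, hveq⟩ := h
  refine ⟨v, hv, ?_⟩
  rw [Matrix.sub_mulVec, Algebra.algebraMap_eq_smul_one, Matrix.smul_mulVec,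
    Matrix.one_mulVec, sub_eq_zero] at hveq
  exact hveq.symm

lemma subset_pair {s : Set ℝ} (hfin : s.Finite) (h : s.ncard ≤ 2) :
    ∃ a b : ℝ, s ⊆ {a, b} := by
  rcases s.eq_empty_or_nonempty with he | ⟨a, ha⟩
  · exact ⟨0, 0, by simp [he]⟩
  rcases (s \ {a}).eq_empty_or_nonempty with hd | ⟨b, hb⟩
  · refine ⟨a, a, fun x hx => ?_⟩
    have : x ∈ s \ {a} ∨ x = a := by
      by_cases hxa : x = a
      · right; exact hxa
      · left; exact ⟨hx, hxa⟩
    rcases this with hh | hh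
    · rw [hd] at hh; exact absurd hh (Set.notMem_empty x)
    · simp [hh]
  · refine ⟨a, b, fun x hx => ?_⟩
    by_cases hxa : x = a
    · simp [hxa]
    by_cases hxb : x = b
    · simp [hxb]
    exfalso
    have h1 : (s \ {a}).ncard + 1 = s.ncard := Set.ncard_diff_singleton_add_one ha hfin
    have h2 : 1 < (s \ {a}).ncard := by
      rw [Set.one_lt_ncard_iff (hfin.diff)]
      exact ⟨x, b, ⟨hx, hxa⟩, ⟨hb.1, hb.2⟩, hxb⟩
    omega

lemma quad_ann {n : ℕ} {A : Matrix (Fin n) (Fin n) ℝ} (hA : A.IsHermitian) (a b : ℝ)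
    (hs : spectrum ℝ A ⊆ {a, b}) :
    (A - a • (1 : Matrix (Fin n) (Fin n) ℝ)) * (A - b • 1) = 0 := by
  have hst := hA.spectral_theorem
  rw [Unitary.conjStarAlgAut_apply] at hst
  set U : Matrix (Fin n) (Fin n) ℝ := (Matrix.IsHermitian.eigenvectorUnitary hA : Matrix (Fin n) (Fin n) ℝ) with hU
  have hU1 : U * star U = 1 := Matrix.mem_unitaryGroup_iff.mp (Matrix.IsHermitian.eigenvectorUnitary hA).2
  have hU2 : star U * U = 1 := Matrix.mem_unitaryGroup_iff'.mp (Matrix.IsHermitian.eigenvectorUnitary hA).2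
  set D : Matrix (Fin n) (Fin n) ℝ := Matrix.diagonal (RCLike.ofReal ∘ hA.eigenvalues) with hD
  have key : ∀ c : ℝ, A - c • 1 = U * (D - c • 1) * star U := by
    intro c
    rw [Matrix.mul_sub, Matrix.sub_mul, ← hst]
    congr 1
    rw [Matrix.mul_smul, Matrix.smul_mul, mul_one, hU1]
  have hDzero : (D - a • 1) * (D - b • 1) = 0 := by
    rw [hD]
    have h1 : (Matrix.diagonal (RCLike.ofReal ∘ hA.eigenvalues) : Matrix (Fin n) (Fin n) ℝ) - a • 1
        = Matrix.diagonal (fun i => hA.eigenvalues i - a) := by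
      ext i j
      rcases eq_or_ne i j with rfl | hne
      · simp [Matrix.sub_apply, Matrix.smul_apply, Matrix.diagonal_apply_eq, Matrix.one_apply_eq]
      · simp [Matrix.sub_apply, Matrix.smul_apply, Matrix.diagonal_apply_ne _ hne, Matrix.one_apply_ne hne]
    have h2 : (Matrix.diagonal (RCLike.ofReal ∘ hA.eigenvalues) : Matrix (Fin n) (Fin n) ℝ) - b • 1
        = Matrix.diagonal (fun i => hA.eigenvalues i - b) := by
      ext i j
      rcases eq_or_ne i j with rfl | hne
      · simp [Matrix.sub_apply, Matrix.smul_apply, Matrix.diagonal_apply_eq, Matrix.one_apply_eq]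
      · simp [Matrix.sub_apply, Matrix.smul_apply, Matrix.diagonal_apply_ne _ hne, Matrix.one_apply_ne hne]
    rw [h1, h2, Matrix.diagonal_mul_diagonal]
    have : ∀ i, (hA.eigenvalues i - a) * (hA.eigenvalues i - b) = 0 := by
      intro i
      have hmem := hs (hA.eigenvalues_mem_spectrum_real i)
      rcases hmem with hm | hm
      · rw [hm]; ring
      · rw [Set.mem_singleton_iff] at hm; rw [hm]; ring
    simp only [this]
    exact Matrix.diagonal_zero
  rw [key a, key b, Matrix.mul_assoc, Matrix.mul_assoc, ← Matrix.mul_assoc (star U),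
    ← Matrix.mul_assoc (star U), hU2, Matrix.one_mul, ← Matrix.mul_assoc, Matrix.mul_assoc U,
    ← Matrix.mul_assoc (D - a • 1), hDzero, Matrix.zero_mul, Matrix.mul_zero]

lemma B_spectrum (hk : 1 ≤ k) :
    spectrum ℝ (B k) = {0, (68921:ℝ)*(4*(k:ℝ)+1), -((68921:ℝ)*(4*(k:ℝ)+1))} := by
  have hkR : (1:ℝ) ≤ (k:ℝ) := by exact_mod_cast hk
  set μ : ℝ := (68921:ℝ)*(4*(k:ℝ)+1) with hμ
  have hμpos : 0 < μ := by rw [hμ]; nlinarith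
  apply Set.eq_of_subset_of_subset
  · intro lam hlam
    obtain ⟨v, hv, hveq⟩ := spec_eigen _ _ hlam
    have h3 := congrArg (fun M => M *ᵥ v) (hB3 k)
    rw [← Matrix.mulVec_mulVec, ← Matrix.mulVec_mulVec] at h3
    simp only [hveq, Matrix.mulVec_smul, Matrix.smul_mulVec, smul_smul] at h3
    have hsc : (lam * lam * lam - μ^2 * lam) • v = 0 := by
      rw [sub_smul, h3, hμ, sub_self]
    rcases smul_eq_zero.mp hsc with hc | hc
    · have hfac : lam * (lam - μ) * (lam + μ) = 0 := by linear_combination hc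
      rcases mul_eq_zero.mp hfac with hc2 | hc2
      · rcases mul_eq_zero.mp hc2 with hc3 | hc3
        · left; exact hc3
        · right; left; linarith
      · right; right; simp only [Set.mem_singleton_iff]; linarith
    · exact absurd hc hv
  · intro lam hlam
    have hiW : (k+3) < k + 4 := by omega
    have hi0 : 0 < k + 4 := by omega
    rcases hlam with h | h | h
    · rw [h]
      apply mem_spec _ _ (Z k)
      · intro h0
        have := congrFun h0 ⟨0, hi0⟩
        rw [Zc0 _ rfl] at this
        simp only [Pi.zero_apply] at this
        nlinarith
      · rw [eig_z, zero_smul]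
    · rw [h]
      apply mem_spec _ _ (U k + (41*(4*(k:ℝ)+1)) • EW k)
      · intro h0
        have := congrFun h0 ⟨k+3, hiW⟩
        rw [Pi.add_apply, Pi.smul_apply, UcW _ rfl, EWcW _ rfl] at this
        simp only [Pi.zero_apply, smul_eq_mul, mul_one, zero_add] at this
        nlinarith
      · exact eig_p k
    · simp only [Set.mem_singleton_iff] at h
      rw [h]
      apply mem_spec _ _ (U k - (41*(4*(k:ℝ)+1)) • EW k)
      · intro h0
        have := congrFun h0 ⟨k+3, hiW⟩
        rw [Pi.sub_apply, Pi.smul_apply, UcW _ rfl, EWcW _ rfl] at this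
        simp only [Pi.zero_apply, smul_eq_mul, mul_one, zero_sub] at this
        nlinarith
      · exact eig_m k

lemma B_numEig (hk : 1 ≤ k) : numEig (B k) = 3 := by
  have hkR : (1:ℝ) ≤ (k:ℝ) := by exact_mod_cast hk
  have hμpos : 0 < (68921:ℝ)*(4*(k:ℝ)+1) := by nlinarith
  rw [numEig, B_spectrum k hk]
  rw [Set.ncard_insert_of_notMem (by
        simp only [Set.mem_insert_iff, Set.mem_singleton_iff]
        push_neg
        constructor <;> nlinarith) (Set.toFinite _),
      Set.ncard_pair (by nlinarith)]

lemma lower_bound (hk : 1 ≤ k) (G : SimpleGraph (Fin (k+4)))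
    (hG : ∀ i j : Fin (k+4), G.Adj i j ↔ (i ≠ j ∧
      (((i:ℕ) < (j:ℕ) ∧ ((j:ℕ) = 2 ∨ (j:ℕ) = k+3)) ∨
       ((j:ℕ) < (i:ℕ) ∧ ((i:ℕ) = 2 ∨ (i:ℕ) = k+3)))))
    (A : Matrix (Fin (k+4)) (Fin (k+4)) ℝ) (hA : A ∈ SMat G) : 3 ≤ numEig A := by
  by_contra hcon
  push_neg at hcon
  have hfin : (spectrum ℝ A).Finite := Matrix.finite_spectrum A
  obtain ⟨a, b, hs⟩ := subset_pair hfin (by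
    have : numEig A = (spectrum ℝ A).ncard := rfl
    omega)
  have hherm : A.IsHermitian := by
    unfold Matrix.IsHermitian
    rw [Matrix.conjTranspose_eq_transpose_of_trivial]
    exact hA.1
  have hq := quad_ann hherm a b hs
  have hi0 : (0:ℕ) < k+4 := by omega
  have hi3 : (3:ℕ) < k+4 := by omega
  have hiW : k+3 < k+4 := by omega
  set i0 : Fin (k+4) := ⟨0, hi0⟩ with hdefi0
  set i3 : Fin (k+4) := ⟨3, hi3⟩ with hdefi3
  set iW : Fin (k+4) := ⟨k+3, hiW⟩ with hdefiW
  have e0 : (i0:ℕ) = 0 := rfl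
  have e3 : (i3:ℕ) = 3 := rfl
  have eW : (iW:ℕ) = k+3 := rfl
  have hZ : ∀ i j : Fin (k+4), i ≠ j →
      ¬(((i:ℕ) < (j:ℕ) ∧ ((j:ℕ) = 2 ∨ (j:ℕ) = k+3)) ∨
        ((j:ℕ) < (i:ℕ) ∧ ((i:ℕ) = 2 ∨ (i:ℕ) = k+3))) → A i j = 0 := by
    intro i j hne hnot
    by_contra hne0
    exact hnot (((hG i j).mp ((hA.2 i j hne).mp hne0)).2)
  have hNZ : ∀ i j : Fin (k+4), i ≠ j →
      (((i:ℕ) < (j:ℕ) ∧ ((j:ℕ) = 2 ∨ (j:ℕ) = k+3)) ∨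
       ((j:ℕ) < (i:ℕ) ∧ ((i:ℕ) = 2 ∨ (i:ℕ) = k+3))) → A i j ≠ 0 := by
    intro i j hne hcond
    exact (hA.2 i j hne).mpr ((hG i j).mpr ⟨hne, hcond⟩)
  have hne03 : i0 ≠ i3 := Fin.ne_of_val_ne (by rw [e0, e3]; omega)
  have hne0W : i0 ≠ iW := Fin.ne_of_val_ne (by rw [e0, eW]; omega)
  have hneW3 : iW ≠ i3 := Fin.ne_of_val_ne (by rw [e3, eW]; omega)
  have hA03 : A i0 i3 = 0 := hZ i0 i3 hne03 (by rw [e0, e3]; omega)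
  have hent := congrFun (congrFun hq i0) i3
  rw [Matrix.mul_apply, Matrix.zero_apply] at hent
  have hsum : ∑ t, (A - a • 1) i0 t * (A - b • 1) t i3
      = (A - a • 1) i0 iW * (A - b • 1) iW i3 := by
    apply Finset.sum_eq_single iW
    · intro t _ htW
      have htWv : (t:ℕ) ≠ k+3 := fun hh => htW (Fin.ext (by rw [hh, eW]))
      simp only [Matrix.sub_apply, Matrix.smul_apply, smul_eq_mul]
      by_cases ht0 : t = i0
      · rw [ht0, Matrix.one_apply_ne hne03, hA03]
        ring
      · by_cases ht3 : t = i3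
        · rw [ht3, Matrix.one_apply_ne hne03, hA03]
          ring
        · by_cases ht2 : (t:ℕ) = 2
          · have hAt3 : A t i3 = 0 := hZ t i3 ht3 (by rw [e3, ht2]; omega)
            rw [Matrix.one_apply_ne ht3, hAt3]
            ring
          · have hA0t : A i0 t = 0 := hZ i0 t (fun hh => ht0 hh.symm) (by rw [e0]; omega)
            rw [Matrix.one_apply_ne (fun hh => ht0 hh.symm), hA0t]
            ring
    · intro hni
      exact absurd (Finset.mem_univ iW) hni
  rw [hsum] at hent
  simp only [Matrix.sub_apply, Matrix.smul_apply, smul_eq_mul] at hent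
  rw [Matrix.one_apply_ne hne0W, Matrix.one_apply_ne hneW3] at hent
  have hf1 : A i0 iW ≠ 0 := hNZ i0 iW hne0W (by rw [e0, eW]; omega)
  have hf2 : A iW i3 ≠ 0 := hNZ iW i3 hneW3 (by rw [e3, eW]; omega)
  have : (A i0 iW - a * 0) * (A iW i3 - b * 0) ≠ 0 := by
    rw [mul_zero, sub_zero, mul_zero, sub_zero]
    exact mul_ne_zero hf1 hf2
  exact this hent

lemma main_aux (hk : 1 ≤ k) (n : ℕ) (hn : n = k+4) (G : SimpleGraph (Fin n))
    (hG : ∀ i j : Fin n, G.Adj i j ↔ (i ≠ j ∧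
      (((i:ℕ) < (j:ℕ) ∧ ((j:ℕ) = 2 ∨ (j:ℕ) = k+3)) ∨
       ((j:ℕ) < (i:ℕ) ∧ ((i:ℕ) = 2 ∨ (i:ℕ) = k+3))))) : qGraph G = 3 := by
  subst hn
  have hmem : B k ∈ SMat G := by
    refine ⟨Bsymm k, fun i j hij => ?_⟩
    rw [B_pattern k hk i j hij, hG i j]
    exact (and_iff_right hij).symm
  have himg : 3 ∈ numEig '' SMat G := ⟨B k, hmem, B_numEig k hk⟩
  apply le_antisymm
  · exact Nat.sInf_le himg
  · apply le_csInf ⟨3, himg⟩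
    rintro m ⟨A, hASm, rfl⟩
    exact lower_bound k hk G hG A hASm

end S8

/-- For `G ≅ (0, 0, 1, 0^{k}, 1)` with `k ≥ 1`, `q(G) = 3`. -/
theorem stmt8 (k : ℕ) (hk : 1 ≤ k) :
    qGraph (thresholdOfList ([false, false, true] ++ List.replicate k false ++ [true])) = 3 := by

  have hlen : ([false, false, true] ++ List.replicate k false ++ [true]).length = k + 4 := by
    simp [List.length_append, List.length_replicate]
  apply S8.main_aux k hk _ hlen
  intro i j
  have hget : ∀ m : Fin ([false, false, true] ++ List.replicate k false ++ [true]).length,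
      (([false, false, true] ++ List.replicate k false ++ [true]).get m = true)
        ↔ ((m:ℕ) = 2 ∨ (m:ℕ) = k+3) := by
    intro m
    have hm : (m:ℕ) < k + 4 := by rw [← hlen]; exact m.isLt
    rw [List.get_eq_getElem]
    rcases (by omega : (m:ℕ) = 0 ∨ (m:ℕ) = 1 ∨ (m:ℕ) = 2 ∨ (3 ≤ (m:ℕ) ∧ (m:ℕ) < k+3) ∨ (m:ℕ) = k+3)
      with h|h|h|h|h
    · simp [h]
    · simp [h]
    · simp [h]
    · obtain ⟨r, hr⟩ : ∃ r, (m:ℕ) = r + 3 := ⟨(m:ℕ) - 3, by omega⟩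
      have hrk : r < k := by omega
      simp only [hr, List.cons_append, List.getElem_cons_succ, List.nil_append]
      rw [List.getElem_append_left (by simp [List.length_replicate]; omega)]
      simp [List.getElem_replicate]
      omega
    · obtain ⟨r, hr⟩ : ∃ r, (m:ℕ) = r + 3 := ⟨(m:ℕ) - 3, by omega⟩
      have hrk : r = k := by omega
      simp only [hr, List.cons_append, List.getElem_cons_succ, List.nil_append]
      rw [List.getElem_append_right (by simp [List.length_replicate]; omega)]
      simp [List.length_replicate, hrk]
  change (i ≠ j ∧ ((i < j ∧ _ = true) ∨ (j < i ∧ _ = true))) ↔ _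
  constructor
  · rintro ⟨hne, ⟨hlt, hg⟩ | ⟨hlt, hg⟩⟩
    · exact ⟨hne, Or.inl ⟨Fin.lt_def.mp hlt, (hget j).mp hg⟩⟩
    · exact ⟨hne, Or.inr ⟨Fin.lt_def.mp hlt, (hget i).mp hg⟩⟩
  · rintro ⟨hne, ⟨hlt, hg⟩ | ⟨hlt, hg⟩⟩
    · exact ⟨hne, Or.inl ⟨Fin.lt_def.mpr hlt, (hget j).mpr hg⟩⟩
    · exact ⟨hne, Or.inr ⟨Fin.lt_def.mpr hlt, (hget i).mpr hg⟩⟩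
end

section
/- Let G be the threshold graph with creation sequence (0^{k_1}, 1^{t_1}, 0^{k_2}, 1^{t_2}), where k_1, k_2, t_1, t_2 ≥ 1. Then q(G) ≤ 4. -/
open Matrix BigOperators

/-! ### Auxiliary constructions -/

open Polynomial

/-- A fixed `4 × 4` symmetric matrix of the form `-2•1 + vvᵀ + wwᵀ` for orthogonal
`v = (-1,-2,1,4)`, `w = (1,2,1,1)`; it has at most three distinct eigenvalues and the
nonzero pattern required below. -/
noncomputable def Bmat : Matrix (Fin 4) (Fin 4) ℝ :=
  !![0,4,0,-3; 4,6,0,-6; 0,0,0,5; -3,-6,5,15]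

set_option maxHeartbeats 1000000 in
lemma Bmat_sq : Bmat * Bmat =
    !![25,42,-15,-69; 42,88,-30,-138; -15,-30,25,75; -69,-138,75,295] := by
  ext i j
  fin_cases i <;> fin_cases j <;>
    simp [Bmat, Matrix.mul_apply, Fin.sum_univ_four] <;> norm_num

set_option maxHeartbeats 1000000 in
lemma Bmat_cube : Bmat * Bmat * Bmat =
    !![375,766,-345,-1437; 766,1524,-690,-2874; -345,-690,375,1475; -1437,-2874,1475,5835] := by
  rw [Bmat_sq]
  ext i j
  fin_cases i <;> fin_cases j <;>
    simp [Bmat, Matrix.mul_apply, Fin.sum_univ_four] <;> norm_num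

set_option maxHeartbeats 1000000 in
lemma Bmat_cubic :
    Bmat * Bmat * Bmat - (23:ℝ) • (Bmat * Bmat) + (50:ℝ) • Bmat
      + (200:ℝ) • (1 : Matrix (Fin 4) (Fin 4) ℝ) = 0 := by
  rw [Bmat_cube, Bmat_sq]
  ext i j
  fin_cases i <;> fin_cases j <;>
    simp [Bmat, Matrix.one_apply] <;> norm_num

lemma numEig_low_rank {n : ℕ} (hn : 0 < n) (P : Matrix (Fin 4) (Fin n) ℝ)
    (d : Fin 4 → ℝ) (hd : ∀ a, 0 < d a)
    (hP : P * Pᵀ = Matrix.diagonal d) :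
    (spectrum ℝ (Pᵀ * (Matrix.diagonal (fun a => (Real.sqrt (d a))⁻¹) * Bmat *
      Matrix.diagonal (fun a => (Real.sqrt (d a))⁻¹)) * P)).ncard ≤ 4 := by
  set Dm := Matrix.diagonal (fun a => (Real.sqrt (d a))⁻¹) with hDm
  set Dp := Matrix.diagonal (fun a => Real.sqrt (d a)) with hDp
  set C := Dm * Bmat * Dm with hCdef
  set A := Pᵀ * C * P with hA
  set M := C * Matrix.diagonal d with hM
  have hsq : ∀ a, Real.sqrt (d a) ≠ 0 := fun a => (Real.sqrt_pos.mpr (hd a)).ne'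
  have hDmDp : Dm * Dp = 1 := by
    rw [hDm, hDp, Matrix.diagonal_mul_diagonal, ← Matrix.diagonal_one]
    apply congrArg Matrix.diagonal
    funext a
    exact inv_mul_cancel₀ (hsq a)
  have hDpDm : Dp * Dm = 1 := by
    rw [hDm, hDp, Matrix.diagonal_mul_diagonal, ← Matrix.diagonal_one]
    apply congrArg Matrix.diagonal
    funext a
    exact mul_inv_cancel₀ (hsq a)
  have hDmD : Dm * Matrix.diagonal d = Dp := by
    rw [hDm, hDp, Matrix.diagonal_mul_diagonal]
    apply congrArg Matrix.diagonal
    funext a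
    rw [← Real.sqrt_mul_self (hd a).le]
    field_simp
    rw [div_eq_iff (Real.sqrt_pos.mpr (Real.sqrt_pos.mpr (pow_pos (hd a) 2))).ne',
      Real.mul_self_sqrt (Real.sqrt_nonneg _)]
  have hMeq : M = Dm * Bmat * Dp := by
    rw [hM, hCdef, Matrix.mul_assoc, Matrix.mul_assoc, hDmD, ← Matrix.mul_assoc]
  have hM2 : M * M = Dm * (Bmat * Bmat) * Dp := by
    rw [hMeq]
    calc Dm * Bmat * Dp * (Dm * Bmat * Dp)
        = Dm * Bmat * (Dp * Dm) * Bmat * Dp := by simp only [Matrix.mul_assoc]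
      _ = Dm * (Bmat * Bmat) * Dp := by
          rw [hDpDm]; simp only [Matrix.mul_assoc, Matrix.mul_one, Matrix.one_mul]
  have hM3 : M * M * M = Dm * (Bmat * Bmat * Bmat) * Dp := by
    rw [hM2, hMeq]
    calc Dm * (Bmat * Bmat) * Dp * (Dm * Bmat * Dp)
        = Dm * (Bmat * Bmat) * (Dp * Dm) * Bmat * Dp := by simp only [Matrix.mul_assoc]
      _ = Dm * (Bmat * Bmat * Bmat) * Dp := by
          rw [hDpDm]; simp only [Matrix.mul_assoc, Matrix.mul_one, Matrix.one_mul]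
  have hqM : M * M * M - (23:ℝ) • (M * M) + (50:ℝ) • M
      + (200:ℝ) • (1 : Matrix (Fin 4) (Fin 4) ℝ) = 0 := by
    have expand : Dm * (Bmat * Bmat * Bmat - (23:ℝ) • (Bmat * Bmat) + (50:ℝ) • Bmat
          + (200:ℝ) • (1 : Matrix (Fin 4) (Fin 4) ℝ)) * Dp
        = Dm * (Bmat * Bmat * Bmat) * Dp - (23:ℝ) • (Dm * (Bmat * Bmat) * Dp)
          + (50:ℝ) • (Dm * Bmat * Dp) + (200:ℝ) • (Dm * 1 * Dp) := by
      simp only [Matrix.mul_add, Matrix.add_mul, Matrix.mul_sub, Matrix.sub_mul,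
        Matrix.mul_smul, Matrix.smul_mul]
    have h200 : (200:ℝ) • (1 : Matrix (Fin 4) (Fin 4) ℝ) = (200:ℝ) • (Dm * 1 * Dp) := by
      rw [Matrix.mul_one, hDmDp]
    rw [hM3, hM2, hMeq, h200, ← expand, Bmat_cubic]
    simp
  have hpow : ∀ m : ℕ, A ^ (m + 1) = Pᵀ * (M ^ m * C) * P := by
    intro m; induction m with
    | zero => simp [hA]
    | succ m ih =>
      rw [pow_succ, ih, hA]
      calc Pᵀ * (M ^ m * C) * P * (Pᵀ * C * P)
          = Pᵀ * ((M ^ m * C) * (P * Pᵀ) * C) * P := by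
            simp only [Matrix.mul_assoc]
        _ = Pᵀ * (M ^ (m + 1) * C) * P := by
            rw [hP, pow_succ, hM]
            simp only [Matrix.mul_assoc]
  set p : ℝ[X] := X ^ 4 - (23:ℝ) • X ^ 3 + (50:ℝ) • X ^ 2 + (200:ℝ) • X with hp
  have hpC : p = X ^ 4 - Polynomial.C (23:ℝ) * X ^ 3 + Polynomial.C (50:ℝ) * X ^ 2
      + Polynomial.C (200:ℝ) * X := by
    rw [hp]
    simp [Polynomial.smul_eq_C_mul]
  have hdeg : p.natDegree = 4 := by
    rw [hpC]
    compute_degree!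
  have hpne : p ≠ 0 := by
    intro h
    rw [h, natDegree_zero] at hdeg
    exact absurd hdeg (by norm_num)
  have key : aeval A p = 0 := by
    have h4 : A ^ 4 = Pᵀ * (M ^ 3 * C) * P := hpow 3
    have h3 : A ^ 3 = Pᵀ * (M ^ 2 * C) * P := hpow 2
    have h2 : A ^ 2 = Pᵀ * (M ^ 1 * C) * P := hpow 1
    have h1 : A ^ 1 = Pᵀ * (M ^ 0 * C) * P := hpow 0
    have hev : aeval A p = A ^ 4 - (23:ℝ) • A ^ 3 + (50:ℝ) • A ^ 2 + (200:ℝ) • A ^ 1 := by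
      rw [hp]
      simp only [map_add, map_sub, _root_.map_smul, map_pow, aeval_X, pow_one]
    rw [hev, h4, h3, h2, h1]
    have hcomb : Pᵀ * (M ^ 3 * C) * P - (23:ℝ) • (Pᵀ * (M ^ 2 * C) * P)
        + (50:ℝ) • (Pᵀ * (M ^ 1 * C) * P) + (200:ℝ) • (Pᵀ * (M ^ 0 * C) * P)
        = Pᵀ * ((M * M * M - (23:ℝ) • (M * M) + (50:ℝ) • M
            + (200:ℝ) • (1 : Matrix (Fin 4) (Fin 4) ℝ)) * C) * P := by
      simp only [pow_succ, pow_zero, Matrix.one_mul, Matrix.mul_one]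
      simp only [Matrix.mul_add, Matrix.add_mul, Matrix.mul_sub, Matrix.sub_mul,
        Matrix.mul_smul, Matrix.smul_mul, Matrix.one_mul, Matrix.mul_assoc]
    rw [hcomb, hqM]
    simp
  haveI : Nonempty (Fin n) := ⟨⟨0, hn⟩⟩
  have hspec : spectrum ℝ A ⊆ ↑p.roots.toFinset := by
    intro μ hμ
    have h1 : Polynomial.eval μ p ∈ spectrum ℝ (aeval A p) :=
      spectrum.subset_polynomial_aeval A p ⟨μ, hμ, rfl⟩
    rw [key, spectrum.zero_eq] at h1
    simp only [Set.mem_singleton_iff] at h1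
    rw [Finset.mem_coe, Multiset.mem_toFinset, mem_roots hpne]
    exact h1
  calc (spectrum ℝ A).ncard ≤ (↑p.roots.toFinset : Set ℝ).ncard :=
        Set.ncard_le_ncard hspec (p.roots.toFinset.finite_toSet)
    _ = p.roots.toFinset.card := Set.ncard_coe_finset _
    _ ≤ Multiset.card p.roots := Multiset.toFinset_card_le _
    _ ≤ p.natDegree := Polynomial.card_roots' _
    _ = 4 := hdeg

/-- The class of an index in the creation sequence `(0^{k₁}, 1^{t₁}, 0^{k₂}, 1^{t₂})`. -/
def cls (k₁ t₁ k₂ x : ℕ) : Fin 4 :=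
  if x < k₁ then 0 else if x < k₁ + t₁ then 1 else if x < k₁ + t₁ + k₂ then 2 else 3

/-- The creation-sequence bit of each class. -/
def cbit : Fin 4 → Bool := ![false, true, false, true]

lemma Bmat_symm : ∀ a b : Fin 4, Bmat a b = Bmat b a := by
  intro a b; fin_cases a <;> fin_cases b <;> norm_num [Bmat]

lemma Bmat_pattern : ∀ a b : Fin 4, a ≤ b → (Bmat a b ≠ 0 ↔ cbit b = true) := by
  intro a b hab
  fin_cases a <;> fin_cases b <;> simp_all [Bmat, cbit]

lemma cls_mono {k₁ t₁ k₂ : ℕ} {x y : ℕ} (h : x ≤ y) : cls k₁ t₁ k₂ x ≤ cls k₁ t₁ k₂ y := by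
  unfold cls
  split_ifs <;> first | decide | omega

lemma get_concat (k₁ t₁ k₂ t₂ : ℕ) (v : ℕ)
    (hv : v < (List.replicate k₁ false ++ List.replicate t₁ true ++
      List.replicate k₂ false ++ List.replicate t₂ true).length) :
    (List.replicate k₁ false ++ List.replicate t₁ true ++
      List.replicate k₂ false ++ List.replicate t₂ true)[v] = cbit (cls k₁ t₁ k₂ v) := by
  have hv' : v < k₁ + t₁ + k₂ + t₂ := by simp at hv; omega
  by_cases h1 : v < k₁
  · rw [List.getElem_append_left (by simp; omega), List.getElem_append_left (by simp; omega),
      List.getElem_append_left (by simpa using h1), List.getElem_replicate]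
    simp [cls, cbit, h1]
  · by_cases h2 : v < k₁ + t₁
    · rw [List.getElem_append_left (by simp; omega), List.getElem_append_left (by simp; omega),
        List.getElem_append_right (by simp; omega), List.getElem_replicate]
      simp [cls, cbit, h1, h2]
    · by_cases h3 : v < k₁ + t₁ + k₂
      · rw [List.getElem_append_left (by simp; omega),
          List.getElem_append_right (by simp; omega), List.getElem_replicate]
        simp only [cls, cbit, if_neg h1, if_neg h2, if_pos h3]
        rfl
      · rw [List.getElem_append_right (by simp; omega), List.getElem_replicate]
        simp only [cls, cbit, if_neg h1, if_neg h2, if_neg h3]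
        rfl

/-- For `G ≅ (0^{k_1}, 1^{t_1}, 0^{k_2}, 1^{t_2})` with
`k_1, k_2, t_1, t_2 ≥ 1`, `q(G) ≤ 4`. -/
theorem stmt9 (k₁ t₁ k₂ t₂ : ℕ) (hk₁ : 1 ≤ k₁) (ht₁ : 1 ≤ t₁) (hk₂ : 1 ≤ k₂) (ht₂ : 1 ≤ t₂) :
    qGraph (thresholdOfList (List.replicate k₁ false ++ List.replicate t₁ true ++
      List.replicate k₂ false ++ List.replicate t₂ true)) ≤ 4 := by
  have hlen : (List.replicate k₁ false ++ List.replicate t₁ true ++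
      List.replicate k₂ false ++ List.replicate t₂ true).length = k₁ + t₁ + k₂ + t₂ := by
    simp only [List.length_append, List.length_replicate]
  set N := (List.replicate k₁ false ++ List.replicate t₁ true ++
      List.replicate k₂ false ++ List.replicate t₂ true).length with hN
  have hn : 0 < N := by omega
  -- the class map and indicator matrix
  set π : Fin N → Fin 4 := fun i => cls k₁ t₁ k₂ (i : ℕ) with hπ
  set P : Matrix (Fin 4) (Fin N) ℝ := Matrix.of (fun a i => if π i = a then 1 else 0) with hPdef
  set d : Fin 4 → ℝ := fun a => ∑ i : Fin N, if π i = a then 1 else 0 with hddef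
  -- positivity of class sizes
  have hd : ∀ a, 0 < d a := by
    have hwit : ∀ a : Fin 4, ∃ i : Fin N, π i = a := by
      intro a
      fin_cases a
      · exact ⟨⟨0, by omega⟩, by simp [hπ, cls]; omega⟩
      · exact ⟨⟨k₁, by omega⟩, by simp [hπ, cls]; omega⟩
      · exact ⟨⟨k₁ + t₁, by omega⟩, by simp [hπ, cls]; omega⟩
      · exact ⟨⟨k₁ + t₁ + k₂, by omega⟩, by simp [hπ, cls]; omega⟩
    intro a
    obtain ⟨i, hi⟩ := hwit a
    have h1 : (1:ℝ) ≤ d a := by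
      have := Finset.single_le_sum (f := fun j : Fin N => if π j = a then (1:ℝ) else 0)
        (fun j _ => by by_cases h : π j = a <;> simp [h]) (Finset.mem_univ i)
      simpa [hi, hddef] using this
    linarith
  -- P Pᵀ is diagonal
  have hPP : P * Pᵀ = Matrix.diagonal d := by
    ext a b
    by_cases hab : a = b
    · subst hab
      rw [Matrix.mul_apply, Matrix.diagonal_apply_eq, hddef]
      refine Finset.sum_congr rfl fun i _ => ?_
      by_cases h : π i = a <;> simp [hPdef, h]
    · rw [Matrix.mul_apply, Matrix.diagonal_apply_ne _ hab]
      refine Finset.sum_eq_zero fun i _ => ?_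
      by_cases h : π i = a
      · have h2 : π i ≠ b := fun hb => hab (h ▸ hb ▸ rfl)
        simp [hPdef, h, h2, hab]
      · simp [hPdef, h]
  set Dm := Matrix.diagonal (fun a => (Real.sqrt (d a))⁻¹) with hDm
  set A := Pᵀ * (Dm * Bmat * Dm) * P with hA
  -- entrywise formula for A
  have hAentry : ∀ i j : Fin N,
      A i j = (Real.sqrt (d (π i)))⁻¹ * Bmat (π i) (π j) * (Real.sqrt (d (π j)))⁻¹ := by
    intro i j
    have hQ : ∀ x y : Fin 4,
        (Dm * Bmat * Dm) x y = (Real.sqrt (d x))⁻¹ * Bmat x y * (Real.sqrt (d y))⁻¹ := by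
      intro x y
      rw [hDm, Matrix.mul_diagonal, Matrix.diagonal_mul]
    have : A i j = ∑ y : Fin 4, (∑ x : Fin 4,
        (if π i = x then (1:ℝ) else 0) * (Dm * Bmat * Dm) x y) *
        (if π j = y then (1:ℝ) else 0) := by
      simp [hA, Matrix.mul_apply, Matrix.transpose_apply, hPdef, Finset.sum_mul]
    rw [this]
    simp only [ite_mul, one_mul, zero_mul, Finset.sum_ite_eq, Finset.mem_univ, if_true,
      mul_ite, mul_one, mul_zero]
    exact hQ (π i) (π j)
  have hsq : ∀ a, (Real.sqrt (d a))⁻¹ ≠ 0 := fun a =>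
    inv_ne_zero (Real.sqrt_pos.mpr (hd a)).ne'
  -- A is symmetric
  have hsymm : A.IsSymm := by
    unfold Matrix.IsSymm
    ext i j
    rw [Matrix.transpose_apply, hAentry, hAentry, Bmat_symm]
    ring
  -- the nonzero pattern of A is the threshold graph
  have hget : ∀ i : Fin N, (List.replicate k₁ false ++ List.replicate t₁ true ++
      List.replicate k₂ false ++ List.replicate t₂ true).get i = cbit (π i) := by
    intro i
    rw [List.get_eq_getElem]
    exact get_concat k₁ t₁ k₂ t₂ (i : ℕ) i.isLt
  have hABne : ∀ i j : Fin N, (A i j ≠ 0 ↔ Bmat (π i) (π j) ≠ 0) := by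
    intro i j
    rw [hAentry]
    constructor
    · intro h hB
      apply h
      rw [hB]
      ring
    · intro hB h
      apply hB
      have := mul_eq_zero.mp h
      rcases this with h' | h'
      · rcases mul_eq_zero.mp h' with h'' | h''
        · exact absurd h'' (hsq _)
        · exact h''
      · exact absurd h' (hsq _)
  have hpattern : ∀ i j : Fin N, i ≠ j → (A i j ≠ 0 ↔
      (thresholdOfList (List.replicate k₁ false ++ List.replicate t₁ true ++
        List.replicate k₂ false ++ List.replicate t₂ true)).Adj i j) := by
    intro i j hij
    rw [hABne]
    show _ ↔ (i ≠ j ∧ _)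
    rcases lt_or_gt_of_ne hij with hlt | hlt
    · have hmono : π i ≤ π j := cls_mono (le_of_lt hlt)
      rw [Bmat_pattern _ _ hmono]
      constructor
      · intro h
        refine ⟨hij, Or.inl ⟨hlt, ?_⟩⟩
        rw [hget j]
        exact h
      · rintro ⟨-, h | h⟩
        · rw [← hget j]
          exact h.2
        · exact absurd (lt_trans h.1 hlt) (lt_irrefl _)
    · have hmono : π j ≤ π i := cls_mono (le_of_lt hlt)
      rw [Bmat_symm, Bmat_pattern _ _ hmono]
      constructor
      · intro h
        refine ⟨hij, Or.inr ⟨hlt, ?_⟩⟩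
        rw [hget i]
        exact h
      · rintro ⟨-, h | h⟩
        · exact absurd (lt_trans h.1 hlt) (lt_irrefl _)
        · rw [← hget i]
          exact h.2
  -- conclude
  have hbound : numEig A ≤ 4 := by
    rw [hA]
    exact numEig_low_rank hn P d hd hPP
  exact le_trans (Nat.sInf_le ⟨A, ⟨hsymm, hpattern⟩, rfl⟩) hbound
end
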